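/- arXiv:2401.02515 — 9 statements merged into one kernel-verified Lean document; each statement's English description precedes it below -/
import Mathlib

section
/- Let (λ(n))_{n∈ℕ} be a Vershik–Kerov sequence with associated limits α_i = lim_{n→∞} λ(n)_i/n, β = lim_{n→∞} p_1(λ(n))/n and δ = lim_{n→∞} p_2(λ(n))/n². Then the series Σ_{i=1}^∞ α_i² converges and γ := δ − Σ_{i=1}^∞ α_i² ≥ 0; in particular the sequence α = (α_i)_{i∈ℕ} is square-summable. -/
open Filter Topology

/-- The order `x ≪ y` : `|x| < |y|`, or `|x| = |y|` and `x ≤ y`. -/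
def VKle (x y : ℝ) : Prop := |x| < |y| ∨ (|x| = |y| ∧ x ≤ y)

/-- If `(λ(n))` is a Vershik–Kerov sequence with limits `α_i`, `β`, `δ`,
then `∑ α_i²` converges and `γ := δ - ∑ α_i² ≥ 0`. -/
theorem vk_gamma_nonneg (Λ : ℕ → ℕ → ℝ) (α : ℕ → ℝ) (β δ : ℝ)
    (hpad : ∀ n i, n ≤ i → Λ n i = 0)
    (hdec : ∀ n i, i + 1 < n → VKle (Λ n (i + 1)) (Λ n i))
    (hα : ∀ i, Tendsto (fun n : ℕ => Λ n i / (n : ℝ)) atTop (𝓝 (α i)))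
    (hβ : Tendsto (fun n : ℕ => (∑ i ∈ Finset.range n, Λ n i) / (n : ℝ)) atTop (𝓝 β))
    (hδ : Tendsto (fun n : ℕ => (∑ i ∈ Finset.range n, (Λ n i) ^ 2) / (n : ℝ) ^ 2)
      atTop (𝓝 δ)) :
    Summable (fun i => (α i) ^ 2) ∧ 0 ≤ δ - ∑' i, (α i) ^ 2 := by
  have key : ∀ k : ℕ, ∑ i ∈ Finset.range k, (α i) ^ 2 ≤ δ := by
    intro k
    have h1 : Tendsto (fun n : ℕ => ∑ i ∈ Finset.range k, (Λ n i / (n : ℝ)) ^ 2)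
        atTop (𝓝 (∑ i ∈ Finset.range k, (α i) ^ 2)) :=
      tendsto_finset_sum _ (fun i _ => (hα i).pow 2)
    refine le_of_tendsto_of_tendsto' h1 hδ ?_
    intro n
    rcases Nat.eq_zero_or_pos n with rfl | hn
    · simp
    have hle : ∑ i ∈ Finset.range (min k n), (Λ n i) ^ 2
        ≤ ∑ i ∈ Finset.range n, (Λ n i) ^ 2 :=
      Finset.sum_le_sum_of_subset_of_nonneg
        (Finset.range_subset_range.2 (min_le_right _ _)) (fun i _ _ => sq_nonneg _)
    have heq : ∑ i ∈ Finset.range k, (Λ n i) ^ 2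
        = ∑ i ∈ Finset.range (min k n), (Λ n i) ^ 2 := by
      rcases le_total k n with h | h
      · rw [min_eq_left h]
      · rw [min_eq_right h]
        rw [← Finset.sum_range_add_sum_Ico _ h]
        have : ∑ i ∈ Finset.Ico n k, (Λ n i) ^ 2 = 0 := by
          apply Finset.sum_eq_zero
          intro i hi
          rw [hpad n i (Finset.mem_Ico.1 hi).1]; ring
        rw [this, add_zero]
    have hn2 : (0 : ℝ) < (n : ℝ) ^ 2 := by positivity
    calc ∑ i ∈ Finset.range k, (Λ n i / (n : ℝ)) ^ 2
        = (∑ i ∈ Finset.range k, (Λ n i) ^ 2) / (n : ℝ) ^ 2 := by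
          rw [Finset.sum_div]; exact Finset.sum_congr rfl fun i _ => div_pow _ _ _
      _ ≤ (∑ i ∈ Finset.range n, (Λ n i) ^ 2) / (n : ℝ) ^ 2 := by
          rw [heq]; exact div_le_div_of_nonneg_right hle hn2.le
      _ = _ := rfl
  have hsum : Summable (fun i => (α i) ^ 2) :=
    summable_of_sum_range_le (fun i => sq_nonneg _) key
  refine ⟨hsum, sub_nonneg.2 ?_⟩
  exact Summable.tsum_le_of_sum_range_le hsum key
end

section
/- Let (λ(n))_{n∈ℕ} be a Vershik–Kerov sequence with associated limits α_i = lim_{n→∞} λ(n)_i/n and δ = lim_{n→∞} p_2(λ(n))/n². If in addition λ(n)_i ≥ 0 for all 1 ≤ i ≤ n and all n ∈ ℕ, then δ = Σ_{i=1}^∞ α_i², i.e. the VK parameter γ equals 0. -/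
open Filter Topology

/-- If `(λ(n))` is a Vershik–Kerov sequence with nonnegative entries,
then `δ = ∑ α_i²`, i.e. the VK parameter `γ` is `0`. -/
theorem vk_gamma_zero_of_nonneg (Λ : ℕ → ℕ → ℝ) (α : ℕ → ℝ) (β δ : ℝ)
    (hpad : ∀ n i, n ≤ i → Λ n i = 0)
    (hdec : ∀ n i, i + 1 < n → VKle (Λ n (i + 1)) (Λ n i))
    (hα : ∀ i, Tendsto (fun n : ℕ => Λ n i / (n : ℝ)) atTop (𝓝 (α i)))
    (hβ : Tendsto (fun n : ℕ => (∑ i ∈ Finset.range n, Λ n i) / (n : ℝ)) atTop (𝓝 β))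
    (hδ : Tendsto (fun n : ℕ => (∑ i ∈ Finset.range n, (Λ n i) ^ 2) / (n : ℝ) ^ 2)
      atTop (𝓝 δ))
    (hpos : ∀ n i, 0 ≤ Λ n i) :
    Summable (fun i => (α i) ^ 2) ∧ δ = ∑' i, (α i) ^ 2 := by
  classical
  have hstep : ∀ n i, Λ n (i + 1) ≤ Λ n i := by
    intro n i
    by_cases h : i + 1 < n
    · rcases hdec n i h with h' | ⟨_, h'⟩
      · rw [abs_of_nonneg (hpos n (i + 1)), abs_of_nonneg (hpos n i)] at h'
        exact h'.le
      · exact h'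
    · rw [hpad n (i + 1) (by omega)]; exact hpos n i
  have hmono : ∀ n, Antitone (Λ n) := fun n => antitone_nat_of_succ_le (hstep n)
  set S : ℕ → ℝ := fun n => ∑ i ∈ Finset.range n, Λ n i with hS
  have hSnn : ∀ n, 0 ≤ S n := fun n => Finset.sum_nonneg fun i _ => hpos n i
  have h1 : ∀ k, Tendsto (fun n : ℕ => ∑ i ∈ Finset.range k, (Λ n i / (n : ℝ)) ^ 2) atTop
      (𝓝 (∑ i ∈ Finset.range k, (α i) ^ 2)) := fun k =>
    tendsto_finset_sum _ fun i _ => (hα i).pow 2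
  -- lower bound : partial sums ≤ δ
  have hlow : ∀ k, ∑ i ∈ Finset.range k, (α i) ^ 2 ≤ δ := by
    intro k
    refine le_of_tendsto_of_tendsto (h1 k) hδ ?_
    filter_upwards [eventually_ge_atTop k] with n hkn
    have : ∑ i ∈ Finset.range k, (Λ n i / (n : ℝ)) ^ 2
        = (∑ i ∈ Finset.range k, (Λ n i) ^ 2) / (n : ℝ) ^ 2 := by
      simp only [div_pow]; rw [← Finset.sum_div]
    rw [this]
    gcongr
  have hsummable : Summable (fun i => (α i) ^ 2) :=
    summable_of_sum_range_le (fun i => by positivity) hlow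
  refine ⟨hsummable, le_antisymm ?_ (Summable.tsum_le_of_sum_range_le hsummable hlow)⟩
  -- upper bound : δ ≤ ∑' α_i²
  have hup : ∀ k : ℕ, δ ≤ (∑ i ∈ Finset.range k, (α i) ^ 2) + β ^ 2 / (k + 1) := by
    intro k
    have hk1 : (0 : ℝ) < (k : ℝ) + 1 := by positivity
    have hrhs : Tendsto (fun n : ℕ =>
        (∑ i ∈ Finset.range k, (Λ n i / (n : ℝ)) ^ 2) + (S n / (n : ℝ)) ^ 2 / ((k : ℝ) + 1))
        atTop (𝓝 ((∑ i ∈ Finset.range k, (α i) ^ 2) + β ^ 2 / ((k : ℝ) + 1))) :=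
      (h1 k).add ((hβ.pow 2).div_const _)
    refine le_of_tendsto_of_tendsto hδ hrhs ?_
    filter_upwards [eventually_ge_atTop (k + 1)] with n hkn
    have hn0 : (0 : ℝ) < (n : ℝ) := by exact_mod_cast Nat.lt_of_lt_of_le k.succ_pos hkn
    -- key inequality on unnormalized sums
    have h3 : ((k : ℝ) + 1) * Λ n k ≤ S n := by
      have e1 : ((k : ℝ) + 1) * Λ n k = ∑ _i ∈ Finset.range (k + 1), Λ n k := by
        simp [mul_comm]
      rw [e1]
      calc ∑ _i ∈ Finset.range (k + 1), Λ n k ≤ ∑ i ∈ Finset.range (k + 1), Λ n i :=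
            Finset.sum_le_sum fun i hi => hmono n (by
              exact Nat.le_of_lt_succ (Finset.mem_range.mp hi))
        _ ≤ S n := Finset.sum_le_sum_of_subset_of_nonneg (Finset.range_subset_range.2 hkn)
              (fun i _ _ => hpos n i)
    have htail : ∑ i ∈ Finset.Ico k n, (Λ n i) ^ 2 ≤ (S n) ^ 2 / ((k : ℝ) + 1) := by
      have h2 : ∑ i ∈ Finset.Ico k n, (Λ n i) ^ 2 ≤ Λ n k * S n := by
        calc ∑ i ∈ Finset.Ico k n, (Λ n i) ^ 2
            ≤ ∑ i ∈ Finset.Ico k n, Λ n k * Λ n i := by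
              refine Finset.sum_le_sum fun i hi => ?_
              have hki : Λ n i ≤ Λ n k := hmono n (Finset.mem_Ico.mp hi).1
              have := hpos n i
              nlinarith
          _ = Λ n k * ∑ i ∈ Finset.Ico k n, Λ n i := (Finset.mul_sum _ _ _).symm
          _ ≤ Λ n k * S n := by
              refine mul_le_mul_of_nonneg_left ?_ (hpos n k)
              refine Finset.sum_le_sum_of_subset_of_nonneg ?_ (fun i _ _ => hpos n i)
              rw [Finset.range_eq_Ico]
              exact Finset.Ico_subset_Ico (Nat.zero_le _) le_rfl
      refine h2.trans ?_
      rw [le_div_iff₀ hk1]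
      nlinarith [hSnn n, h3, hpos n k]
    have hsplit : ∑ i ∈ Finset.range n, (Λ n i) ^ 2
        = ∑ i ∈ Finset.range k, (Λ n i) ^ 2 + ∑ i ∈ Finset.Ico k n, (Λ n i) ^ 2 := by
      rw [Finset.range_eq_Ico, Finset.range_eq_Ico]
      exact (Finset.sum_Ico_consecutive _ (Nat.zero_le k) (Nat.le_of_succ_le hkn)).symm
    have hkey : ∑ i ∈ Finset.range n, (Λ n i) ^ 2
        ≤ ∑ i ∈ Finset.range k, (Λ n i) ^ 2 + (S n) ^ 2 / ((k : ℝ) + 1) := by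
      rw [hsplit]; linarith
    have hrw : (∑ i ∈ Finset.range k, (Λ n i / (n : ℝ)) ^ 2) + (S n / (n : ℝ)) ^ 2 / ((k : ℝ) + 1)
        = (∑ i ∈ Finset.range k, (Λ n i) ^ 2 + (S n) ^ 2 / ((k : ℝ) + 1)) / (n : ℝ) ^ 2 := by
      simp only [div_pow]
      rw [← Finset.sum_div]
      field_simp
    rw [hrw]
    gcongr
  have hlim : Tendsto (fun k : ℕ => (∑ i ∈ Finset.range k, (α i) ^ 2) + β ^ 2 / ((k : ℝ) + 1))
      atTop (𝓝 ((∑' i, (α i) ^ 2) + 0)) := by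
    refine Tendsto.add hsummable.hasSum.tendsto_sum_nat ?_
    refine Tendsto.div_atTop tendsto_const_nhds ?_
    exact tendsto_atTop_add_const_right _ _ tendsto_natCast_atTop_atTop
  rw [add_zero] at hlim
  exact le_of_tendsto_of_tendsto tendsto_const_nhds hlim
    (Eventually.of_forall fun k => hup k)
end

section
/- Let (λ(n))_{n∈ℕ} be a Vershik–Kerov sequence with associated limits α_i = lim_{n→∞} λ(n)_i/n. Then for every integer m ≥ 3, the series Σ_{i=1}^∞ α_i^m converges absolutely and lim_{n→∞} p_m(λ(n))/n^m = Σ_{i=1}^∞ α_i^m. -/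
open Filter Topology

/-- If `(λ(n))` is a Vershik–Kerov sequence with limits `α_i`, then for every
`m ≥ 3` the series `∑ α_i^m` converges absolutely and `p_m(λ(n))/n^m → ∑ α_i^m`. -/
theorem vk_power_sum_limit (Λ : ℕ → ℕ → ℝ) (α : ℕ → ℝ) (β δ : ℝ)
    (hpad : ∀ n i, n ≤ i → Λ n i = 0)
    (hdec : ∀ n i, i + 1 < n → VKle (Λ n (i + 1)) (Λ n i))
    (hα : ∀ i, Tendsto (fun n : ℕ => Λ n i / (n : ℝ)) atTop (𝓝 (α i)))
    (hβ : Tendsto (fun n : ℕ => (∑ i ∈ Finset.range n, Λ n i) / (n : ℝ)) atTop (𝓝 β))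
    (hδ : Tendsto (fun n : ℕ => (∑ i ∈ Finset.range n, (Λ n i) ^ 2) / (n : ℝ) ^ 2)
      atTop (𝓝 δ)) :
    ∀ m : ℕ, 3 ≤ m →
      Summable (fun i => |α i| ^ m) ∧
      Tendsto (fun n : ℕ => (∑ i ∈ Finset.range n, (Λ n i) ^ m) / (n : ℝ) ^ m)
        atTop (𝓝 (∑' i, (α i) ^ m)) := by
  classical
  -- |Λ n ·| is antitone
  have habs : ∀ n, Antitone fun i => |Λ n i| := by
    intro n
    apply antitone_nat_of_succ_le
    intro i
    by_cases h : i + 1 < n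
    · rcases hdec n i h with h' | ⟨h', _⟩
      · exact h'.le
      · exact h'.le
    · rw [hpad n (i + 1) (by omega), abs_zero]
      exact abs_nonneg _
  -- a uniform bound on the second power sums
  obtain ⟨C0, hC0⟩ := hδ.bddAbove_range
  set C : ℝ := max C0 0 with hCdef
  have hCnn : 0 ≤ C := le_max_right _ _
  have hCn : ∀ n : ℕ, ∑ i ∈ Finset.range n, (Λ n i) ^ 2 ≤ C * (n : ℝ) ^ 2 := by
    intro n
    rcases Nat.eq_zero_or_pos n with rfl | hn
    · simp
    · have h1 : (∑ i ∈ Finset.range n, (Λ n i) ^ 2) / (n : ℝ) ^ 2 ≤ C0 :=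
        hC0 ⟨n, rfl⟩
      have hn2 : (0 : ℝ) < (n : ℝ) ^ 2 := by positivity
      calc ∑ i ∈ Finset.range n, (Λ n i) ^ 2 ≤ C0 * (n : ℝ) ^ 2 := by
            rwa [div_le_iff₀ hn2] at h1
        _ ≤ C * (n : ℝ) ^ 2 := by
            apply mul_le_mul_of_nonneg_right (le_max_left _ _) hn2.le
  -- the pointwise bound  |Λ n i / n| ≤ √C / √(i+1)
  set b : ℕ → ℝ := fun i => Real.sqrt C / Real.sqrt ((i : ℝ) + 1) with hbdef
  have hbnn : ∀ i, 0 ≤ b i := by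
    intro i; apply div_nonneg <;> positivity
  have hbd : ∀ n i, |Λ n i / (n : ℝ)| ≤ b i := by
    intro n i
    rcases Nat.eq_zero_or_pos n with rfl | hn
    · rw [hpad 0 i (Nat.zero_le _)]
      simpa using hbnn i
    by_cases hni : n ≤ i
    · rw [hpad n i hni]
      simpa using hbnn i
    push_neg at hni
    have key : (Λ n i) ^ 2 * ((i : ℝ) + 1) ≤ C * (n : ℝ) ^ 2 := by
      calc (Λ n i) ^ 2 * ((i : ℝ) + 1)
          = ∑ _j ∈ Finset.range (i + 1), (Λ n i) ^ 2 := by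
            simp [mul_comm]
        _ ≤ ∑ j ∈ Finset.range (i + 1), (Λ n j) ^ 2 := by
            apply Finset.sum_le_sum
            intro j hj
            have hji : j ≤ i := Nat.lt_succ_iff.mp (Finset.mem_range.mp hj)
            have := habs n hji
            calc (Λ n i) ^ 2 = |Λ n i| ^ 2 := (sq_abs _).symm
              _ ≤ |Λ n j| ^ 2 := pow_le_pow_left₀ (abs_nonneg _) this 2
              _ = (Λ n j) ^ 2 := sq_abs _
        _ ≤ ∑ j ∈ Finset.range n, (Λ n j) ^ 2 := by
            apply Finset.sum_le_sum_of_subset_of_nonneg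
            · exact Finset.range_subset_range.mpr (by omega)
            · intro _ _ _; positivity
        _ ≤ C * (n : ℝ) ^ 2 := hCn n
    have hn2 : (0 : ℝ) < (n : ℝ) ^ 2 := by positivity
    have hi1 : (0 : ℝ) < (i : ℝ) + 1 := by positivity
    have hsq : (Λ n i / (n : ℝ)) ^ 2 ≤ C / ((i : ℝ) + 1) := by
      rw [div_pow, div_le_div_iff₀ hn2 hi1]
      linarith [key]
    calc |Λ n i / (n : ℝ)| = Real.sqrt ((Λ n i / (n : ℝ)) ^ 2) :=
          (Real.sqrt_sq_eq_abs _).symm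
      _ ≤ Real.sqrt (C / ((i : ℝ) + 1)) := Real.sqrt_le_sqrt hsq
      _ = b i := by rw [hbdef, Real.sqrt_div hCnn]
  -- |α i| ≤ b i
  have hαb : ∀ i, |α i| ≤ b i := by
    intro i
    exact le_of_tendsto (hα i).abs (Filter.Eventually.of_forall fun n => hbd n i)
  -- summability of the comparison series ∑ (i+1)^{-3/2}
  have hs32 : Summable (fun i : ℕ => 1 / ((i : ℝ) + 1) ^ (3 / 2 : ℝ)) := by
    have h1 : Summable (fun n : ℕ => 1 / (n : ℝ) ^ (3 / 2 : ℝ)) :=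
      Real.summable_one_div_nat_rpow.mpr (by norm_num)
    have h2 := (summable_nat_add_iff 1).mpr h1
    simpa [Nat.cast_add, Nat.cast_one] using h2
  intro m hm
  have hm0 : m ≠ 0 := by omega
  -- summability of b^m
  have hbm : Summable (fun i => b i ^ m) := by
    have hle : ∀ i : ℕ,
        b i ^ m ≤ (Real.sqrt C) ^ m * (1 / ((i : ℝ) + 1) ^ (3 / 2 : ℝ)) := by
      intro i
      have hsi : (1 : ℝ) ≤ Real.sqrt ((i : ℝ) + 1) := by
        have h01 : (1 : ℝ) ≤ (i : ℝ) + 1 := by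
          have := Nat.cast_nonneg (α := ℝ) i; linarith
        calc (1 : ℝ) = Real.sqrt 1 := Real.sqrt_one.symm
          _ ≤ Real.sqrt ((i : ℝ) + 1) := Real.sqrt_le_sqrt h01
      have hsi0 : (0 : ℝ) < Real.sqrt ((i : ℝ) + 1) := by positivity
      have h1 : (1 : ℝ) / Real.sqrt ((i : ℝ) + 1) ≤ 1 := by
        rw [div_le_one hsi0]; exact hsi
      have h0 : (0 : ℝ) ≤ 1 / Real.sqrt ((i : ℝ) + 1) := by positivity
      have hpow : (1 / Real.sqrt ((i : ℝ) + 1)) ^ m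
          ≤ (1 / Real.sqrt ((i : ℝ) + 1)) ^ 3 :=
        pow_le_pow_of_le_one h0 h1 hm
      have hsq3 : (Real.sqrt ((i : ℝ) + 1)) ^ 3 = ((i : ℝ) + 1) ^ (3 / 2 : ℝ) := by
        rw [Real.sqrt_eq_rpow, ← Real.rpow_natCast (((i : ℝ) + 1) ^ ((1 : ℝ) / 2)) 3,
          ← Real.rpow_mul (by positivity)]
        norm_num
      calc b i ^ m = (Real.sqrt C) ^ m * (1 / Real.sqrt ((i : ℝ) + 1)) ^ m := by
            rw [hbdef]
            rw [div_pow, one_div_pow, mul_one_div]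
        _ ≤ (Real.sqrt C) ^ m * (1 / Real.sqrt ((i : ℝ) + 1)) ^ 3 := by
            apply mul_le_mul_of_nonneg_left hpow (by positivity)
        _ = (Real.sqrt C) ^ m * (1 / ((i : ℝ) + 1) ^ (3 / 2 : ℝ)) := by
            rw [one_div_pow, hsq3]
    exact Summable.of_nonneg_of_le (fun i => pow_nonneg (hbnn i) m) hle
      (hs32.mul_left _)
  have hsum : Summable (fun i => |α i| ^ m) :=
    hbm.of_nonneg_of_le (fun i => pow_nonneg (abs_nonneg _) m)
      (fun i => pow_le_pow_left₀ (abs_nonneg _) (hαb i) m)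
  refine ⟨hsum, ?_⟩
  -- dominated convergence (Tannery)
  have hkey : Tendsto (fun n : ℕ => ∑' i, (Λ n i / (n : ℝ)) ^ m) atTop
      (𝓝 (∑' i, (α i) ^ m)) := by
    apply tendsto_tsum_of_dominated_convergence hbm (fun i => (hα i).pow m)
    apply Filter.Eventually.of_forall
    intro n i
    rw [Real.norm_eq_abs, abs_pow]
    exact pow_le_pow_left₀ (abs_nonneg _) (hbd n i) m
  have heq : ∀ n : ℕ, (∑ i ∈ Finset.range n, (Λ n i) ^ m) / (n : ℝ) ^ m
      = ∑' i, (Λ n i / (n : ℝ)) ^ m := by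
    intro n
    rw [tsum_eq_sum (s := Finset.range n) ?_]
    · rw [Finset.sum_div]
      exact Finset.sum_congr rfl fun i _ => (div_pow _ _ _).symm
    · intro i hi
      have hni : n ≤ i := by
        by_contra h
        exact hi (Finset.mem_range.mpr (not_le.mp h))
      rw [hpad n i hni, zero_div, zero_pow hm0]
  simp only [heq]
  exact hkey
end

section
/- Fix k > 0 and let ω = (α, β, γ) ∈ Ω. If α is not identically zero, set S := ℂ \ ((−∞, −1/|α_1|] ∪ [1/|α_1|, ∞)); if α ≡ 0 set S := ℂ. Then the infinite product Ψ(ω;z) = e^{kβz + kγz²/2} ∏_{l=1}^∞ e^{−kα_l z}(1 − α_l z)^{−k} converges locally uniformly on S and defines a holomorphic function on S. -/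
open Filter Topology

/-- For `ω = (α,β,γ) ∈ Ω`, the infinite product
`Ψ(ω;z) = e^{kβz + kγz²/2} ∏_l e^{-kα_l z}(1-α_l z)^{-k}` converges locally uniformly on
`S = ℂ \ ((-∞,-1/|α_1|] ∪ [1/|α_1|,∞))` (resp. `S = ℂ` if `α ≡ 0`) and defines a
holomorphic function on `S`. -/
theorem psi_holomorphic (k : ℝ) (hk : 0 < k) (α : ℕ → ℝ) (β γ : ℝ)
    (hdec : ∀ i, VKle (α (i + 1)) (α i))
    (hsum : Summable fun i => (α i) ^ 2)
    (hγ : 0 ≤ γ)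
    (S : Set ℂ)
    (hS0 : (∀ i, α i = 0) → S = Set.univ)
    (hS1 : ¬ (∀ i, α i = 0) → S = {z : ℂ | z.im ≠ 0 ∨ |z.re| < 1 / |α 0|}) :
    ∃ Ψ : ℂ → ℂ, DifferentiableOn ℂ Ψ S ∧
      TendstoLocallyUniformlyOn
        (fun N (z : ℂ) =>
          Complex.exp ((k : ℂ) * (β : ℂ) * z + (k : ℂ) * (γ : ℂ) * z ^ 2 / 2) *
            ∏ l ∈ Finset.range N,
              Complex.exp (-((k : ℂ) * (α l : ℂ) * z)) * (1 - (α l : ℂ) * z) ^ (-(k : ℂ)))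
        Ψ atTop S := by
  classical
  set g : ℕ → ℂ → ℂ := fun l z =>
    -((k : ℂ) * (α l : ℂ) * z) - (k : ℂ) * Complex.log (1 - (α l : ℂ) * z) with hgdef
  set h : ℂ → ℂ := fun z => (k : ℂ) * (β : ℂ) * z + (k : ℂ) * (γ : ℂ) * z ^ 2 / 2 with hhdef
  -- monotonicity of |α|
  have habs : ∀ i, |α (i + 1)| ≤ |α i| := by
    intro i
    rcases hdec i with h1 | ⟨h1, _⟩
    · exact h1.le
    · exact h1.le
  have hmono : ∀ i, |α i| ≤ |α 0| := by
    intro i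
    induction i with
    | zero => exact le_refl _
    | succ n ih => exact (habs n).trans ih
  -- α tends to 0
  have hα0 : Tendsto (fun l => |α l|) atTop (𝓝 0) := by
    have h1 : Tendsto (fun l => Real.sqrt ((α l) ^ 2)) atTop (𝓝 (Real.sqrt 0)) :=
      (Real.continuous_sqrt.tendsto 0).comp hsum.tendsto_atTop_zero
    simpa [Real.sqrt_sq_eq_abs] using h1
  -- S is open
  have hopen : IsOpen S := by
    by_cases hall : ∀ i, α i = 0
    · rw [hS0 hall]; exact isOpen_univ
    · rw [hS1 hall]
      have : {z : ℂ | z.im ≠ 0 ∨ |z.re| < 1 / |α 0|} =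
          {z : ℂ | z.im ≠ 0} ∪ {z : ℂ | |z.re| < 1 / |α 0|} := rfl
      rw [this]
      apply IsOpen.union
      · exact isOpen_compl_singleton.preimage Complex.continuous_im
      · exact isOpen_lt (continuous_abs.comp Complex.continuous_re) continuous_const
  -- slit plane membership
  have hslit : ∀ z ∈ S, ∀ l, (1 - (α l : ℂ) * z) ∈ Complex.slitPlane := by
    intro z hz l
    rw [Complex.mem_slitPlane_iff]
    have hre : (1 - (α l : ℂ) * z).re = 1 - α l * z.re := by simp
    have him : (1 - (α l : ℂ) * z).im = -(α l * z.im) := by simp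
    by_cases hαl : α l = 0
    · left; rw [hre, hαl]; norm_num
    by_cases him0 : z.im = 0
    · left
      have hall : ¬ ∀ i, α i = 0 := fun hall => hαl (hall l)
      have hα0ne : α 0 ≠ 0 := by
        intro h0
        have := hmono l
        rw [h0, abs_zero] at this
        exact hαl (abs_nonpos_iff.mp this)
      have hz' : |z.re| < 1 / |α 0| := by
        rw [hS1 hall] at hz
        rcases hz with hcase | hcase
        · exact absurd him0 hcase
        · exact hcase
      rw [hre]
      have habs1 : |α l * z.re| < 1 := by
        calc |α l * z.re| = |α l| * |z.re| := abs_mul _ _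
          _ ≤ |α 0| * |z.re| := mul_le_mul_of_nonneg_right (hmono l) (abs_nonneg _)
          _ < |α 0| * (1 / |α 0|) := by
              exact mul_lt_mul_of_pos_left hz' (abs_pos.mpr hα0ne)
          _ = 1 := mul_one_div_cancel (abs_ne_zero.mpr hα0ne)
      have := le_abs_self (α l * z.re)
      linarith
    · right
      rw [him]
      simp [hαl, him0]
  -- the basic norm bound for g
  have hbound : ∀ (l : ℕ) (z : ℂ), |α l| * ‖z‖ ≤ 1 / 2 →
      ‖g l z‖ ≤ k * (α l) ^ 2 * ‖z‖ ^ 2 := by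
    intro l z hle
    set w : ℂ := -((α l : ℂ) * z) with hw
    have hnw : ‖w‖ = |α l| * ‖z‖ := by
      rw [hw, norm_neg, norm_mul, Complex.norm_real, Real.norm_eq_abs]
    have h1 : ‖w‖ < 1 := by rw [hnw]; linarith
    have h2 := Complex.norm_log_one_add_sub_self_le h1
    have h3 : g l z = (-(k : ℂ)) * (Complex.log (1 + w) - w) := by
      simp only [hgdef, hw]
      rw [show (1 : ℂ) + -((α l : ℂ) * z) = 1 - (α l : ℂ) * z by ring]
      push_cast
      ring
    have h4 : ‖g l z‖ = k * ‖Complex.log (1 + w) - w‖ := by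
      rw [h3, norm_mul, norm_neg, Complex.norm_real, Real.norm_eq_abs, abs_of_pos hk]
    have h5 : (1 - ‖w‖)⁻¹ ≤ 2 := by
      rw [show (2:ℝ) = (2⁻¹)⁻¹ by norm_num]
      apply inv_anti₀ (by norm_num)
      rw [hnw]
      linarith
    have h6 : ‖Complex.log (1 + w) - w‖ ≤ ‖w‖ ^ 2 := by
      calc ‖Complex.log (1 + w) - w‖ ≤ ‖w‖ ^ 2 * (1 - ‖w‖)⁻¹ / 2 := h2
        _ ≤ ‖w‖ ^ 2 * 2 / 2 := by
            apply div_le_div_of_nonneg_right ?_ (by norm_num)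
            exact mul_le_mul_of_nonneg_left h5 (by positivity)
        _ = ‖w‖ ^ 2 := by ring
    calc ‖g l z‖ = k * ‖Complex.log (1 + w) - w‖ := h4
      _ ≤ k * ‖w‖ ^ 2 := mul_le_mul_of_nonneg_left h6 hk.le
      _ = k * (α l) ^ 2 * ‖z‖ ^ 2 := by rw [hnw]; rw [mul_pow, sq_abs]; ring
  -- pointwise summability
  have hGsum : ∀ z : ℂ, Summable fun l => g l z := by
    intro z
    apply Summable.of_norm_bounded_eventually_nat (g := fun l => k * (α l) ^ 2 * ‖z‖ ^ 2)
      (by simpa [mul_assoc] using (hsum.mul_left k).mul_right (‖z‖ ^ 2))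
    have hev : ∀ᶠ l in atTop, |α l| < (1 / 2) / (‖z‖ + 1) := by
      apply hα0.eventually_lt_const
      positivity
    filter_upwards [hev] with l hl
    apply hbound l z
    have hz0 : (0:ℝ) ≤ ‖z‖ := norm_nonneg z
    have h1 : |α l| * ‖z‖ ≤ ((1 / 2) / (‖z‖ + 1)) * ‖z‖ :=
      mul_le_mul_of_nonneg_right hl.le hz0
    have h2 : ((1 / 2) / (‖z‖ + 1)) * ‖z‖ ≤ 1 / 2 := by
      rw [div_mul_eq_mul_div, div_le_iff₀ (by positivity)]
      nlinarith
    linarith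
  set G : ℂ → ℂ := fun z => ∑' l, g l z with hGdef
  -- uniform convergence of the sums on compact sets
  have hUnifSum : ∀ K : Set ℂ, IsCompact K →
      TendstoUniformlyOn (fun N z => ∑ l ∈ Finset.range N, g l z) G atTop K := by
    intro K hK
    obtain ⟨R, hR⟩ := hK.isBounded.subset_closedBall 0
    set R' : ℝ := max R 0 with hR'
    have hRz : ∀ z ∈ K, ‖z‖ ≤ R' := by
      intro z hz
      have := hR hz
      rw [Metric.mem_closedBall, dist_zero_right] at this
      exact this.trans (le_max_left _ _)
    have hR0 : (0:ℝ) ≤ R' := le_max_right _ _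
    have hev : ∀ᶠ l in atTop, |α l| < (1 / 2) / (R' + 1) := by
      apply hα0.eventually_lt_const
      positivity
    obtain ⟨M, hM⟩ := eventually_atTop.mp hev
    have hsmall : ∀ l, M ≤ l → ∀ z ∈ K, |α l| * ‖z‖ ≤ 1 / 2 := by
      intro l hl z hz
      have h1 : |α l| * ‖z‖ ≤ ((1 / 2) / (R' + 1)) * R' := by
        apply mul_le_mul (hM l hl).le (hRz z hz) (norm_nonneg z)
        positivity
      have h2 : ((1 / 2) / (R' + 1)) * R' ≤ 1 / 2 := by
        rw [div_mul_eq_mul_div, div_le_iff₀ (by positivity)]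
        nlinarith
      linarith
    rw [Metric.tendstoUniformlyOn_iff]
    intro ε hε
    have hsummR : Summable fun l => k * (α l) ^ 2 * R' ^ 2 := by
      simpa [mul_assoc] using (hsum.mul_left k).mul_right (R' ^ 2)
    have htail : Tendsto (fun N => ∑' l, (k * (α (l + N)) ^ 2 * R' ^ 2)) atTop (𝓝 0) :=
      tendsto_sum_nat_add fun m => k * (α m) ^ 2 * R' ^ 2
    filter_upwards [htail.eventually_lt_const hε, eventually_ge_atTop M] with N hN hNM z hzK
    have hsz := hGsum z
    have heq : G z - ∑ l ∈ Finset.range N, g l z = ∑' l, g (l + N) z := by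
      have hsplit := Summable.sum_add_tsum_nat_add (f := fun l => g l z) N hsz
      rw [hGdef]
      simp only
      rw [← hsplit]
      ring
    rw [dist_eq_norm, heq]
    have hsummR' : Summable fun l => k * (α (l + N)) ^ 2 * R' ^ 2 :=
      (summable_nat_add_iff (f := fun m => k * (α m) ^ 2 * R' ^ 2) N).mpr hsummR
    calc ‖∑' l, g (l + N) z‖ ≤ ∑' l, k * (α (l + N)) ^ 2 * R' ^ 2 := by
          apply tsum_of_norm_bounded hsummR'.hasSum
          intro l
          have hle : |α (l + N)| * ‖z‖ ≤ 1 / 2 := hsmall (l + N) (by omega) z hzK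
          calc ‖g (l + N) z‖ ≤ k * (α (l + N)) ^ 2 * ‖z‖ ^ 2 := hbound _ _ hle
            _ ≤ k * (α (l + N)) ^ 2 * R' ^ 2 := by
                apply mul_le_mul_of_nonneg_left _ (by positivity)
                exact pow_le_pow_left₀ (norm_nonneg z) (hRz z hzK) 2
      _ < ε := hN
  -- continuity of g l on S
  have hgc : ∀ l, ContinuousOn (g l) S := by
    intro l z hz
    apply ContinuousAt.continuousWithinAt
    apply ContinuousAt.sub
    · fun_prop
    · apply ContinuousAt.mul continuousAt_const
      have hinner : ContinuousAt (fun x : ℂ => 1 - (α l : ℂ) * x) z := by fun_prop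
      have hcomp := ContinuousAt.comp (g := Complex.log)
        (f := fun x : ℂ => 1 - (α l : ℂ) * x) (x := z)
        (continuousAt_clog (hslit z hz l)) hinner
      exact hcomp
  -- product formula on S
  have hProdEq : ∀ z ∈ S, ∀ N : ℕ,
      Complex.exp (h z) * (∏ l ∈ Finset.range N,
        Complex.exp (-((k : ℂ) * (α l : ℂ) * z)) * (1 - (α l : ℂ) * z) ^ (-(k : ℂ))) =
      Complex.exp (h z + ∑ l ∈ Finset.range N, g l z) := by
    intro z hz N
    have hfac : ∀ l, Complex.exp (-((k : ℂ) * (α l : ℂ) * z)) *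
        (1 - (α l : ℂ) * z) ^ (-(k : ℂ)) = Complex.exp (g l z) := by
      intro l
      rw [Complex.cpow_def_of_ne_zero (Complex.slitPlane_ne_zero (hslit z hz l)),
        ← Complex.exp_add]
      congr 1
      simp only [hgdef]
      ring
    rw [Finset.prod_congr rfl (fun l _ => hfac l), ← Complex.exp_sum, ← Complex.exp_add]
  -- locally uniform convergence
  have hTLU : TendstoLocallyUniformlyOn
      (fun N (z : ℂ) =>
        Complex.exp ((k : ℂ) * (β : ℂ) * z + (k : ℂ) * (γ : ℂ) * z ^ 2 / 2) *
          ∏ l ∈ Finset.range N,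
            Complex.exp (-((k : ℂ) * (α l : ℂ) * z)) * (1 - (α l : ℂ) * z) ^ (-(k : ℂ)))
      (fun z => Complex.exp (h z + G z)) atTop S := by
    rw [tendstoLocallyUniformlyOn_iff_forall_isCompact hopen]
    intro K hKS hK
    have hsumU := hUnifSum K hK
    have hGcont : ContinuousOn G K := by
      apply hsumU.continuousOn
      apply Eventually.frequently
      apply Eventually.of_forall
      intro N
      apply continuousOn_finset_sum
      intro l _
      exact (hgc l).mono hKS
    have hcont : ContinuousOn (fun z => h z + G z) K := by
      apply ContinuousOn.add _ hGcont
      apply Continuous.continuousOn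
      simp only [hhdef]
      fun_prop
    obtain ⟨C, hC⟩ := hK.exists_bound_of_continuousOn hcont
    rw [Metric.tendstoUniformlyOn_iff]
    intro ε hε
    set δ : ℝ := min 1 (ε / (2 * Real.exp C + 2)) with hδdef
    have hδpos : 0 < δ := lt_min one_pos (by positivity)
    have hev := (Metric.tendstoUniformlyOn_iff.mp hsumU) δ hδpos
    filter_upwards [hev] with N hN z hzK
    rw [hProdEq z (hKS hzK) N]
    have hd : dist (G z) (∑ l ∈ Finset.range N, g l z) < δ := hN z hzK
    set a : ℂ := h z + G z with hadef
    set b : ℂ := h z + ∑ l ∈ Finset.range N, g l z with hbdef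
    have hba : b - a = ∑ l ∈ Finset.range N, g l z - G z := by
      rw [hadef, hbdef]; ring
    have hnba : ‖b - a‖ < δ := by
      rw [hba, ← dist_eq_norm, dist_comm]
      exact hd
    have hnba1 : ‖b - a‖ ≤ 1 := hnba.le.trans (min_le_left _ _)
    have hsub : Complex.exp a - Complex.exp b = Complex.exp a * (1 - Complex.exp (b - a)) := by
      rw [mul_sub, mul_one, ← Complex.exp_add]
      congr 2
      ring
    have hea : ‖Complex.exp a‖ ≤ Real.exp C := by
      rw [Complex.norm_exp]
      apply Real.exp_le_exp.mpr
      calc a.re ≤ |a.re| := le_abs_self _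
        _ ≤ ‖a‖ := Complex.abs_re_le_norm a
        _ ≤ C := hC z hzK
    have he1 : ‖1 - Complex.exp (b - a)‖ ≤ 2 * ‖b - a‖ := by
      rw [norm_sub_rev]
      exact Complex.norm_exp_sub_one_le (x := b - a) hnba1
    rw [dist_eq_norm, hsub]
    calc ‖Complex.exp a * (1 - Complex.exp (b - a))‖
        = ‖Complex.exp a‖ * ‖1 - Complex.exp (b - a)‖ := norm_mul _ _
      _ ≤ Real.exp C * (2 * ‖b - a‖) := by
          apply mul_le_mul hea he1 (norm_nonneg _) (Real.exp_pos C).le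
      _ < Real.exp C * (2 * δ) := by
          apply mul_lt_mul_of_pos_left _ (Real.exp_pos C)
          linarith
      _ ≤ Real.exp C * (2 * (ε / (2 * Real.exp C + 2))) := by
          apply mul_le_mul_of_nonneg_left _ (Real.exp_pos C).le
          have := min_le_right (1:ℝ) (ε / (2 * Real.exp C + 2))
          linarith
      _ < ε := by
          have hE := Real.exp_pos C
          rw [show Real.exp C * (2 * (ε / (2 * Real.exp C + 2))) =
              (2 * Real.exp C) * ε / (2 * Real.exp C + 2) by ring]
          rw [div_lt_iff₀ (by positivity)]
          nlinarith
  -- each partial product is holomorphic on S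
  have hdiffN : ∀ N : ℕ, DifferentiableOn ℂ
      (fun z : ℂ =>
        Complex.exp ((k : ℂ) * (β : ℂ) * z + (k : ℂ) * (γ : ℂ) * z ^ 2 / 2) *
          ∏ l ∈ Finset.range N,
            Complex.exp (-((k : ℂ) * (α l : ℂ) * z)) * (1 - (α l : ℂ) * z) ^ (-(k : ℂ))) S := by
    intro N
    intro z hz
    apply DifferentiableAt.differentiableWithinAt
    apply DifferentiableAt.mul
    · apply DifferentiableAt.cexp
      fun_prop
    · apply DifferentiableAt.fun_finsetProd
      intro l _
      apply DifferentiableAt.mul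
      · apply DifferentiableAt.cexp
        fun_prop
      · apply DifferentiableAt.cpow
        · fun_prop
        · exact differentiableAt_const _
        · exact hslit z hz l
  exact ⟨fun z => Complex.exp (h z + G z),
    hTLU.differentiableOn (Eventually.of_forall hdiffN) hopen, hTLU⟩
end

section
/- Fix k > 0 and let ω_1 = (α, β, γ) and ω_2 = (α', β', γ') be elements of Ω. If Ψ(ω_1; z) = Ψ(ω_2; z) for all z in some open neighborhood of 0 in ℂ, then ω_1 = ω_2, i.e. α_i = α'_i for all i, β = β' and γ = γ'. -/
open Filter Topology

/-- The function `Ψ(ω;z) = e^{kβz + kγz²/2} ∏_{l=1}^∞ e^{-kα_l z}(1-α_l z)^{-k}`. -/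
noncomputable def Psi (k : ℝ) (α : ℕ → ℝ) (β γ : ℝ) (z : ℂ) : ℂ :=
  Complex.exp ((k : ℂ) * (β : ℂ) * z + (k : ℂ) * (γ : ℂ) * z ^ 2 / 2) *
    ∏' l : ℕ, Complex.exp (-((k : ℂ) * (α l : ℂ) * z)) * (1 - (α l : ℂ) * z) ^ (-(k : ℂ))

namespace PsiAux

lemma vkle_abs_le {x y : ℝ} (h : VKle x y) : |x| ≤ |y| := by
  rcases h with h | ⟨h, _⟩
  · exact h.le
  · exact h.le

variable {b b' : ℕ → ℝ}

lemma abs_antitone (hd : ∀ i, VKle (b (i + 1)) (b i)) : Antitone fun i => |b i| :=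
  antitone_nat_of_succ_le fun n => vkle_abs_le (hd n)

lemma abs_le_head (hd : ∀ i, VKle (b (i + 1)) (b i)) (j : ℕ) : |b j| ≤ |b 0| :=
  abs_antitone hd (Nat.zero_le j)

lemma summable_abs_pow (hs : Summable fun j => b j ^ 2) {B : ℝ} (hB : ∀ j, |b j| ≤ B)
    {m : ℕ} (hm : 2 ≤ m) : Summable fun j => |b j| ^ m := by
  have hB0 : 0 ≤ B := (abs_nonneg _).trans (hB 0)
  refine Summable.of_nonneg_of_le (fun j => by positivity) (fun j => ?_)
    (hs.mul_left (B ^ (m - 2)))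
  have h1 : |b j| ^ m = |b j| ^ (m - 2) * b j ^ 2 := by
    rw [← sq_abs, ← pow_add]
    congr 1
    omega
  rw [h1]
  exact mul_le_mul_of_nonneg_right (pow_le_pow_left₀ (abs_nonneg _) (hB j) _) (sq_nonneg _)

lemma summable_pow (hs : Summable fun j => b j ^ 2) {B : ℝ} (hB : ∀ j, |b j| ≤ B)
    {m : ℕ} (hm : 2 ≤ m) : Summable fun j => b j ^ m := by
  apply Summable.of_abs
  have : (fun j => |b j ^ m|) = fun j => |b j| ^ m := by
    funext j; exact abs_pow _ _
  rw [this]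
  exact summable_abs_pow hs hB hm

/-- tail bound : `|∑' j, b (j+r) ^ m| ≤ q^(m-2) * ∑' j, b j ^ 2` when `|b j| ≤ q` for `j ≥ r`. -/
lemma tail_bound (hs : Summable fun j => b j ^ 2) (hd : ∀ i, VKle (b (i + 1)) (b i))
    {q : ℝ} (hq0 : 0 ≤ q) (r : ℕ) (hq : ∀ j, r ≤ j → |b j| ≤ q)
    {m : ℕ} (hm : 2 ≤ m) :
    |∑' j, b (j + r) ^ m| ≤ q ^ (m - 2) * ∑' j, b j ^ 2 := by
  have hsm : Summable fun j => b j ^ m := summable_pow hs (abs_le_head hd) hm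
  have hsma : Summable fun j => |b (j + r)| ^ m :=
    ((summable_abs_pow hs (abs_le_head hd) hm).comp_injective (add_left_injective r))
  have h1 : |∑' j, b (j + r) ^ m| ≤ ∑' j, |b (j + r)| ^ m := by
    have := norm_tsum_le_tsum_norm (f := fun j => b (j + r) ^ m) (by
      simpa [Real.norm_eq_abs, abs_pow] using hsma)
    simpa [Real.norm_eq_abs, abs_pow] using this
  refine h1.trans ?_
  have h2 : ∑' j, |b (j + r)| ^ m ≤ ∑' j, q ^ (m - 2) * b (j + r) ^ 2 := by
    refine Summable.tsum_le_tsum (fun j => ?_) hsma ((hs.comp_injective (add_left_injective r)).mul_left _)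
    have : |b (j + r)| ^ m = |b (j + r)| ^ (m - 2) * b (j + r) ^ 2 := by
      rw [← sq_abs, ← pow_add]; congr 1; omega
    rw [this]
    exact mul_le_mul_of_nonneg_right
      (pow_le_pow_left₀ (abs_nonneg _) (hq _ (Nat.le_add_left _ _)) _) (sq_nonneg _)
  refine h2.trans ?_
  rw [tsum_mul_left]
  refine mul_le_mul_of_nonneg_left ?_ (by positivity)
  calc ∑' j, b (j + r) ^ 2 ≤ (∑ i ∈ Finset.range r, b i ^ 2) + ∑' j, b (j + r) ^ 2 := by
          have : (0:ℝ) ≤ ∑ i ∈ Finset.range r, b i ^ 2 := by positivity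
          linarith
    _ = ∑' j, b j ^ 2 := Summable.sum_add_tsum_nat_add r hs


/-- `|b 0| ≤ |b' 0|` from equality of power sums of order ≥ 3. -/
lemma abs_head_le (hd : ∀ i, VKle (b (i + 1)) (b i)) (hd' : ∀ i, VKle (b' (i + 1)) (b' i))
    (hs : Summable fun j => b j ^ 2) (hs' : Summable fun j => b' j ^ 2)
    (hp : ∀ m, 3 ≤ m → ∑' j, b j ^ m = ∑' j, b' j ^ m) :
    |b 0| ≤ |b' 0| := by
  by_contra hlt
  push_neg at hlt
  set M := |b 0| with hM
  set M' := |b' 0| with hM'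
  have hMpos : 0 < M := (abs_nonneg _).trans_lt hlt
  set S' := ∑' j, b' j ^ 2 with hS'
  have hS0 : 0 ≤ S' := tsum_nonneg fun j => sq_nonneg _
  -- find n with M'^(2n+2) * S' < M^(2n+4)
  have hratio : 0 ≤ M' ^ 2 / M ^ 2 := by positivity
  have hratio1 : M' ^ 2 / M ^ 2 < 1 := by
    rw [div_lt_one (by positivity)]
    exact pow_lt_pow_left₀ hlt (abs_nonneg _) two_ne_zero
  have hev : ∀ᶠ n : ℕ in atTop, (M' ^ 2 / M ^ 2) ^ (n + 1) * S' < M ^ 2 := by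
    have ht : Tendsto (fun n : ℕ => (M' ^ 2 / M ^ 2) ^ (n + 1) * S') atTop (𝓝 0) := by
      have := (tendsto_pow_atTop_nhds_zero_of_lt_one hratio hratio1).mul_const S'
      simpa [Function.comp_def] using this.comp (tendsto_add_atTop_nat 1)
    exact ht.eventually_lt_const (by positivity)
  obtain ⟨n, hn⟩ := hev.exists
  have key : (M' ^ 2) ^ (n + 1) * S' < (M ^ 2) ^ (n + 2) := by
    rw [div_pow, div_mul_eq_mul_div, div_lt_iff₀ (by positivity)] at hn
    calc (M' ^ 2) ^ (n + 1) * S' < M ^ 2 * (M ^ 2) ^ (n + 1) := hn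
      _ = (M ^ 2) ^ (n + 2) := by ring
  have hb_lower : (M ^ 2) ^ (n + 2) ≤ ∑' j, b j ^ (2 * n + 4) := by
    have hsum : Summable fun j => b j ^ (2 * n + 4) :=
      summable_pow hs (abs_le_head hd) (by omega)
    have h0 : b 0 ^ (2 * n + 4) = (M ^ 2) ^ (n + 2) := by
      rw [hM, sq_abs]; ring
    calc (M ^ 2) ^ (n + 2) = b 0 ^ (2 * n + 4) := h0.symm
      _ ≤ ∑' j, b j ^ (2 * n + 4) := Summable.le_tsum hsum 0 fun j _ => by
            have : b j ^ (2 * n + 4) = (b j ^ 2) ^ (n + 2) := by ring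
            rw [this]; positivity
  have hb_upper : ∑' j, b' j ^ (2 * n + 4) ≤ (M' ^ 2) ^ (n + 1) * S' := by
    have hsum' : Summable fun j => b' j ^ (2 * n + 4) :=
      summable_pow hs' (abs_le_head hd') (by omega)
    have hterm : ∀ j, b' j ^ (2 * n + 4) ≤ (M' ^ 2) ^ (n + 1) * b' j ^ 2 := by
      intro j
      have h1 : b' j ^ (2 * n + 4) = (b' j ^ 2) ^ (n + 1) * b' j ^ 2 := by ring
      rw [h1]
      refine mul_le_mul_of_nonneg_right (pow_le_pow_left₀ (sq_nonneg _) ?_ _) (sq_nonneg _)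
      rw [← sq_abs (b' j), hM']
      exact pow_le_pow_left₀ (abs_nonneg _) (abs_le_head hd' j) 2
    calc ∑' j, b' j ^ (2 * n + 4) ≤ ∑' j, (M' ^ 2) ^ (n + 1) * b' j ^ 2 :=
          Summable.tsum_le_tsum hterm hsum' (hs'.mul_left _)
      _ = (M' ^ 2) ^ (n + 1) * S' := tsum_mul_left
  have := hp (2 * n + 4) (by omega)
  linarith

section Limits

variable {M q S : ℝ} {r : ℕ}

lemma prefix_even_sum (hpre : ∀ j < r, |b j| = M) (n : ℕ) :
    ∑ j ∈ Finset.range r, b j ^ (2 * n + 4) = (r : ℝ) * M ^ (2 * n + 4) := by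
  have : ∀ j ∈ Finset.range r, b j ^ (2 * n + 4) = M ^ (2 * n + 4) := by
    intro j hj
    have h := hpre j (Finset.mem_range.mp hj)
    calc b j ^ (2 * n + 4) = (b j ^ 2) ^ (n + 2) := by ring
      _ = (M ^ 2) ^ (n + 2) := by rw [← sq_abs, h]
      _ = M ^ (2 * n + 4) := by ring
  rw [Finset.sum_congr rfl this, Finset.sum_const, Finset.card_range, nsmul_eq_mul]

lemma prefix_odd_sum (hpre : ∀ j < r, |b j| = M) (n : ℕ) :
    ∑ j ∈ Finset.range r, b j ^ (2 * n + 5) =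
      (∑ j ∈ Finset.range r, b j) * M ^ (2 * n + 4) := by
  rw [Finset.sum_mul]
  refine Finset.sum_congr rfl fun j hj => ?_
  have h := hpre j (Finset.mem_range.mp hj)
  calc b j ^ (2 * n + 5) = b j * (b j ^ 2) ^ (n + 2) := by ring
    _ = b j * (M ^ 2) ^ (n + 2) := by rw [← sq_abs, h]
    _ = b j * M ^ (2 * n + 4) := by ring

lemma tendsto_even (hs : Summable fun j => b j ^ 2) (hd : ∀ i, VKle (b (i + 1)) (b i))
    (hM : 0 < M) (hq0 : 0 ≤ q) (hqM : q < M)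
    (hpre : ∀ j < r, |b j| = M) (htail : ∀ j, r ≤ j → |b j| ≤ q) :
    Tendsto (fun n => (∑' j, b j ^ (2 * n + 4)) / M ^ (2 * n + 4)) atTop (𝓝 (r : ℝ)) := by
  set S := ∑' j, b j ^ 2 with hS
  rw [← tendsto_sub_nhds_zero_iff]
  apply squeeze_zero_norm (a := fun n => (q ^ 2 / M ^ 2) ^ n * (q ^ 2 * S / M ^ 4))
  · intro n
    have hsum : Summable fun j => b j ^ (2 * n + 4) :=
      summable_pow hs (abs_le_head hd) (by omega)
    have hsplit : ∑' j, b j ^ (2 * n + 4) =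
        (r : ℝ) * M ^ (2 * n + 4) + ∑' j, b (j + r) ^ (2 * n + 4) := by
      rw [← prefix_even_sum hpre n, Summable.sum_add_tsum_nat_add r hsum]
    have htb : |∑' j, b (j + r) ^ (2 * n + 4)| ≤ q ^ (2 * n + 2) * S := by
      have := tail_bound hs hd hq0 r htail (m := 2 * n + 4) (by omega)
      rwa [(by omega : 2 * n + 4 - 2 = 2 * n + 2)] at this
    have hMp : (0:ℝ) < M ^ (2 * n + 4) := by positivity
    rw [Real.norm_eq_abs, hsplit]
    have heq1 : ((r : ℝ) * M ^ (2 * n + 4) + ∑' j, b (j + r) ^ (2 * n + 4)) / M ^ (2 * n + 4)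
        - r = (∑' j, b (j + r) ^ (2 * n + 4)) / M ^ (2 * n + 4) := by
      field_simp
      ring
    rw [heq1, abs_div, abs_of_pos hMp, div_le_iff₀ hMp]
    calc |∑' j, b (j + r) ^ (2 * n + 4)| ≤ q ^ (2 * n + 2) * S := htb
      _ = (q ^ 2 / M ^ 2) ^ n * (q ^ 2 * S / M ^ 4) * M ^ (2 * n + 4) := by
          rw [div_pow, ← pow_mul, ← pow_mul]
          field_simp
          ring
  · have h1 : 0 ≤ q ^ 2 / M ^ 2 := by positivity
    have h2 : q ^ 2 / M ^ 2 < 1 := by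
      rw [div_lt_one (by positivity)]
      exact pow_lt_pow_left₀ hqM hq0 two_ne_zero
    simpa using (tendsto_pow_atTop_nhds_zero_of_lt_one h1 h2).mul_const (q ^ 2 * S / M ^ 4)

lemma tendsto_odd (hs : Summable fun j => b j ^ 2) (hd : ∀ i, VKle (b (i + 1)) (b i))
    (hM : 0 < M) (hq0 : 0 ≤ q) (hqM : q < M)
    (hpre : ∀ j < r, |b j| = M) (htail : ∀ j, r ≤ j → |b j| ≤ q) :
    Tendsto (fun n => (∑' j, b j ^ (2 * n + 5)) / M ^ (2 * n + 4)) atTop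
      (𝓝 (∑ j ∈ Finset.range r, b j)) := by
  set S := ∑' j, b j ^ 2 with hS
  set B := ∑ j ∈ Finset.range r, b j with hB
  rw [← tendsto_sub_nhds_zero_iff]
  apply squeeze_zero_norm (a := fun n => (q ^ 2 / M ^ 2) ^ n * (q ^ 3 * S / M ^ 4))
  · intro n
    have hsum : Summable fun j => b j ^ (2 * n + 5) :=
      summable_pow hs (abs_le_head hd) (by omega)
    have hsplit : ∑' j, b j ^ (2 * n + 5) =
        B * M ^ (2 * n + 4) + ∑' j, b (j + r) ^ (2 * n + 5) := by
      rw [← prefix_odd_sum hpre n, Summable.sum_add_tsum_nat_add r hsum]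
    have htb : |∑' j, b (j + r) ^ (2 * n + 5)| ≤ q ^ (2 * n + 3) * S := by
      have := tail_bound hs hd hq0 r htail (m := 2 * n + 5) (by omega)
      rwa [(by omega : 2 * n + 5 - 2 = 2 * n + 3)] at this
    have hMp : (0:ℝ) < M ^ (2 * n + 4) := by positivity
    rw [Real.norm_eq_abs, hsplit]
    have heq1 : (B * M ^ (2 * n + 4) + ∑' j, b (j + r) ^ (2 * n + 5)) / M ^ (2 * n + 4)
        - B = (∑' j, b (j + r) ^ (2 * n + 5)) / M ^ (2 * n + 4) := by
      field_simp
      ring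
    rw [heq1, abs_div, abs_of_pos hMp, div_le_iff₀ hMp]
    calc |∑' j, b (j + r) ^ (2 * n + 5)| ≤ q ^ (2 * n + 3) * S := htb
      _ = (q ^ 2 / M ^ 2) ^ n * (q ^ 3 * S / M ^ 4) * M ^ (2 * n + 4) := by
          rw [div_pow, ← pow_mul, ← pow_mul]
          field_simp
          ring
  · have h1 : 0 ≤ q ^ 2 / M ^ 2 := by positivity
    have h2 : q ^ 2 / M ^ 2 < 1 := by
      rw [div_lt_one (by positivity)]
      exact pow_lt_pow_left₀ hqM hq0 two_ne_zero
    simpa using (tendsto_pow_atTop_nhds_zero_of_lt_one h1 h2).mul_const (q ^ 3 * S / M ^ 4)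

end Limits

lemma prefix_sum_eq_iff {M : ℝ} (hd : ∀ i, VKle (b (i + 1)) (b i)) (hM : 0 < M)
    {r : ℕ} (hr0 : 0 < r) (hpre : ∀ j < r, |b j| = M) :
    b 0 = -M ↔ ∑ j ∈ Finset.range r, b j = -(r : ℝ) * M := by
  have hpm : ∀ j < r, b j = M ∨ b j = -M := fun j hj => abs_eq hM.le |>.mp (hpre j hj)
  have chain : ∀ j, j < r → b j ≤ b 0 := by
    intro j
    induction j with
    | zero => intro _; exact le_refl _
    | succ j IH =>
      intro hj
      have h1 : j < r := Nat.lt_of_succ_lt hj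
      rcases hd j with h | ⟨_, hle⟩
      · rw [hpre _ hj, hpre _ h1] at h
        exact absurd h (lt_irrefl _)
      · exact hle.trans (IH h1)
  constructor
  · intro hb0
    have hall : ∀ j ∈ Finset.range r, b j = -M := by
      intro j hj
      rcases hpm j (Finset.mem_range.mp hj) with h | h
      · exfalso
        have := chain j (Finset.mem_range.mp hj)
        rw [h, hb0] at this
        linarith
      · exact h
    rw [Finset.sum_congr rfl hall, Finset.sum_const, Finset.card_range, nsmul_eq_mul]
    ring
  · intro hsum
    rcases hpm 0 hr0 with h | h
    · exfalso
      have hsplit : ∑ j ∈ Finset.range r, b j = b 0 + ∑ j ∈ Finset.Ico 1 r, b j := by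
        rw [Finset.range_eq_Ico, Finset.sum_eq_sum_Ico_succ_bot hr0]
      have hlow : ((r : ℝ) - 1) * (-M) ≤ ∑ j ∈ Finset.Ico 1 r, b j := by
        have hc : (Finset.Ico 1 r).card • (-M) ≤ ∑ j ∈ Finset.Ico 1 r, b j := by
          refine Finset.card_nsmul_le_sum _ _ _ fun j hj => ?_
          rcases hpm j (Finset.mem_Ico.mp hj).2 with h' | h'
          · rw [h']; linarith
          · rw [h']
        rw [Nat.card_Ico, nsmul_eq_mul] at hc
        have : ((r - 1 : ℕ) : ℝ) = (r : ℝ) - 1 := by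
          push_cast [Nat.cast_sub hr0]
          ring
        rwa [this] at hc
      rw [hsplit, h] at hsum
      have : (1:ℝ) ≤ (r:ℝ) := by exact_mod_cast hr0
      nlinarith
    · exact h

lemma head_eq (hd : ∀ i, VKle (b (i + 1)) (b i)) (hd' : ∀ i, VKle (b' (i + 1)) (b' i))
    (hs : Summable fun j => b j ^ 2) (hs' : Summable fun j => b' j ^ 2)
    (hp : ∀ m, 3 ≤ m → ∑' j, b j ^ m = ∑' j, b' j ^ m) :
    b 0 = b' 0 := by
  have hMeq : |b 0| = |b' 0| :=
    le_antisymm (abs_head_le hd hd' hs hs' hp)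
      (abs_head_le hd' hd hs' hs fun m hm => (hp m hm).symm)
  by_cases hM0 : |b 0| = 0
  · have h1 : b 0 = 0 := abs_eq_zero.mp hM0
    have h2 : b' 0 = 0 := abs_eq_zero.mp (by rw [← hMeq]; exact hM0)
    rw [h1, h2]
  set M := |b 0| with hMdef
  have hMpos : 0 < M := (abs_nonneg _).lt_of_ne (Ne.symm hM0)
  -- existence of an index where |b| < M
  have hexgen : ∀ (c : ℕ → ℝ), (Summable fun j => c j ^ 2) → ∃ j, |c j| < M := by
    intro c hc
    have ht : Tendsto (fun j => c j ^ 2) atTop (𝓝 0) := hc.tendsto_atTop_zero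
    have := (ht.eventually_lt_const (by positivity : (0:ℝ) < M ^ 2)).exists
    obtain ⟨j, hj⟩ := this
    exact ⟨j, by nlinarith [abs_nonneg (c j), sq_abs (c j)]⟩
  have hex : ∃ j, |b j| < M := hexgen b hs
  have hex' : ∃ j, |b' j| < M := hexgen b' hs'
  set r := Nat.find hex with hrdef
  set r' := Nat.find hex' with hrdef'
  have hpre : ∀ j < r, |b j| = M :=
    fun j hj => le_antisymm (hMdef ▸ abs_le_head hd j) (not_lt.mp (Nat.find_min hex hj))
  have hpre' : ∀ j < r', |b' j| = M :=
    fun j hj => le_antisymm (hMeq ▸ abs_le_head hd' j) (not_lt.mp (Nat.find_min hex' hj))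
  have hq : |b r| < M := Nat.find_spec hex
  have hq' : |b' r'| < M := Nat.find_spec hex'
  have htail : ∀ j, r ≤ j → |b j| ≤ |b r| := fun j hj => abs_antitone hd hj
  have htail' : ∀ j, r' ≤ j → |b' j| ≤ |b' r'| := fun j hj => abs_antitone hd' hj
  have hr0 : 0 < r := by
    rcases Nat.eq_zero_or_pos r with h | h
    · exfalso; rw [h] at hq; exact absurd hq (lt_irrefl _)
    · exact h
  have hr0' : 0 < r' := by
    rcases Nat.eq_zero_or_pos r' with h | h
    · exfalso
      rw [h] at hq'
      rw [← hMeq] at hq'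
      exact absurd (hMeq ▸ hq') (lt_irrefl _)
    · exact h
  -- the even and odd limits
  have te := tendsto_even hs hd hMpos (abs_nonneg _) hq hpre htail
  have te' := tendsto_even hs' hd' hMpos (abs_nonneg _) hq' hpre' htail'
  have tod := tendsto_odd hs hd hMpos (abs_nonneg _) hq hpre htail
  have tod' := tendsto_odd hs' hd' hMpos (abs_nonneg _) hq' hpre' htail'
  have hfeq : (fun n => (∑' j, b j ^ (2 * n + 4)) / M ^ (2 * n + 4)) =
      fun n => (∑' j, b' j ^ (2 * n + 4)) / M ^ (2 * n + 4) := by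
    funext n
    rw [hp (2 * n + 4) (by omega)]
  have hfeq2 : (fun n => (∑' j, b j ^ (2 * n + 5)) / M ^ (2 * n + 4)) =
      fun n => (∑' j, b' j ^ (2 * n + 5)) / M ^ (2 * n + 4) := by
    funext n
    rw [hp (2 * n + 5) (by omega)]
  have hrr : (r : ℝ) = (r' : ℝ) := tendsto_nhds_unique (hfeq ▸ te) te'
  have hrr' : r = r' := Nat.cast_injective hrr
  have hBB : ∑ j ∈ Finset.range r, b j = ∑ j ∈ Finset.range r', b' j :=
    tendsto_nhds_unique (hfeq2 ▸ tod) tod'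
  -- case analysis
  have hiff := prefix_sum_eq_iff hd hMpos hr0 hpre
  have hiff' := prefix_sum_eq_iff hd' hMpos hr0' hpre'
  rcases abs_eq hMpos.le |>.mp (hpre 0 hr0) with h0 | h0 <;>
    rcases abs_eq hMpos.le |>.mp (hpre' 0 hr0') with h0' | h0'
  · rw [h0, h0']
  · exfalso
    have hB2 : ∑ j ∈ Finset.range r, b j = -(r : ℝ) * M := by
      rw [hBB, hrr]
      exact hiff'.mp h0'
    have := hiff.mpr hB2
    rw [h0] at this
    linarith
  · exfalso
    have hB2 : ∑ j ∈ Finset.range r', b' j = -(r' : ℝ) * M := by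
      rw [← hBB, ← hrr]
      exact hiff.mp h0
    have := hiff'.mpr hB2
    rw [h0'] at this
    linarith
  · rw [h0, h0']

set_option maxHeartbeats 1000000 in
/-- Power sums of order ≥ 3 determine the sequence. -/
lemma seq_eq (hd : ∀ i, VKle (b (i + 1)) (b i)) (hd' : ∀ i, VKle (b' (i + 1)) (b' i))
    (hs : Summable fun j => b j ^ 2) (hs' : Summable fun j => b' j ^ 2)
    (hp : ∀ m, 3 ≤ m → ∑' j, b j ^ m = ∑' j, b' j ^ m) :
    ∀ i, b i = b' i := by
  intro i
  induction i using Nat.strong_induction_on with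
  | _ i IH =>
  have hdt : ∀ j, VKle (b (j + 1 + i)) (b (j + i)) := by
    intro j
    rw [add_right_comm]
    exact hd (j + i)
  have hdt' : ∀ j, VKle (b' (j + 1 + i)) (b' (j + i)) := by
    intro j
    rw [add_right_comm]
    exact hd' (j + i)
  have hst : Summable fun j => b (j + i) ^ 2 := (summable_nat_add_iff i).mpr hs
  have hst' : Summable fun j => b' (j + i) ^ 2 := (summable_nat_add_iff i).mpr hs'
  have hpt : ∀ m, 3 ≤ m → ∑' j, b (j + i) ^ m = ∑' j, b' (j + i) ^ m := by
    intro m hm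
    have hsm : Summable fun j => b j ^ m := summable_pow hs (abs_le_head hd) (by omega)
    have hsm' : Summable fun j => b' j ^ m := summable_pow hs' (abs_le_head hd') (by omega)
    have h1 := Summable.sum_add_tsum_nat_add (f := fun j => b j ^ m) i hsm
    have h2 := Summable.sum_add_tsum_nat_add (f := fun j => b' j ^ m) i hsm'
    have hhead : ∑ j ∈ Finset.range i, b j ^ m = ∑ j ∈ Finset.range i, b' j ^ m :=
      Finset.sum_congr rfl fun j hj => by rw [IH j (Finset.mem_range.mp hj)]
    have := hp m hm
    rw [← h1, ← h2, hhead] at this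
    linarith
  have := head_eq (b := fun j => b (j + i)) (b' := fun j => b' (j + i))
    hdt hdt' hst hst' hpt
  simpa using this

section Analytic

open Complex

/-- `hlog w = -w - log(1-w) = ∑_{n≥2} w^n/n`. -/
noncomputable def hlog (w : ℂ) : ℂ := -w - Complex.log (1 - w)

lemma hasSum_hlog {w : ℂ} (hw : ‖w‖ < 1) :
    HasSum (fun n : ℕ => w ^ (n + 2) / ((n : ℂ) + 2)) (hlog w) := by
  have h := Complex.hasSum_taylorSeries_neg_log hw
  have h2 := (hasSum_nat_add_iff' (f := fun n : ℕ => w ^ n / (n : ℂ)) 2).mpr h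
  have hval : -Complex.log (1 - w) - ∑ i ∈ Finset.range 2, w ^ i / (i : ℂ) = hlog w := by
    simp [Finset.sum_range_succ, hlog]
    ring
  rw [hval] at h2
  simpa using h2
  
lemma norm_hlog_le {w : ℂ} (hw : ‖w‖ ≤ 1 / 2) : ‖hlog w‖ ≤ ‖w‖ ^ 2 := by
  have hw1 : ‖w‖ < 1 := lt_of_le_of_lt hw (by norm_num)
  have h := hasSum_hlog hw1
  have hterm : ∀ n : ℕ, ‖w ^ (n + 2) / ((n : ℂ) + 2)‖ ≤ ‖w‖ ^ 2 / 2 * (1 / 2) ^ n := by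
    intro n
    rw [norm_div, norm_pow]
    have h2 : (2 : ℝ) ≤ ‖(n : ℂ) + 2‖ := by
      have : ((n : ℂ) + 2) = ((n + 2 : ℕ) : ℂ) := by push_cast; ring
      rw [this, Complex.norm_natCast]
      exact_mod_cast Nat.le_add_left 2 n
    have hwn : ‖w‖ ^ (n + 2) ≤ ‖w‖ ^ 2 * (1 / 2) ^ n := by
      have : ‖w‖ ^ (n + 2) = ‖w‖ ^ 2 * ‖w‖ ^ n := by ring
      rw [this]
      refine mul_le_mul_of_nonneg_left ?_ (by positivity)
      exact pow_le_pow_left₀ (norm_nonneg _) hw n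
    calc ‖w‖ ^ (n + 2) / ‖(n : ℂ) + 2‖ ≤ ‖w‖ ^ (n + 2) / 2 := by
          apply div_le_div_of_nonneg_left (by positivity) (by norm_num) h2
      _ ≤ ‖w‖ ^ 2 * (1 / 2) ^ n / 2 := by linarith
      _ = ‖w‖ ^ 2 / 2 * (1 / 2) ^ n := by ring
  have hgs : Summable fun n : ℕ => ‖w‖ ^ 2 / 2 * (1 / 2 : ℝ) ^ n :=
    (summable_geometric_of_lt_one (by norm_num) (by norm_num)).mul_left _
  have hns : Summable fun n : ℕ => ‖w ^ (n + 2) / ((n : ℂ) + 2)‖ :=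
    Summable.of_nonneg_of_le (fun n => norm_nonneg _) hterm hgs
  calc ‖hlog w‖ = ‖∑' n : ℕ, w ^ (n + 2) / ((n : ℂ) + 2)‖ := by rw [h.tsum_eq]
    _ ≤ ∑' n : ℕ, ‖w ^ (n + 2) / ((n : ℂ) + 2)‖ := norm_tsum_le_tsum_norm hns
    _ ≤ ∑' n : ℕ, ‖w‖ ^ 2 / 2 * (1 / 2 : ℝ) ^ n := Summable.tsum_le_tsum hterm hns hgs
    _ = ‖w‖ ^ 2 / 2 * (1 - 1 / 2)⁻¹ := by
        rw [tsum_mul_left, tsum_geometric_of_lt_one (by norm_num) (by norm_num)]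
    _ = ‖w‖ ^ 2 := by norm_num

lemma exp_hlog {k : ℝ} {w : ℂ} (hw : ‖w‖ < 1) :
    Complex.exp ((k : ℂ) * hlog w) =
      Complex.exp (-((k : ℂ) * w)) * (1 - w) ^ (-(k : ℂ)) := by
  have h1 : (1 : ℂ) - w ≠ 0 := by
    intro h
    rw [sub_eq_zero] at h
    rw [← h] at hw
    simp at hw
  rw [Complex.cpow_def_of_ne_zero h1, ← Complex.exp_add]
  congr 1
  simp only [hlog]
  ring

/-- Taylor coefficients of `log Ψ`. -/
noncomputable def coeff (k β γ : ℝ) (α : ℕ → ℝ) (n : ℕ) : ℂ :=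
  if n = 0 then 0
  else if n = 1 then (k : ℂ) * (β : ℂ)
  else if n = 2 then (k : ℂ) * (γ : ℂ) / 2 + (k : ℂ) * ((∑' l, α l ^ 2 : ℝ) : ℂ) / 2
  else (k : ℂ) * ((∑' l, α l ^ n : ℝ) : ℂ) / (n : ℂ)

variable {k β γ : ℝ} {α : ℕ → ℝ}

lemma summable_khlog (hs : Summable fun j => α j ^ 2) {z : ℂ}
    (hz : ∀ l, ‖(α l : ℂ) * z‖ ≤ 1 / 2) :
    Summable fun l => (k : ℂ) * hlog ((α l : ℂ) * z) := by
  apply Summable.of_norm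
  refine Summable.of_nonneg_of_le (fun l => norm_nonneg _) (fun l => ?_)
    (hs.mul_left (|k| * ‖z‖ ^ 2))
  rw [norm_mul, Complex.norm_real, Real.norm_eq_abs]
  calc |k| * ‖hlog ((α l : ℂ) * z)‖ ≤ |k| * ‖(α l : ℂ) * z‖ ^ 2 :=
        mul_le_mul_of_nonneg_left (norm_hlog_le (hz l)) (abs_nonneg _)
    _ = |k| * ‖z‖ ^ 2 * α l ^ 2 := by
        rw [norm_mul, Complex.norm_real, Real.norm_eq_abs, mul_pow, _root_.sq_abs]
        ring

lemma psi_eq_exp (hs : Summable fun j => α j ^ 2) {z : ℂ}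
    (hz : ∀ l, ‖(α l : ℂ) * z‖ ≤ 1 / 2) :
    Psi k α β γ z = Complex.exp ((k : ℂ) * (β : ℂ) * z + (k : ℂ) * (γ : ℂ) * z ^ 2 / 2
      + ∑' l, (k : ℂ) * hlog ((α l : ℂ) * z)) := by
  have hsum := summable_khlog (k := k) hs hz
  have hprod := hsum.hasSum.cexp
  have hprod2 : HasProd
      (fun l => Complex.exp (-((k : ℂ) * (α l : ℂ) * z)) * (1 - (α l : ℂ) * z) ^ (-(k : ℂ)))
      (Complex.exp (∑' l, (k : ℂ) * hlog ((α l : ℂ) * z))) := by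
    convert hprod using 2 with l
    rw [Function.comp_apply, exp_hlog (lt_of_le_of_lt (hz l) (by norm_num))]
    rw [mul_assoc]
  rw [Psi, hprod2.tprod_eq, ← Complex.exp_add]

lemma hasSum_coeff (hs : Summable fun j => α j ^ 2) {B : ℝ} (hB : ∀ j, |α j| ≤ B) {z : ℂ}
    (hz : ∀ l, ‖(α l : ℂ) * z‖ ≤ 1 / 2) :
    HasSum (fun n => coeff k β γ α n * z ^ n)
      ((k : ℂ) * (β : ℂ) * z + (k : ℂ) * (γ : ℂ) * z ^ 2 / 2
        + ∑' l, (k : ℂ) * hlog ((α l : ℂ) * z)) := by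
  set F : ℕ × ℕ → ℂ :=
    fun p => (k : ℂ) * (((α p.1 : ℂ) * z) ^ (p.2 + 2) / ((p.2 : ℂ) + 2)) with hFdef
  set P : ℕ → ℂ := fun m => ((∑' l, α l ^ m : ℝ) : ℂ) with hPdef
  -- norm-summability over the product
  have hFnorm : Summable fun p : ℕ × ℕ => ‖F p‖ := by
    refine Summable.of_nonneg_of_le (fun p => norm_nonneg _) (fun p => ?_)
      ((Summable.mul_of_nonneg (f := fun l => |k| * ‖z‖ ^ 2 * α l ^ 2)
        (g := fun n : ℕ => (1 / 2 : ℝ) ^ n)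
        (hs.mul_left _) (summable_geometric_of_lt_one (by norm_num) (by norm_num))
        (fun l => by positivity) (fun n => by positivity)))
    obtain ⟨l, n⟩ := p
    have hgoal : ‖F (l, n)‖ = |k| * (‖(α l : ℂ) * z‖ ^ (n + 2) / ‖(n : ℂ) + 2‖) := by
      simp only [hFdef]
      rw [norm_mul, norm_div, norm_pow, Complex.norm_real, Real.norm_eq_abs]
    rw [hgoal]
    have h2 : (1 : ℝ) ≤ ‖(n : ℂ) + 2‖ := by
      have : ((n : ℂ) + 2) = ((n + 2 : ℕ) : ℂ) := by push_cast; ring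
      rw [this, Complex.norm_natCast]
      exact_mod_cast Nat.le_add_left 1 (n + 1)
    have hwn : ‖(α l : ℂ) * z‖ ^ (n + 2) ≤ (|α l| * ‖z‖) ^ 2 * (1 / 2) ^ n := by
      have he : ‖(α l : ℂ) * z‖ ^ (n + 2) = ‖(α l : ℂ) * z‖ ^ 2 * ‖(α l : ℂ) * z‖ ^ n := by
        ring
      rw [he]
      have h1 : ‖(α l : ℂ) * z‖ ^ 2 = (|α l| * ‖z‖) ^ 2 := by
        rw [norm_mul, Complex.norm_real, Real.norm_eq_abs]
      rw [h1]
      refine mul_le_mul_of_nonneg_left ?_ (by positivity)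
      exact pow_le_pow_left₀ (norm_nonneg _) (hz l) n
    calc |k| * (‖(α l : ℂ) * z‖ ^ (n + 2) / ‖(n : ℂ) + 2‖)
        ≤ |k| * ((|α l| * ‖z‖) ^ 2 * (1 / 2) ^ n) := by
          refine mul_le_mul_of_nonneg_left ?_ (abs_nonneg _)
          refine (div_le_self (by positivity) h2).trans hwn
      _ = |k| * ‖z‖ ^ 2 * α l ^ 2 * (1 / 2) ^ n := by
          rw [mul_pow, _root_.sq_abs]
          ring
  have hF : Summable F := Summable.of_norm hFnorm
  -- fiberwise in `l`
  have hfib_l : ∀ l, HasSum (fun n => F (l, n)) ((k : ℂ) * hlog ((α l : ℂ) * z)) := by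
    intro l
    exact (hasSum_hlog (lt_of_le_of_lt (hz l) (by norm_num))).mul_left _
  have hG : HasSum (fun l => (k : ℂ) * hlog ((α l : ℂ) * z)) (∑' p, F p) :=
    hF.hasSum.prod_fiberwise hfib_l
  -- fiberwise in `n`
  have hfib_n : ∀ n : ℕ, HasSum (fun l => F (l, n))
      ((k : ℂ) * z ^ (n + 2) / ((n : ℂ) + 2) * P (n + 2)) := by
    intro n
    have hre : HasSum (fun l => (α l : ℂ) ^ (n + 2)) (P (n + 2)) := by
      have hr : HasSum (fun l => α l ^ (n + 2)) (∑' l, α l ^ (n + 2)) :=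
        (summable_pow hs hB (by omega)).hasSum
      have h2 := Complex.ofRealCLM.hasSum hr
      simp only [Complex.ofRealCLM_apply] at h2
      convert h2 using 2 with l
      push_cast
      ring
    have heq : (fun l => F (l, n)) =
        fun l => ((k : ℂ) * z ^ (n + 2) / ((n : ℂ) + 2)) * (α l : ℂ) ^ (n + 2) := by
      funext l
      simp only [hFdef]
      rw [mul_pow]
      ring
    have := hre.mul_left ((k : ℂ) * z ^ (n + 2) / ((n : ℂ) + 2))
    rwa [← heq] at this
  have hswap : Summable fun p : ℕ × ℕ => F p.swap := hF.prod_symm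
  have htsum_swap : (∑' p : ℕ × ℕ, F p.swap) = ∑' p, F p := by
    have := (Equiv.prodComm ℕ ℕ).tsum_eq F
    simpa [Equiv.prodComm] using this
  have hN : HasSum (fun n : ℕ => (k : ℂ) * z ^ (n + 2) / ((n : ℂ) + 2) * P (n + 2))
      (∑' p, F p) := by
    have := HasSum.prod_fiberwise (f := fun p : ℕ × ℕ => F p.swap)
      (g := fun n : ℕ => (k : ℂ) * z ^ (n + 2) / ((n : ℂ) + 2) * P (n + 2))
      hswap.hasSum (fun n => hfib_n n)
    rwa [htsum_swap] at this
  have hA : (∑' p, F p) = ∑' l, (k : ℂ) * hlog ((α l : ℂ) * z) := hG.tsum_eq.symm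
  rw [hA] at hN
  -- add the `γ` term
  have hite : HasSum (fun n : ℕ => if n = 0 then (k : ℂ) * (γ : ℂ) * z ^ 2 / 2 else 0)
      ((k : ℂ) * (γ : ℂ) * z ^ 2 / 2) := hasSum_ite_eq 0 _
  have hsum2 := hN.add hite
  have hshift : HasSum (fun n : ℕ => coeff k β γ α (n + 2) * z ^ (n + 2))
      ((∑' l, (k : ℂ) * hlog ((α l : ℂ) * z)) + (k : ℂ) * (γ : ℂ) * z ^ 2 / 2) := by
    convert hsum2 using 2 with n
    rcases n with _ | m
    · simp only [coeff]
      norm_num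
      ring
    · simp only [coeff]
      have h1 : m + 1 + 2 ≠ 0 := by omega
      have h2 : m + 1 + 2 ≠ 1 := by omega
      have h3 : m + 1 + 2 ≠ 2 := by omega
      rw [if_neg h1, if_neg h2, if_neg h3]
      simp only [hPdef]
      push_cast
      ring
  refine (hasSum_nat_add_iff' 2).mp ?_
  convert hshift using 1
  · rfl
  simp only [coeff, Finset.sum_range_succ]
  norm_num
  ring

lemma coeff_bound_exists {e : ℕ → ℂ} {t : ℝ} (ht : 0 < t)
    (hsum : Summable fun n => e n * (t : ℂ) ^ n) :
    ∃ C : ℝ, 0 ≤ C ∧ ∀ n, ‖e n‖ * t ^ n ≤ C := by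
  have hnorm : ∀ n, ‖e n * (t : ℂ) ^ n‖ = ‖e n‖ * t ^ n := by
    intro n
    rw [norm_mul, norm_pow, Complex.norm_real, Real.norm_eq_abs, abs_of_pos ht]
  have h1 : Tendsto (fun n => ‖e n * (t : ℂ) ^ n‖) atTop (𝓝 0) := by
    simpa using hsum.tendsto_atTop_zero.norm
  obtain ⟨C, hC⟩ := h1.bddAbove_range
  rw [mem_upperBounds] at hC
  have hC' : ∀ n, ‖e n‖ * t ^ n ≤ C := by
    intro n
    rw [← hnorm n]
    exact hC _ ⟨n, rfl⟩
  exact ⟨C, le_trans (by positivity) (hC' 0), hC'⟩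

lemma tsum_shift_bound {e : ℕ → ℂ} {ρ C : ℝ} (hρ : 0 < ρ) (hC0 : 0 ≤ C)
    (hC : ∀ n, ‖e n‖ * ρ ^ n ≤ C) (m : ℕ) {z : ℂ} (hz : ‖z‖ ≤ ρ / 4) :
    ‖∑' n : ℕ, e (n + 1 + m) * z ^ (n + 1)‖ ≤ C / ρ ^ (m + 1) * 2 * ‖z‖ := by
  have hterm : ∀ n : ℕ, ‖e (n + 1 + m) * z ^ (n + 1)‖ ≤
      C / ρ ^ (m + 1) * ‖z‖ * (1 / 4) ^ n := by
    intro n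
    rw [norm_mul, norm_pow]
    have he : ‖e (n + 1 + m)‖ ≤ C / ρ ^ (n + 1 + m) := by
      rw [le_div_iff₀ (by positivity)]
      exact hC _
    have hzp : ‖z‖ ^ (n + 1) ≤ ‖z‖ * (ρ / 4) ^ n := by
      have : ‖z‖ ^ (n + 1) = ‖z‖ * ‖z‖ ^ n := by ring
      rw [this]
      exact mul_le_mul_of_nonneg_left (pow_le_pow_left₀ (norm_nonneg _) hz n) (norm_nonneg _)
    calc ‖e (n + 1 + m)‖ * ‖z‖ ^ (n + 1)
        ≤ C / ρ ^ (n + 1 + m) * (‖z‖ * (ρ / 4) ^ n) := by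
          exact mul_le_mul he hzp (by positivity) (by positivity)
      _ = C / ρ ^ (m + 1) * ‖z‖ * (1 / 4) ^ n := by
          rw [div_pow, pow_add, pow_add]
          field_simp
          rw [mul_assoc _ ((4 : ℝ) ^ n), ← mul_pow, show (4 : ℝ) * (1 / 4) = 1 by norm_num,
            one_pow, mul_one]
          ring
  have hgs : Summable fun n : ℕ => C / ρ ^ (m + 1) * ‖z‖ * (1 / 4 : ℝ) ^ n :=
    (summable_geometric_of_lt_one (by norm_num) (by norm_num)).mul_left _
  have hns : Summable fun n : ℕ => ‖e (n + 1 + m) * z ^ (n + 1)‖ :=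
    Summable.of_nonneg_of_le (fun n => norm_nonneg _) hterm hgs
  calc ‖∑' n : ℕ, e (n + 1 + m) * z ^ (n + 1)‖
      ≤ ∑' n : ℕ, ‖e (n + 1 + m) * z ^ (n + 1)‖ := norm_tsum_le_tsum_norm hns
    _ ≤ ∑' n : ℕ, C / ρ ^ (m + 1) * ‖z‖ * (1 / 4 : ℝ) ^ n :=
        Summable.tsum_le_tsum hterm hns hgs
    _ = C / ρ ^ (m + 1) * ‖z‖ * (1 - 1 / 4)⁻¹ := by
        rw [tsum_mul_left, tsum_geometric_of_lt_one (by norm_num) (by norm_num)]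
    _ ≤ C / ρ ^ (m + 1) * 2 * ‖z‖ := by
        have h1 : (0:ℝ) ≤ C / ρ ^ (m + 1) * ‖z‖ := by positivity
        nlinarith [norm_nonneg z, div_nonneg hC0 (le_of_lt (pow_pos hρ (m+1)))]

set_option maxHeartbeats 2000000 in
lemma coeff_zero_of_vanish {e : ℕ → ℂ} {ρ C : ℝ} (hρ : 0 < ρ) (hC0 : 0 ≤ C)
    (hC : ∀ n, ‖e n‖ * ρ ^ n ≤ C)
    (hvan : ∀ z : ℂ, ‖z‖ < ρ → HasSum (fun n => e n * z ^ n) 0) :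
    ∀ n, e n = 0 := by
  intro m
  induction m using Nat.strong_induction_on with
  | _ m IH =>
  have key : ∀ t : ℝ, 0 < t → t ≤ ρ / 4 → ‖e m‖ ≤ C / ρ ^ (m + 1) * 2 * t := by
    intro t ht ht4
    set z : ℂ := (t : ℂ) with hzdef
    have hzn : ‖z‖ = t := by rw [hzdef, Complex.norm_real, Real.norm_eq_abs, abs_of_pos ht]
    have hz0 : z ≠ 0 := by
      simp only [hzdef, ne_eq, Complex.ofReal_eq_zero]
      exact ht.ne'
    have hzρ : ‖z‖ < ρ := by rw [hzn]; linarith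
    have hsummable := (hvan z hzρ).summable
    have htsum0 : ∑' n, e n * z ^ n = 0 := (hvan z hzρ).tsum_eq
    have hsplit := Summable.sum_add_tsum_nat_add (f := fun n => e n * z ^ n) m hsummable
    have hhead : ∑ i ∈ Finset.range m, e i * z ^ i = 0 := by
      refine Finset.sum_eq_zero fun i hi => ?_
      rw [IH i (Finset.mem_range.mp hi), zero_mul]
    rw [hhead, zero_add, htsum0] at hsplit
    -- hsplit : ∑' n, e (n + m) * z ^ (n + m) = 0
    have h1 : Summable fun n => e (n + m) * z ^ (n + m) :=
      (summable_nat_add_iff m).mpr hsummable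
    have h2 : Summable fun n => e (n + m) * z ^ n := by
      have h3 := h1.mul_left ((z ^ m)⁻¹)
      refine h3.congr fun n => ?_
      rw [pow_add]
      field_simp
    have htail0 : ∑' n, e (n + m) * z ^ n = 0 := by
      have h4 : ∑' n, e (n + m) * z ^ (n + m) = z ^ m * ∑' n, e (n + m) * z ^ n := by
        rw [← tsum_mul_left]
        refine tsum_congr fun n => ?_
        rw [pow_add]
        ring
      rw [h4] at hsplit
      rcases mul_eq_zero.mp hsplit with h | h
      · exact absurd h (pow_ne_zero m hz0)
      · exact h
    have hsplit2 := Summable.sum_add_tsum_nat_add (f := fun n => e (n + m) * z ^ n) 1 h2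
    rw [htail0] at hsplit2
    have hhead1 : ∑ i ∈ Finset.range 1, e (i + m) * z ^ i = e m := by
      simp
    rw [hhead1] at hsplit2
    -- hsplit2 : e m + ∑' n, e (n + 1 + m) * z ^ (n + 1) = 0
    have hem : e m = -∑' n, e (n + 1 + m) * z ^ (n + 1) :=
      eq_neg_of_add_eq_zero_left hsplit2
    calc ‖e m‖ = ‖∑' n, e (n + 1 + m) * z ^ (n + 1)‖ := by rw [hem, norm_neg]
      _ ≤ C / ρ ^ (m + 1) * 2 * ‖z‖ := tsum_shift_bound hρ hC0 hC m (by rw [hzn]; exact ht4)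
      _ = C / ρ ^ (m + 1) * 2 * t := by rw [hzn]
  -- conclude `e m = 0`
  by_contra hne
  have hpos : 0 < ‖e m‖ := norm_pos_iff.mpr hne
  set K := C / ρ ^ (m + 1) * 2 with hK
  have hK0 : 0 ≤ K := by positivity
  set t := min (ρ / 4) (‖e m‖ / (2 * (K + 1))) with ht
  have ht0 : 0 < t := lt_min (by positivity) (by positivity)
  have ht4 : t ≤ ρ / 4 := min_le_left _ _
  have ht2 : t ≤ ‖e m‖ / (2 * (K + 1)) := min_le_right _ _
  have := key t ht0 ht4
  have hKt : K * t ≤ K * (‖e m‖ / (2 * (K + 1))) := mul_le_mul_of_nonneg_left ht2 hK0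
  have hfrac : K * (‖e m‖ / (2 * (K + 1))) ≤ ‖e m‖ / 2 := by
    rw [mul_div_assoc', div_le_div_iff₀ (by positivity) (by norm_num : (0:ℝ) < 2)]
    nlinarith
  linarith

end Analytic

end PsiAux

open PsiAux in
set_option maxHeartbeats 1000000 in
/-- For `ω₁, ω₂ ∈ Ω`, if `Ψ(ω₁;·) = Ψ(ω₂;·)` on a neighborhood of `0`,
then `ω₁ = ω₂`. -/
theorem psi_injective (k : ℝ) (hk : 0 < k)
    (α α' : ℕ → ℝ) (β β' γ γ' : ℝ)
    (hdec : ∀ i, VKle (α (i + 1)) (α i)) (hdec' : ∀ i, VKle (α' (i + 1)) (α' i))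
    (hsum : Summable fun i => (α i) ^ 2) (hsum' : Summable fun i => (α' i) ^ 2)
    (hγ : 0 ≤ γ) (hγ' : 0 ≤ γ')
    (U : Set ℂ) (hU : U ∈ 𝓝 (0 : ℂ))
    (heq : ∀ z ∈ U, Psi k α β γ z = Psi k α' β' γ' z) :
    (∀ i, α i = α' i) ∧ β = β' ∧ γ = γ' := by
  have hk0 : (k : ℂ) ≠ 0 := by exact_mod_cast hk.ne'
  -- a uniform bound on the sequences
  set B : ℝ := Real.sqrt (∑' i, α i ^ 2) + Real.sqrt (∑' i, α' i ^ 2) + 1 with hBdef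
  have habs : ∀ (c : ℕ → ℝ), (Summable fun i => c i ^ 2) →
      (∀ l, |c l| ≤ Real.sqrt (∑' i, c i ^ 2)) := by
    intro c hc l
    have h1 : c l ^ 2 ≤ ∑' i, c i ^ 2 := Summable.le_tsum hc l fun j _ => sq_nonneg _
    calc |c l| = Real.sqrt (c l ^ 2) := (Real.sqrt_sq_eq_abs _).symm
      _ ≤ Real.sqrt (∑' i, c i ^ 2) := Real.sqrt_le_sqrt h1
  have hs1 : (0:ℝ) ≤ Real.sqrt (∑' i, α i ^ 2) := Real.sqrt_nonneg _
  have hs2 : (0:ℝ) ≤ Real.sqrt (∑' i, α' i ^ 2) := Real.sqrt_nonneg _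
  have hB0 : 0 < B := by rw [hBdef]; linarith
  have hBα : ∀ l, |α l| ≤ B := fun l => by
    have := habs α hsum l
    rw [hBdef]; linarith
  have hBα' : ∀ l, |α' l| ≤ B := fun l => by
    have := habs α' hsum' l
    rw [hBdef]; linarith
  -- radius
  obtain ⟨ε, hε0, hball⟩ := Metric.mem_nhds_iff.mp hU
  set ρ₁ : ℝ := min (1 / (2 * B)) ε with hρ₁def
  have hρ₁0 : 0 < ρ₁ := lt_min (by positivity) hε0
  have hzsmall : ∀ z : ℂ, ‖z‖ < ρ₁ → ∀ l, ‖(α l : ℂ) * z‖ ≤ 1 / 2 := by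
    intro z hz l
    rw [norm_mul, Complex.norm_real, Real.norm_eq_abs]
    calc |α l| * ‖z‖ ≤ B * (1 / (2 * B)) := by
          refine mul_le_mul (hBα l) ?_ (norm_nonneg _) hB0.le
          exact le_of_lt (lt_of_lt_of_le hz (min_le_left _ _))
      _ = 1 / 2 := by
          field_simp
  have hzsmall' : ∀ z : ℂ, ‖z‖ < ρ₁ → ∀ l, ‖(α' l : ℂ) * z‖ ≤ 1 / 2 := by
    intro z hz l
    rw [norm_mul, Complex.norm_real, Real.norm_eq_abs]
    calc |α' l| * ‖z‖ ≤ B * (1 / (2 * B)) := by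
          refine mul_le_mul (hBα' l) ?_ (norm_nonneg _) hB0.le
          exact le_of_lt (lt_of_lt_of_le hz (min_le_left _ _))
      _ = 1 / 2 := by
          field_simp
  -- the difference of the two coefficient sequences
  set e : ℕ → ℂ := fun n => coeff k β γ α n - coeff k β' γ' α' n with hedef
  set D : ℂ → ℂ := fun z =>
    ((k : ℂ) * (β : ℂ) * z + (k : ℂ) * (γ : ℂ) * z ^ 2 / 2
      + ∑' l, (k : ℂ) * hlog ((α l : ℂ) * z))
    - ((k : ℂ) * (β' : ℂ) * z + (k : ℂ) * (γ' : ℂ) * z ^ 2 / 2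
      + ∑' l, (k : ℂ) * hlog ((α' l : ℂ) * z)) with hDdef
  have hE : ∀ z : ℂ, ‖z‖ < ρ₁ → HasSum (fun n => e n * z ^ n) (D z) := by
    intro z hz
    have h1 := hasSum_coeff (k := k) (β := β) (γ := γ) hsum hBα (hzsmall z hz)
    have h2 := hasSum_coeff (k := k) (β := β') (γ := γ') hsum' hBα' (hzsmall' z hz)
    have := h1.sub h2
    refine this.congr_fun fun n => ?_
    rw [hedef]
    ring
  have hexp : ∀ z : ℂ, ‖z‖ < ρ₁ → Complex.exp (D z) = 1 := by
    intro z hz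
    have hzU : z ∈ U := hball (by simpa [Metric.mem_ball, dist_eq_norm] using hz.trans_le (min_le_right _ _))
    have hP1 := psi_eq_exp (k := k) (β := β) (γ := γ) hsum (hzsmall z hz)
    have hP2 := psi_eq_exp (k := k) (β := β') (γ := γ') hsum' (hzsmall' z hz)
    have hPsi := heq z hzU
    rw [hP1, hP2] at hPsi
    rw [hDdef]
    rw [Complex.exp_sub, hPsi, div_self (Complex.exp_ne_zero _)]
  -- coefficient bound at radius ρ₁/2
  have hz₀ : ‖((ρ₁ / 2 : ℝ) : ℂ)‖ < ρ₁ := by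
    rw [Complex.norm_real, Real.norm_eq_abs, abs_of_pos (by positivity)]
    linarith
  obtain ⟨C, hC0, hC⟩ := coeff_bound_exists (by positivity : (0:ℝ) < ρ₁ / 2)
    (hE _ hz₀).summable
  have he0 : e 0 = 0 := by
    rw [hedef]
    simp [coeff]
  -- D is small near 0
  set K₀ : ℝ := C / (ρ₁ / 2) ^ (0 + 1) * 2 with hK₀def
  have hK₀0 : 0 ≤ K₀ := by positivity
  have hDsmall : ∀ z : ℂ, ‖z‖ < ρ₁ → ‖z‖ ≤ (ρ₁ / 2) / 4 → ‖D z‖ ≤ K₀ * ‖z‖ := by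
    intro z hz hz4
    have hsm := (hE z hz).summable
    have htsum : D z = ∑' n, e n * z ^ n := (hE z hz).tsum_eq.symm
    have hsplit := Summable.sum_add_tsum_nat_add (f := fun n => e n * z ^ n) 1 hsm
    have hhead : ∑ i ∈ Finset.range 1, e i * z ^ i = 0 := by
      simp [he0]
    rw [hhead, zero_add] at hsplit
    have hb := tsum_shift_bound (by positivity : (0:ℝ) < ρ₁ / 2) hC0 hC 0 hz4
    calc ‖D z‖ = ‖∑' n, e (n + 1 + 0) * z ^ (n + 1)‖ := by
          rw [htsum, ← hsplit]
      _ ≤ C / (ρ₁ / 2) ^ (0 + 1) * 2 * ‖z‖ := hb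
      _ = K₀ * ‖z‖ := by rw [hK₀def]
  -- D vanishes near 0
  set δ : ℝ := min ((ρ₁ / 2) / 4) (Real.pi / (K₀ + 1)) with hδdef
  have hδ0 : 0 < δ := lt_min (by positivity) (by positivity)
  have hδρ : δ < ρ₁ := lt_of_le_of_lt (min_le_left _ _) (by linarith)
  have hDzero : ∀ z : ℂ, ‖z‖ < δ → D z = 0 := by
    intro z hz
    have hzρ : ‖z‖ < ρ₁ := hz.trans hδρ
    obtain ⟨mz, hmz⟩ := Complex.exp_eq_one_iff.mp (hexp z hzρ)
    have hDn : ‖D z‖ ≤ K₀ * ‖z‖ :=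
      hDsmall z hzρ (le_of_lt (hz.trans_le (min_le_left _ _)))
    have hlt : ‖D z‖ < Real.pi := by
      have h1 : K₀ * ‖z‖ ≤ K₀ * (Real.pi / (K₀ + 1)) := by
        refine mul_le_mul_of_nonneg_left ?_ hK₀0
        exact le_of_lt (hz.trans_le (min_le_right _ _))
      have h2 : K₀ * (Real.pi / (K₀ + 1)) < Real.pi := by
        rw [mul_div_assoc', div_lt_iff₀ (by positivity)]
        nlinarith [Real.pi_pos]
      linarith
    by_contra hne
    have hmz0 : mz ≠ 0 := by
      intro h
      rw [h] at hmz
      simp at hmz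
      exact hne (by rw [hmz])
    have : (2 : ℝ) * Real.pi ≤ ‖D z‖ := by
      rw [hmz]
      rw [norm_mul]
      have h1 : ‖(mz : ℂ)‖ = |(mz : ℝ)| := by
        rw [← Complex.ofReal_intCast, Complex.norm_real, Real.norm_eq_abs]
      have h2 : ‖(2 * Real.pi * Complex.I : ℂ)‖ = 2 * Real.pi := by
        rw [norm_mul, Complex.norm_I, mul_one, norm_mul, Complex.norm_real]
        simp [Real.pi_nonneg, abs_of_nonneg Real.pi_nonneg]
      rw [h1, h2]
      have h3 : (1 : ℝ) ≤ |(mz : ℝ)| := by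
        rw [← Int.cast_abs]
        exact_mod_cast Int.one_le_abs hmz0
      nlinarith [Real.pi_pos]
    nlinarith [Real.pi_pos]
  -- all coefficients vanish
  have hvan : ∀ z : ℂ, ‖z‖ < δ → HasSum (fun n => e n * z ^ n) 0 := by
    intro z hz
    have := hE z (hz.trans hδρ)
    rwa [hDzero z hz] at this
  have hCδ : ∀ n, ‖e n‖ * δ ^ n ≤ C := by
    intro n
    refine le_trans ?_ (hC n)
    refine mul_le_mul_of_nonneg_left (pow_le_pow_left₀ hδ0.le ?_ n) (norm_nonneg _)
    calc δ ≤ (ρ₁ / 2) / 4 := min_le_left _ _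
      _ ≤ ρ₁ / 2 := by linarith
  have he : ∀ n, e n = 0 := coeff_zero_of_vanish hδ0 hC0 hCδ hvan
  -- extract the conclusions
  have hcoeff : ∀ n, coeff k β γ α n = coeff k β' γ' α' n := by
    intro n
    have := he n
    rw [hedef] at this
    exact sub_eq_zero.mp this
  -- power sums of order ≥ 3 agree
  have hP : ∀ m, 3 ≤ m → ∑' l, α l ^ m = ∑' l, α' l ^ m := by
    intro m hm
    have h := hcoeff m
    have hm0 : m ≠ 0 := by omega
    have hm1 : m ≠ 1 := by omega
    have hm2 : m ≠ 2 := by omega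
    rw [coeff, coeff, if_neg hm0, if_neg hm1, if_neg hm2, if_neg hm0, if_neg hm1,
      if_neg hm2] at h
    have hmc : ((m : ℕ) : ℂ) ≠ 0 := Nat.cast_ne_zero.mpr hm0
    rw [div_eq_div_iff hmc hmc] at h
    have h2 := mul_right_cancel₀ hmc h
    have h3 := mul_left_cancel₀ hk0 h2
    exact_mod_cast h3
  have hα : ∀ i, α i = α' i := seq_eq hdec hdec' hsum hsum' hP
  refine ⟨hα, ?_, ?_⟩
  · -- β = β'
    have h := hcoeff 1
    simp only [coeff, if_neg (by norm_num : (1:ℕ) ≠ 0), if_pos rfl] at h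
    exact_mod_cast mul_left_cancel₀ hk0 h
  · -- γ = γ'
    have hP2 : (∑' l, α l ^ 2) = ∑' l, α' l ^ 2 := tsum_congr fun l => by rw [hα l]
    have h := hcoeff 2
    simp only [coeff, if_neg (by norm_num : (2:ℕ) ≠ 0), if_neg (by norm_num : (2:ℕ) ≠ 1),
      if_pos rfl, if_true] at h
    rw [hP2] at h
    have h2 : (k : ℂ) * (γ : ℂ) = (k : ℂ) * (γ' : ℂ) := by linear_combination 2 * h
    exact_mod_cast mul_left_cancel₀ hk0 h2
end

section
/- Fix k > 0 and let (λ(n))_{n∈ℕ} be a Vershik–Kerov sequence with VK parameters ω = (α, β, γ). Then there exists ε > 0 such that the functions Φ_n(z) := ∏_{j=1}^n (1 − (λ(n)_j/n) z)^{−k} converge, as n → ∞, to Ψ(ω; z) uniformly on the closed disc {z ∈ ℂ : |z| ≤ ε}. -/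
open Filter Topology

open Metric

/-- auxiliary remainder function: `vkG w = -log(1-w) - w - w²/2`. -/
noncomputable def vkG (w : ℂ) : ℂ := -Complex.log (1 - w) - w - w ^ 2 / 2

lemma vkG_zero : vkG 0 = 0 := by simp [vkG]

lemma vkG_hasDerivAt {w : ℂ} (hw : ‖w‖ < 1) :
    HasDerivAt vkG (w ^ 2 / (1 - w)) w := by
  have h1 : (1 : ℂ) - w ∈ Complex.slitPlane := by
    simpa [sub_eq_add_neg] using Complex.mem_slitPlane_of_norm_lt_one (z := -w) (by simpa)
  have hne : (1 : ℂ) - w ≠ 0 := Complex.slitPlane_ne_zero h1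
  have hd : HasDerivAt (fun w : ℂ => Complex.log (1 - w)) (((1:ℂ)-w)⁻¹ * (-1)) w :=
    (Complex.hasDerivAt_log h1).comp w (((hasDerivAt_id w).const_sub 1))
  have hd2 : HasDerivAt vkG (-(((1:ℂ)-w)⁻¹ * (-1)) - 1 - 2 * w ^ 1 / 2) w := by
    exact ((hd.neg.sub (hasDerivAt_id w)).sub ((hasDerivAt_pow 2 w).div_const 2))
  convert hd2 using 1
  field_simp
  ring

/-- key MVT bound: on `closedBall 0 r` with `r ≤ 1/2`, `vkG` is `2r²`-Lipschitz. -/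
lemma vkG_sub_le {r : ℝ} (hr : r ≤ 1/2) {w₁ w₂ : ℂ} (h1 : ‖w₁‖ ≤ r) (h2 : ‖w₂‖ ≤ r) :
    ‖vkG w₁ - vkG w₂‖ ≤ 2 * r ^ 2 * ‖w₁ - w₂‖ := by
  have hr0 : 0 ≤ r := le_trans (norm_nonneg _) h1
  have key : ∀ x ∈ closedBall (0:ℂ) r,
      HasDerivWithinAt vkG (x ^ 2 / (1 - x)) (closedBall 0 r) x := by
    intro x hx
    have : ‖x‖ < 1 := by
      rw [mem_closedBall, dist_zero_right] at hx; linarith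
    exact (vkG_hasDerivAt this).hasDerivWithinAt
  have bound : ∀ x ∈ closedBall (0:ℂ) r, ‖x ^ 2 / (1 - x)‖ ≤ 2 * r ^ 2 := by
    intro x hx
    rw [mem_closedBall, dist_zero_right] at hx
    have hx1 : ‖x‖ ≤ 1/2 := le_trans hx hr
    have h1x : (1:ℝ)/2 ≤ ‖(1:ℂ) - x‖ := by
      have := norm_sub_norm_le (1:ℂ) x
      simp only [norm_one] at this
      linarith
    rw [norm_div, norm_pow]
    rw [div_le_iff₀ (by linarith)]
    calc ‖x‖ ^ 2 ≤ r ^ 2 := by gcongr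
    _ = (2 * r ^ 2) * (1/2) := by ring
    _ ≤ 2 * r ^ 2 * ‖1 - x‖ := by
        have : (0:ℝ) ≤ 2 * r ^ 2 := by positivity
        gcongr
  exact (convex_closedBall (0:ℂ) r).norm_image_sub_le_of_norm_hasDerivWithin_le
    key bound (by simpa [mem_closedBall, dist_zero_right] using h2)
    (by simpa [mem_closedBall, dist_zero_right] using h1)

lemma vkG_norm_le {w : ℂ} (hw : ‖w‖ ≤ 1/2) : ‖vkG w‖ ≤ 2 * ‖w‖ ^ 3 := by
  have := vkG_sub_le (r := ‖w‖) hw (w₁ := w) (w₂ := 0) le_rfl (by simp)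
  calc ‖vkG w‖ = ‖vkG w - vkG 0‖ := by rw [vkG_zero, sub_zero]
  _ ≤ 2 * ‖w‖ ^ 2 * ‖w - 0‖ := this
  _ = 2 * ‖w‖ ^ 3 := by rw [sub_zero]; ring

lemma one_sub_cpow {k : ℝ} {w : ℂ} (hw : ‖w‖ < 1) :
    (1 - w) ^ (-(k:ℂ)) = Complex.exp ((k:ℂ) * (w + w^2/2 + vkG w)) := by
  have hne : (1:ℂ) - w ≠ 0 := by
    intro h
    rw [sub_eq_zero] at h
    rw [← h] at hw
    simp at hw
  rw [Complex.cpow_def_of_ne_zero hne]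
  congr 1
  have hlog : Complex.log (1 - w) = -(w + w^2/2 + vkG w) := by unfold vkG; ring
  rw [hlog]; ring

lemma tannery_unif {s : Set ℂ} {u : ℕ → ℕ → ℂ → ℂ} {v : ℕ → ℂ → ℂ} {b : ℕ → ℝ}
    (hb : Summable b) (hb0 : ∀ j, 0 ≤ b j)
    (hu : ∀ n j, ∀ z ∈ s, ‖u n j z‖ ≤ b j) (hv : ∀ j, ∀ z ∈ s, ‖v j z‖ ≤ b j)
    (hconv : ∀ j, TendstoUniformlyOn (fun n => u n j) (v j) atTop s) :
    TendstoUniformlyOn (fun n z => ∑ j ∈ Finset.range n, u n j z)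
      (fun z => ∑' j, v j z) atTop s := by
  have hvsum : ∀ z ∈ s, Summable (fun j => v j z) := fun z hz =>
    Summable.of_norm_bounded hb (fun j => hv j z hz)
  rw [Metric.tendstoUniformlyOn_iff]
  intro ε hε
  have htail : Tendsto (fun J => ∑' j, b (j + J)) atTop (𝓝 0) := by
    have h2 : ∀ J, ∑' j, b (j + J) = (∑' j, b j) - ∑ j ∈ Finset.range J, b j := by
      intro J
      have := (hb.sum_add_tsum_nat_add J).symm
      linarith [this]
    simp_rw [h2]
    have : Tendsto (fun J => (∑' j, b j) - ∑ j ∈ Finset.range J, b j) atTop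
        (𝓝 ((∑' j, b j) - (∑' j, b j))) := tendsto_const_nhds.sub hb.hasSum.tendsto_sum_nat
    simpa using this
  obtain ⟨J, hJ⟩ := (htail.eventually (eventually_lt_nhds (show (0:ℝ) < ε/4 by linarith))).exists
  have hhead : ∀ᶠ n in atTop, ∀ j ∈ Finset.range J, ∀ z ∈ s,
      dist (v j z) (u n j z) < ε / (4 * (J + 1)) := by
    rw [eventually_all_finset]
    intro j _
    have := (hconv j)
    rw [Metric.tendstoUniformlyOn_iff] at this
    exact this _ (by positivity)
  filter_upwards [hhead, eventually_ge_atTop J] with n hn hnJ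
  intro z hz
  rw [dist_eq_norm]
  have hsplit : ∑ j ∈ Finset.range n, u n j z
      = ∑ j ∈ Finset.range J, u n j z + ∑ j ∈ Finset.Ico J n, u n j z := by
    rw [Finset.range_eq_Ico, ← Finset.sum_Ico_consecutive _ (Nat.zero_le J) hnJ,
      ← Finset.range_eq_Ico]
  have hvsplit : ∑' j, v j z
      = ∑ j ∈ Finset.range J, v j z + ∑' j, v (j + J) z :=
    ((hvsum z hz).sum_add_tsum_nat_add J).symm
  have key : (∑' j, v j z) - ∑ j ∈ Finset.range n, u n j z
      = (∑ j ∈ Finset.range J, (v j z - u n j z)) + ((∑' j, v (j + J) z)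
        - ∑ j ∈ Finset.Ico J n, u n j z) := by
    rw [hsplit, hvsplit, Finset.sum_sub_distrib]; ring
  rw [key]
  have h1 : ‖∑ j ∈ Finset.range J, (v j z - u n j z)‖ ≤ J * (ε / (4 * (J + 1))) := by
    calc ‖∑ j ∈ Finset.range J, (v j z - u n j z)‖
        ≤ ∑ j ∈ Finset.range J, ‖v j z - u n j z‖ := norm_sum_le _ _
      _ ≤ ∑ j ∈ Finset.range J, (ε / (4 * (J + 1))) := by
          apply Finset.sum_le_sum
          intro j hj
          have := hn j hj z hz
          rw [dist_eq_norm] at this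
          exact this.le
      _ = J * (ε / (4 * (J + 1))) := by rw [Finset.sum_const, Finset.card_range]; ring
  have h2 : ‖∑' j, v (j + J) z‖ ≤ ∑' j, b (j + J) := by
    have hs1 : Summable (fun j => v (j + J) z) :=
      ((hvsum z hz).comp_injective (add_left_injective J))
    have hs2 : Summable (fun j => b (j + J)) := hb.comp_injective (add_left_injective J)
    calc ‖∑' j, v (j + J) z‖ ≤ ∑' j, ‖v (j + J) z‖ := norm_tsum_le_tsum_norm hs1.norm
      _ ≤ ∑' j, b (j + J) := Summable.tsum_le_tsum (fun j => hv _ z hz) hs1.norm hs2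
  have h3 : ‖∑ j ∈ Finset.Ico J n, u n j z‖ ≤ ∑' j, b (j + J) := by
    have hs2 : Summable (fun j => b (j + J)) := hb.comp_injective (add_left_injective J)
    calc ‖∑ j ∈ Finset.Ico J n, u n j z‖ ≤ ∑ j ∈ Finset.Ico J n, b j := by
          refine le_trans (norm_sum_le _ _) (Finset.sum_le_sum fun j _ => hu n j z hz)
      _ = ∑ j ∈ Finset.range (n - J), b (j + J) := by
          rw [Finset.sum_Ico_eq_sum_range]
          apply Finset.sum_congr rfl; intro j _; rw [Nat.add_comm]
      _ ≤ ∑' j, b (j + J) := Summable.sum_le_tsum _ (fun j _ => hb0 _) hs2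
  have hJ1 : (J : ℝ) * (ε / (4 * (J + 1))) ≤ ε / 4 := by
    have hJpos : (0:ℝ) < (J:ℝ) + 1 := by positivity
    have heq : (J:ℝ) * (ε / (4 * ((J:ℝ) + 1))) = ε/4 * ((J:ℝ)/((J:ℝ)+1)) := by
      field_simp
    rw [heq]
    have h : (J:ℝ)/((J:ℝ)+1) ≤ 1 := by rw [div_le_one hJpos]; linarith
    calc ε/4 * ((J:ℝ)/((J:ℝ)+1)) ≤ ε/4 * 1 := by
          apply mul_le_mul_of_nonneg_left h (by linarith)
      _ = ε/4 := mul_one _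
  calc ‖(∑ j ∈ Finset.range J, (v j z - u n j z)) + ((∑' j, v (j + J) z)
        - ∑ j ∈ Finset.Ico J n, u n j z)‖
      ≤ ‖∑ j ∈ Finset.range J, (v j z - u n j z)‖ + ‖(∑' j, v (j + J) z)
        - ∑ j ∈ Finset.Ico J n, u n j z‖ := norm_add_le _ _
    _ ≤ J * (ε / (4 * (J + 1))) + (‖∑' j, v (j + J) z‖ + ‖∑ j ∈ Finset.Ico J n, u n j z‖) := by
        gcongr; exact norm_sub_le _ _
    _ ≤ ε/4 + (ε/4 + ε/4) := by
        exact add_le_add hJ1 (add_le_add (h2.trans hJ.le) (h3.trans hJ.le))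
    _ < ε := by linarith

lemma exp_unif {s : Set ℂ} {A : ℕ → ℂ → ℂ} {L : ℂ → ℂ} {B : ℝ}
    (hL : ∀ z ∈ s, ‖L z‖ ≤ B)
    (h : TendstoUniformlyOn A L atTop s) :
    TendstoUniformlyOn (fun n z => Complex.exp (A n z)) (fun z => Complex.exp (L z)) atTop s := by
  rw [Metric.tendstoUniformlyOn_iff] at h ⊢
  intro ε hε
  set M := Real.exp B with hM
  have hM0 : 0 < M := Real.exp_pos B
  set δ := min 1 (ε / (2 * M + 1)) with hδdef
  have hδ0 : 0 < δ := lt_min one_pos (by positivity)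
  filter_upwards [h δ hδ0] with n hn z hz
  have hd := hn z hz
  rw [dist_eq_norm] at hd ⊢
  have hdle1 : ‖A n z - L z‖ ≤ 1 := by
    have : ‖L z - A n z‖ ≤ 1 := le_trans hd.le (min_le_left _ _)
    rwa [norm_sub_rev] at this
  have key : Complex.exp (L z) - Complex.exp (A n z)
      = Complex.exp (L z) * (1 - Complex.exp (A n z - L z)) := by
    rw [mul_sub, mul_one, ← Complex.exp_add]; ring_nf
  rw [key, norm_mul]
  have h1 : ‖Complex.exp (L z)‖ ≤ M := by
    rw [Complex.norm_exp]
    exact Real.exp_le_exp.2 (le_trans (Complex.re_le_norm _) (hL z hz))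
  have h2 : ‖1 - Complex.exp (A n z - L z)‖ ≤ 2 * ‖A n z - L z‖ := by
    rw [norm_sub_rev]
    exact Complex.norm_exp_sub_one_le hdle1
  calc ‖Complex.exp (L z)‖ * ‖1 - Complex.exp (A n z - L z)‖
      ≤ M * (2 * ‖A n z - L z‖) := by
        apply mul_le_mul h1 h2 (norm_nonneg _) hM0.le
    _ < ε := by
        have hlt : ‖A n z - L z‖ < ε / (2*M+1) :=
          lt_of_lt_of_le (by rwa [norm_sub_rev] at hd) (min_le_right _ _)
        have h3 : ‖A n z - L z‖ * (2*M+1) < ε := (lt_div_iff₀ (by positivity)).1 hlt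
        nlinarith [norm_nonneg (A n z - L z)]

lemma lin_unif {c : ℕ → ℝ} {c0 Bg : ℝ} {g : ℂ → ℂ} {s : Set ℂ}
    (h : Filter.Tendsto c atTop (𝓝 c0)) (hg : ∀ z ∈ s, ‖g z‖ ≤ Bg) :
    TendstoUniformlyOn (fun n z => (c n : ℂ) * g z) (fun z => (c0:ℂ) * g z) atTop s := by
  rw [Metric.tendstoUniformlyOn_iff]
  intro η hη
  set B' := max Bg 0 with hB'
  have hB'0 : 0 ≤ B' := le_max_right _ _
  have hc : ∀ᶠ n in atTop, |c n - c0| < η / (B' + 1) := by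
    have := Metric.tendsto_atTop.1 h (η / (B' + 1)) (by positivity)
    obtain ⟨N, hN⟩ := this
    filter_upwards [eventually_ge_atTop N] with n hn
    have := hN n hn
    rwa [Real.dist_eq] at this
  filter_upwards [hc] with n hn z hz
  rw [dist_eq_norm]
  have : (c0:ℂ) * g z - (c n : ℂ) * g z = ((c0 - c n : ℝ) : ℂ) * g z := by push_cast; ring
  rw [this, norm_mul, Complex.norm_real]
  have h1 : ‖g z‖ ≤ B' := le_trans (hg z hz) (le_max_left _ _)
  have h2 : |c0 - c n| < η / (B' + 1) := by rwa [abs_sub_comm] at hn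
  calc ‖c0 - c n‖ * ‖g z‖ ≤ |c0 - c n| * B' := by
        apply mul_le_mul_of_nonneg_left h1 (abs_nonneg _)
    _ < η := by
        have h3 : |c0 - c n| * (B' + 1) < η := (lt_div_iff₀ (by positivity)).1 h2
        nlinarith [abs_nonneg (c0 - c n)]


/-- If `(λ(n))` is a VK sequence with parameters `ω = (α,β,γ)`, then the
functions `Φ_n(z) = ∏_{j=1}^n (1 - (λ(n)_j/n) z)^{-k}` converge to `Ψ(ω;·)` uniformly on
some closed disc around `0`. -/
theorem phi_tendsto_psi (k : ℝ) (hk : 0 < k)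
    (Λ : ℕ → ℕ → ℝ) (α : ℕ → ℝ) (β δ γ : ℝ)
    (hpad : ∀ n i, n ≤ i → Λ n i = 0)
    (hdec : ∀ n i, i + 1 < n → VKle (Λ n (i + 1)) (Λ n i))
    (hα : ∀ i, Tendsto (fun n : ℕ => Λ n i / (n : ℝ)) atTop (𝓝 (α i)))
    (hβ : Tendsto (fun n : ℕ => (∑ i ∈ Finset.range n, Λ n i) / (n : ℝ)) atTop (𝓝 β))
    (hδ : Tendsto (fun n : ℕ => (∑ i ∈ Finset.range n, (Λ n i) ^ 2) / (n : ℝ) ^ 2)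
      atTop (𝓝 δ))
    (hγ : γ = δ - ∑' i, (α i) ^ 2) :
    ∃ ε : ℝ, 0 < ε ∧
      TendstoUniformlyOn
        (fun n (z : ℂ) =>
          ∏ j ∈ Finset.range n, (1 - ((Λ n j / (n : ℝ) : ℝ) : ℂ) * z) ^ (-(k : ℂ)))
        (Psi k α β γ) atTop (Metric.closedBall 0 ε) := by
  set μ : ℕ → ℕ → ℝ := fun n j => Λ n j / (n:ℝ) with hμdef
  have hμpad : ∀ n j, n ≤ j → μ n j = 0 := fun n j h => by simp [hμdef, hpad n j h]
  set p1 : ℕ → ℝ := fun n => ∑ j ∈ Finset.range n, μ n j with hp1def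
  set p2 : ℕ → ℝ := fun n => ∑ j ∈ Finset.range n, (μ n j)^2 with hp2def
  have hp1 : Tendsto p1 atTop (𝓝 β) :=
    hβ.congr (fun n => by rw [hp1def]; exact Finset.sum_div _ _ _)
  have hp2 : Tendsto p2 atTop (𝓝 δ) := by
    refine hδ.congr (fun n => ?_)
    rw [hp2def]
    simp only [hμdef, div_pow]
    exact Finset.sum_div _ _ _
  obtain ⟨C0, hC0⟩ := hp2.bddAbove_range
  set C := max C0 1 with hCdef
  have hC1 : (1:ℝ) ≤ C := le_max_right _ _
  have hCpos : (0:ℝ) < C := lt_of_lt_of_le one_pos hC1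
  have hCp2 : ∀ n, p2 n ≤ C := fun n => le_trans (hC0 (Set.mem_range_self n)) (le_max_left _ _)
  -- antitone absolute values
  have habs : ∀ n i, |μ n (i+1)| ≤ |μ n i| := by
    intro n i
    by_cases h : i + 1 < n
    · have hn : (0:ℝ) < (n:ℝ) := by
        have : 0 < n := by omega
        exact_mod_cast this
      have hΛ : |Λ n (i+1)| ≤ |Λ n i| := by
        rcases hdec n i h with h' | ⟨h', _⟩
        · exact h'.le
        · exact le_of_eq h'
      simp only [hμdef, abs_div, abs_of_pos hn]
      gcongr
    · rw [hμpad n (i+1) (by omega)]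
      simp
  have hanti : ∀ n, Antitone (fun i => |μ n i|) := fun n => antitone_nat_of_succ_le (habs n)
  -- partial sums bounded
  have hpartial : ∀ n J, ∑ j ∈ Finset.range J, (μ n j)^2 ≤ C := by
    intro n J
    have h1 : ∑ j ∈ Finset.range J, (μ n j)^2 ≤ ∑ j ∈ Finset.range (max J n), (μ n j)^2 :=
      Finset.sum_le_sum_of_subset_of_nonneg (Finset.range_subset_range.2 (le_max_left _ _))
        (fun j _ _ => sq_nonneg _)
    have h2 : ∑ j ∈ Finset.range (max J n), (μ n j)^2 = p2 n := by
      rw [hp2def]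
      symm
      apply Finset.sum_subset (Finset.range_subset_range.2 (le_max_right _ _))
      intro j _ hnj
      rw [hμpad n j (by simpa using hnj)]
      ring
    linarith [hCp2 n]
  -- pointwise bound
  have hμsq : ∀ n j, (μ n j)^2 ≤ C / ((j:ℝ)+1) := by
    intro n j
    rw [le_div_iff₀ (by positivity)]
    calc (μ n j)^2 * ((j:ℝ)+1) = ∑ _i ∈ Finset.range (j+1), (μ n j)^2 := by
          rw [Finset.sum_const, Finset.card_range, nsmul_eq_mul]
          push_cast; ring
      _ ≤ ∑ i ∈ Finset.range (j+1), (μ n i)^2 := by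
          apply Finset.sum_le_sum
          intro i hi
          have hij : |μ n j| ≤ |μ n i| := hanti n (Finset.mem_range_succ_iff.1 hi)
          calc (μ n j)^2 = |μ n j|^2 := (sq_abs _).symm
            _ ≤ |μ n i|^2 := by gcongr
            _ = (μ n i)^2 := sq_abs _
      _ ≤ C := hpartial n (j+1)
  have hμtendsto : ∀ j, Tendsto (fun n => μ n j) atTop (𝓝 (α j)) := fun j => hα j
  have hαsq : ∀ j, (α j)^2 ≤ C / ((j:ℝ)+1) := fun j =>
    le_of_tendsto ((hμtendsto j).pow 2) (Eventually.of_forall (fun n => hμsq n j))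
  have hSa : Summable (fun j => (α j)^2) := by
    apply summable_of_sum_range_le (fun j => sq_nonneg _)
    intro J
    have ht : Tendsto (fun n => ∑ j ∈ Finset.range J, (μ n j)^2) atTop
        (𝓝 (∑ j ∈ Finset.range J, (α j)^2)) :=
      tendsto_finset_sum _ (fun j _ => (hμtendsto j).pow 2)
    exact le_of_tendsto ht (Eventually.of_forall fun n => hpartial n J)
  -- ε
  set R := Real.sqrt C with hRdef
  have hR1 : 1 ≤ R := by
    rw [hRdef, show (1:ℝ) = Real.sqrt 1 from (Real.sqrt_one).symm]
    exact Real.sqrt_le_sqrt hC1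
  have hR0 : 0 < R := lt_of_lt_of_le one_pos hR1
  set ε := 1 / (2*R) with hεdef
  have hε0 : 0 < ε := by positivity
  have hεR : ε * R = 1/2 := by rw [hεdef]; field_simp
  have hεhalf : ε ≤ 1/2 := by
    rw [hεdef]
    rw [div_le_div_iff₀ (by linarith) (by norm_num)]
    linarith
  -- norm bounds
  have hμabs : ∀ n j, |μ n j| ≤ R / Real.sqrt ((j:ℝ)+1) := by
    intro n j
    have := Real.abs_le_sqrt (hμsq n j)
    rwa [Real.sqrt_div hCpos.le] at this
  have hαabs : ∀ j, |α j| ≤ R / Real.sqrt ((j:ℝ)+1) := by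
    intro j
    have := Real.abs_le_sqrt (hαsq j)
    rwa [Real.sqrt_div hCpos.le] at this
  have hsqrt1 : ∀ j : ℕ, (1:ℝ) ≤ Real.sqrt ((j:ℝ)+1) := by
    intro j
    have h0 : (0:ℝ) ≤ (j:ℝ) := Nat.cast_nonneg j
    have := Real.sqrt_le_sqrt (show (1:ℝ) ≤ (j:ℝ)+1 by linarith)
    rwa [Real.sqrt_one] at this
  have hRj : ∀ j : ℕ, R / Real.sqrt ((j:ℝ)+1) ≤ R := by
    intro j
    calc R / Real.sqrt ((j:ℝ)+1) ≤ R / 1 := by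
          apply div_le_div_of_nonneg_left hR0.le (by norm_num)
          exact hsqrt1 j
      _ = R := div_one R
  have hwball : ∀ (x:ℝ), |x| ≤ R → ∀ z ∈ closedBall (0:ℂ) ε, ‖(x:ℂ)*z‖ ≤ 1/2 := by
    intro x hx z hz
    rw [mem_closedBall, dist_zero_right] at hz
    rw [norm_mul, Complex.norm_real]
    calc ‖x‖ * ‖z‖ ≤ R * ε := by
          apply mul_le_mul hx hz (norm_nonneg _) hR0.le
      _ = 1/2 := by rw [mul_comm]; exact hεR
  -- summable majorant
  set b : ℕ → ℝ := fun j => 2*k*(ε * (R / Real.sqrt ((j:ℝ)+1)))^3 with hbdef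
  have hb0 : ∀ j, 0 ≤ b j := by
    intro j
    rw [hbdef]
    have h1 : (0:ℝ) ≤ ε := hε0.le
    have h2 : (0:ℝ) ≤ R / Real.sqrt ((j:ℝ)+1) := by positivity
    positivity
  have hrpow : ∀ j : ℕ, (Real.sqrt ((j:ℝ)+1))^3 = ((j:ℝ)+1) ^ ((3:ℝ)/2) := by
    intro j
    have hx : (0:ℝ) ≤ (j:ℝ)+1 := by positivity
    rw [Real.sqrt_eq_rpow]
    rw [← Real.rpow_natCast (((j:ℝ)+1) ^ ((1:ℝ)/2)) 3, ← Real.rpow_mul hx]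
    norm_num
  have hbeq : b = fun j : ℕ => (2*k*ε^3*R^3) * (((j:ℝ)+1) ^ (-((3:ℝ)/2))) := by
    funext j
    rw [hbdef]
    have hx : (0:ℝ) ≤ (j:ℝ)+1 := by positivity
    rw [Real.rpow_neg hx, ← hrpow j]
    have hs : (0:ℝ) < Real.sqrt ((j:ℝ)+1) := lt_of_lt_of_le one_pos (hsqrt1 j)
    field_simp
  have hbsum : Summable b := by
    rw [hbeq]
    apply Summable.mul_left
    have base : Summable (fun n : ℕ => ((n:ℝ)) ^ (-((3:ℝ)/2))) :=
      Real.summable_nat_rpow.2 (by norm_num)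
    have shift := (summable_nat_add_iff 1).2 base
    apply shift.congr
    intro j
    push_cast
    rfl
  -- bound for the vkG terms
  have hub : ∀ (x : ℝ) (j : ℕ), |x| ≤ R / Real.sqrt ((j:ℝ)+1) →
      ∀ z ∈ closedBall (0:ℂ) ε, ‖(k:ℂ) * vkG ((x:ℂ)*z)‖ ≤ b j := by
    intro x j hx z hz
    have hxR : |x| ≤ R := le_trans hx (hRj j)
    have hw : ‖(x:ℂ)*z‖ ≤ 1/2 := hwball x hxR z hz
    have hz' : ‖z‖ ≤ ε := by rwa [mem_closedBall, dist_zero_right] at hz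
    have hwle : ‖(x:ℂ)*z‖ ≤ ε * (R / Real.sqrt ((j:ℝ)+1)) := by
      rw [norm_mul, Complex.norm_real]
      calc ‖x‖ * ‖z‖ ≤ (R / Real.sqrt ((j:ℝ)+1)) * ε := by
            apply mul_le_mul hx hz' (norm_nonneg _) (by positivity)
        _ = ε * (R / Real.sqrt ((j:ℝ)+1)) := mul_comm _ _
    rw [norm_mul, Complex.norm_real, Real.norm_eq_abs, abs_of_pos hk]
    calc k * ‖vkG ((x:ℂ)*z)‖ ≤ k * (2 * ‖(x:ℂ)*z‖^3) := by
          apply mul_le_mul_of_nonneg_left (vkG_norm_le hw) hk.le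
      _ ≤ k * (2 * (ε * (R / Real.sqrt ((j:ℝ)+1)))^3) := by
          have h3 : ‖(x:ℂ)*z‖^3 ≤ (ε * (R / Real.sqrt ((j:ℝ)+1)))^3 := by
            apply pow_le_pow_left₀ (norm_nonneg _) hwle
          nlinarith [hk.le]
      _ = b j := by rw [hbdef]; ring
  -- the u, v functions
  set u : ℕ → ℕ → ℂ → ℂ := fun n j z => (k:ℂ) * vkG (((μ n j : ℝ):ℂ) * z) with hudef
  set v : ℕ → ℂ → ℂ := fun j z => (k:ℂ) * vkG (((α j : ℝ):ℂ) * z) with hvdef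
  have hub' : ∀ n j, ∀ z ∈ closedBall (0:ℂ) ε, ‖u n j z‖ ≤ b j := by
    intro n j z hz
    exact hub (μ n j) j (hμabs n j) z hz
  have hvb' : ∀ j, ∀ z ∈ closedBall (0:ℂ) ε, ‖v j z‖ ≤ b j := by
    intro j z hz
    exact hub (α j) j (hαabs j) z hz
  -- per-j uniform convergence
  have hconv : ∀ j, TendstoUniformlyOn (fun n => u n j) (v j) atTop (closedBall (0:ℂ) ε) := by
    intro j
    rw [Metric.tendstoUniformlyOn_iff]
    intro η hη
    have hev : ∀ᶠ n in atTop, |μ n j - α j| < η / (k * ε + 1) := by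
      have := Metric.tendsto_atTop.1 (hμtendsto j) (η / (k * ε + 1)) (by positivity)
      obtain ⟨N, hN⟩ := this
      filter_upwards [eventually_ge_atTop N] with n hn
      have := hN n hn
      rwa [Real.dist_eq] at this
    filter_upwards [hev] with n hn z hz
    rw [dist_eq_norm]
    have hz' : ‖z‖ ≤ ε := by rwa [mem_closedBall, dist_zero_right] at hz
    have hμw : ‖((μ n j : ℝ):ℂ) * z‖ ≤ 1/2 :=
      hwball _ (le_trans (hμabs n j) (hRj j)) z hz
    have hαw : ‖((α j : ℝ):ℂ) * z‖ ≤ 1/2 :=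
      hwball _ (le_trans (hαabs j) (hRj j)) z hz
    have hdiff : ‖vkG (((α j : ℝ):ℂ) * z) - vkG (((μ n j : ℝ):ℂ) * z)‖
        ≤ 2 * (1/2)^2 * ‖((α j : ℝ):ℂ) * z - ((μ n j : ℝ):ℂ) * z‖ :=
      vkG_sub_le (by norm_num) hαw hμw
    have hsub : ‖((α j : ℝ):ℂ) * z - ((μ n j : ℝ):ℂ) * z‖ ≤ |α j - μ n j| * ε := by
      have : ((α j : ℝ):ℂ) * z - ((μ n j : ℝ):ℂ) * z = ((α j - μ n j : ℝ):ℂ) * z := by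
        push_cast; ring
      rw [this, norm_mul, Complex.norm_real, Real.norm_eq_abs]
      exact mul_le_mul_of_nonneg_left hz' (abs_nonneg _)
    have key : v j z - u n j z = (k:ℂ) * (vkG (((α j : ℝ):ℂ) * z) - vkG (((μ n j : ℝ):ℂ) * z)) := by
      rw [hudef, hvdef]; ring
    rw [key, norm_mul, Complex.norm_real, Real.norm_eq_abs, abs_of_pos hk]
    have habs' : |α j - μ n j| < η / (k * ε + 1) := by rwa [abs_sub_comm] at hn
    calc k * ‖vkG (((α j : ℝ):ℂ) * z) - vkG (((μ n j : ℝ):ℂ) * z)‖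
        ≤ k * (2 * (1/2)^2 * (|α j - μ n j| * ε)) := by
          apply mul_le_mul_of_nonneg_left _ hk.le
          calc ‖vkG (((α j : ℝ):ℂ) * z) - vkG (((μ n j : ℝ):ℂ) * z)‖
              ≤ 2 * (1/2)^2 * ‖((α j : ℝ):ℂ) * z - ((μ n j : ℝ):ℂ) * z‖ := hdiff
            _ ≤ 2 * (1/2)^2 * (|α j - μ n j| * ε) := by
                apply mul_le_mul_of_nonneg_left hsub (by norm_num)
      _ < η := by
          have h4 : |α j - μ n j| * (k * ε + 1) < η := (lt_div_iff₀ (by positivity)).1 habs'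
          nlinarith [abs_nonneg (α j - μ n j), hε0.le, hk.le, mul_nonneg (abs_nonneg (α j - μ n j)) hε0.le]
  have hS : TendstoUniformlyOn (fun n z => ∑ j ∈ Finset.range n, u n j z)
      (fun z => ∑' j, v j z) atTop (closedBall (0:ℂ) ε) :=
    tannery_unif hbsum hb0 hub' hvb' hconv
  -- linear parts
  have hkp1 : Tendsto (fun n => k * p1 n) atTop (𝓝 (k*β)) := hp1.const_mul k
  have hkp2 : Tendsto (fun n => k * p2 n) atTop (𝓝 (k*δ)) := hp2.const_mul k
  have hg1 : ∀ z ∈ closedBall (0:ℂ) ε, ‖z‖ ≤ ε := by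
    intro z hz; rwa [mem_closedBall, dist_zero_right] at hz
  have hg2 : ∀ z ∈ closedBall (0:ℂ) ε, ‖z^2/2‖ ≤ ε^2/2 := by
    intro z hz
    have := hg1 z hz
    rw [norm_div, norm_pow]
    have h2 : ‖(2:ℂ)‖ = 2 := by norm_num
    rw [h2]
    gcongr
  have hlin1 : TendstoUniformlyOn (fun n (z:ℂ) => ((k * p1 n : ℝ):ℂ) * z)
      (fun z => ((k * β : ℝ):ℂ) * z) atTop (closedBall (0:ℂ) ε) := lin_unif hkp1 hg1
  have hlin2 : TendstoUniformlyOn (fun n (z:ℂ) => ((k * p2 n : ℝ):ℂ) * (z^2/2))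
      (fun z => ((k * δ : ℝ):ℂ) * (z^2/2)) atTop (closedBall (0:ℂ) ε) := lin_unif hkp2 hg2
  set A : ℕ → ℂ → ℂ := fun n z => ((k * p1 n : ℝ):ℂ) * z + ((k * p2 n : ℝ):ℂ) * (z^2/2)
    + ∑ j ∈ Finset.range n, u n j z with hAdef
  set L : ℂ → ℂ := fun z => ((k * β : ℝ):ℂ) * z + ((k * δ : ℝ):ℂ) * (z^2/2)
    + ∑' j, v j z with hLdef
  have hAL : TendstoUniformlyOn A L atTop (closedBall (0:ℂ) ε) := by
    have h12 := hlin1.add hlin2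
    have := h12.add hS
    exact this
  -- bound for L
  set B := k * |β| * ε + k * |δ| * (ε^2/2) + ∑' j, b j with hBdef
  have hLB : ∀ z ∈ closedBall (0:ℂ) ε, ‖L z‖ ≤ B := by
    intro z hz
    rw [hLdef, hBdef]
    have hvs : Summable (fun l => v l z) := Summable.of_norm_bounded hbsum (fun l => hvb' l z hz)
    have ht : ‖∑' j, v j z‖ ≤ ∑' j, b j :=
      le_trans (norm_tsum_le_tsum_norm hvs.norm) (Summable.tsum_le_tsum (fun j => hvb' j z hz) hvs.norm hbsum)
    have h1 : ‖((k * β : ℝ):ℂ) * z‖ ≤ k * |β| * ε := by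
      rw [norm_mul, Complex.norm_real, Real.norm_eq_abs, abs_mul, abs_of_pos hk]
      apply mul_le_mul_of_nonneg_left (hg1 z hz)
      positivity
    have h2 : ‖((k * δ : ℝ):ℂ) * (z^2/2)‖ ≤ k * |δ| * (ε^2/2) := by
      rw [norm_mul, Complex.norm_real, Real.norm_eq_abs, abs_mul, abs_of_pos hk]
      apply mul_le_mul_of_nonneg_left (hg2 z hz)
      positivity
    calc ‖((k * β : ℝ):ℂ) * z + ((k * δ : ℝ):ℂ) * (z^2/2) + ∑' j, v j z‖
        ≤ ‖((k * β : ℝ):ℂ) * z + ((k * δ : ℝ):ℂ) * (z^2/2)‖ + ‖∑' j, v j z‖ := norm_add_le _ _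
      _ ≤ (‖((k * β : ℝ):ℂ) * z‖ + ‖((k * δ : ℝ):ℂ) * (z^2/2)‖) + ‖∑' j, v j z‖ := by
          gcongr; exact norm_add_le _ _
      _ ≤ (k * |β| * ε + k * |δ| * (ε^2/2)) + ∑' j, b j :=
          add_le_add (add_le_add h1 h2) ht
  have hexp : TendstoUniformlyOn (fun n z => Complex.exp (A n z))
      (fun z => Complex.exp (L z)) atTop (closedBall (0:ℂ) ε) := exp_unif hLB hAL
  -- EqOn for Φ
  have hΦ : ∀ n : ℕ, Set.EqOn
      (fun z : ℂ => ∏ j ∈ Finset.range n, (1 - ((Λ n j / (n : ℝ) : ℝ) : ℂ) * z) ^ (-(k : ℂ)))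
      (fun z => Complex.exp (A n z)) (closedBall (0:ℂ) ε) := by
    intro n z hz
    simp only
    have hfac : ∀ j ∈ Finset.range n, (1 - ((Λ n j / (n : ℝ) : ℝ) : ℂ) * z) ^ (-(k : ℂ))
        = Complex.exp ((k:ℂ) * (((μ n j : ℝ):ℂ)*z + (((μ n j : ℝ):ℂ)*z)^2/2
          + vkG (((μ n j : ℝ):ℂ)*z))) := by
      intro j _
      exact one_sub_cpow (lt_of_le_of_lt (hwball _ (le_trans (hμabs n j) (hRj j)) z hz) (by norm_num))
    rw [Finset.prod_congr rfl hfac, ← Complex.exp_sum]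
    congr 1
    have e1 : ((p1 n : ℝ):ℂ) = ∑ j ∈ Finset.range n, ((μ n j : ℝ):ℂ) := by
      rw [hp1def]; push_cast; rfl
    have e2 : ((p2 n : ℝ):ℂ) = ∑ j ∈ Finset.range n, ((μ n j : ℝ):ℂ)^2 := by
      rw [hp2def]; push_cast; rfl
    have expand : ∀ j ∈ Finset.range n, (k:ℂ) * (((μ n j : ℝ):ℂ)*z + (((μ n j : ℝ):ℂ)*z)^2/2
          + vkG (((μ n j : ℝ):ℂ)*z))
        = ((μ n j : ℝ):ℂ) * ((k:ℂ)*z) + ((μ n j : ℝ):ℂ)^2 * ((k:ℂ)*(z^2/2))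
          + (k:ℂ) * vkG (((μ n j : ℝ):ℂ)*z) := by
      intro j _; ring
    rw [Finset.sum_congr rfl expand, Finset.sum_add_distrib, Finset.sum_add_distrib,
      ← Finset.sum_mul, ← Finset.sum_mul, ← e1, ← e2, hAdef]
    simp only [hudef]
    push_cast
    ring
  -- EqOn for Psi
  have hΨ : Set.EqOn (Psi k α β γ) (fun z => Complex.exp (L z)) (closedBall (0:ℂ) ε) := by
    intro z hz
    have hαw : ∀ l:ℕ, ‖((α l : ℝ):ℂ) * z‖ ≤ 1/2 := fun l =>
      hwball _ (le_trans (hαabs l) (hRj l)) z hz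
    have hfac : ∀ l:ℕ, Complex.exp (-((k:ℂ)*(α l:ℂ)*z)) * (1 - (α l:ℂ)*z)^(-(k:ℂ))
        = Complex.exp ((k:ℂ)*((α l:ℂ)*z)^2/2 + v l z) := by
      intro l
      rw [one_sub_cpow (lt_of_le_of_lt (hαw l) (by norm_num)), ← Complex.exp_add]
      congr 1
      rw [hvdef]
      ring
    have hs1 : HasSum (fun l => ((α l ^2 : ℝ):ℂ)) (((∑' i, (α i)^2 : ℝ)):ℂ) :=
      Complex.hasSum_ofReal.2 hSa.hasSum
    have hs1' : HasSum (fun l => (k:ℂ)*((α l:ℂ)*z)^2/2)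
        ((((∑' i, (α i)^2 : ℝ)):ℂ) * ((k:ℂ)*z^2/2)) := by
      have h := hs1.mul_right ((k:ℂ)*z^2/2)
      convert h using 2 with l
      · rfl
      push_cast
      ring
    have hvsum2 : Summable (fun l => v l z) := Summable.of_norm_bounded hbsum (fun l => hvb' l z hz)
    have hsum := hs1'.add hvsum2.hasSum
    have hprod := hsum.cexp
    have htp : (∏' l, Complex.exp (-((k:ℂ)*(α l:ℂ)*z)) * (1 - (α l:ℂ)*z)^(-(k:ℂ)))
        = Complex.exp (((((∑' i, (α i)^2 : ℝ)):ℂ) * ((k:ℂ)*z^2/2)) + ∑' l, v l z) := by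
      rw [tprod_congr hfac]
      exact hprod.tprod_eq
    show Psi k α β γ z = Complex.exp (L z)
    rw [Psi, htp, ← Complex.exp_add, hLdef]
    have hγ' : (γ:ℂ) = (δ:ℂ) - (((∑' i, (α i)^2 : ℝ)):ℂ) := by
      rw [hγ]; push_cast; ring
    congr 1
    rw [hγ']
    push_cast
    ring
  exact ⟨ε, hε0,
    (hexp.congr (Eventually.of_forall (fun n => (hΦ n).symm))).congr_right
      (fun z hz => (hΨ hz).symm)⟩
end

section
/- For every triple (α, β, γ) ∈ Ω there exists a Vershik–Kerov sequence (λ(n))_{n∈ℕ} whose VK parameters are exactly (α, β, γ). -/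
open Filter Topology Finset

namespace VK

lemma vkle_refl (x : ℝ) : VKle x x := Or.inr ⟨rfl, le_rfl⟩

lemma vkle_of_abs_lt {x y : ℝ} (h : |x| < |y|) : VKle x y := Or.inl h

lemma vkle_neg_self {c : ℝ} (hc : 0 ≤ c) : VKle (-c) c := Or.inr ⟨abs_neg c, by linarith⟩

lemma vkle_smul {x y : ℝ} (t : ℝ) (ht : 0 < t) (h : VKle x y) : VKle (t * x) (t * y) := by
  rcases h with h | ⟨h1, h2⟩
  · exact Or.inl (by rw [abs_mul, abs_mul]; exact mul_lt_mul_of_pos_left h (abs_pos.mpr ht.ne'))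
  · exact Or.inr ⟨by rw [abs_mul, abs_mul, h1], mul_le_mul_of_nonneg_left h2 ht.le⟩

lemma vkle_abs_le {x y : ℝ} (h : VKle x y) : |x| ≤ |y| := h.elim le_of_lt fun h => h.1.le

noncomputable def rt (n : ℕ) : ℝ := Real.sqrt n

noncomputable def kk (α : ℕ → ℝ) (n : ℕ) : ℕ := sInf {i | α i ^ 2 ≤ (rt n)⁻¹}

noncomputable def mm (γ : ℝ) (n : ℕ) : ℕ := ⌈2 * γ * rt n⌉₊

noncomputable def cc (n : ℕ) : ℝ := n / (2 * Real.sqrt (rt n))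

noncomputable def SS (α : ℕ → ℝ) (n : ℕ) : ℝ := ∑ i ∈ range (kk α n), α i

noncomputable def TT (α : ℕ → ℝ) (n : ℕ) : ℝ := ∑ i ∈ range (kk α n), α i ^ 2

noncomputable def pp (α : ℕ → ℝ) (γ : ℝ) (n : ℕ) : ℕ := n - (kk α n + 2 * mm γ n)

noncomputable def dd (α : ℕ → ℝ) (β γ : ℝ) (n : ℕ) : ℝ :=
  ((n : ℝ) * β - n * SS α n) / (pp α γ n : ℝ)

def HH (α : ℕ → ℝ) (β γ : ℝ) (n : ℕ) : Prop :=
  1 ≤ n ∧ kk α n + 2 * mm γ n + 1 ≤ n ∧ |dd α β γ n| < cc n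

open scoped Classical in
noncomputable def LL (α : ℕ → ℝ) (β γ : ℝ) (n i : ℕ) : ℝ :=
  if HH α β γ n then
    if i < kk α n then (n : ℝ) * α i
    else if i < kk α n + mm γ n then cc n
    else if i < kk α n + 2 * mm γ n then -(cc n)
    else if i < n then dd α β γ n
    else 0
  else 0

-- basic positivity
lemma rt_nonneg (n : ℕ) : 0 ≤ rt n := Real.sqrt_nonneg _

lemma rt_one_le {n : ℕ} (hn : 1 ≤ n) : 1 ≤ rt n := by
  rw [show (1:ℝ) = Real.sqrt 1 by simp [Real.sqrt_one]]
  exact Real.sqrt_le_sqrt (by exact_mod_cast hn)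

lemma rt_pos {n : ℕ} (hn : 1 ≤ n) : 0 < rt n := lt_of_lt_of_le one_pos (rt_one_le hn)

lemma qq_one_le {n : ℕ} (hn : 1 ≤ n) : 1 ≤ Real.sqrt (rt n) := by
  rw [show (1:ℝ) = Real.sqrt 1 by simp [Real.sqrt_one]]
  exact Real.sqrt_le_sqrt (rt_one_le hn)

lemma cc_nonneg (n : ℕ) : 0 ≤ cc n := by
  unfold cc; positivity

lemma cc_pos {n : ℕ} (hn : 1 ≤ n) : 0 < cc n := by
  unfold cc
  have h1 : (0:ℝ) < n := by exact_mod_cast hn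
  have h2 := qq_one_le hn
  positivity

section Hyp
variable {α : ℕ → ℝ} {β γ : ℝ}

lemma sqa_anti (hdec : ∀ i, VKle (α (i + 1)) (α i)) : Antitone fun i => α i ^ 2 := by
  apply antitone_nat_of_succ_le
  intro i
  have h := vkle_abs_le (hdec i)
  calc α (i+1) ^ 2 = |α (i+1)| ^ 2 := (sq_abs _).symm
    _ ≤ |α i| ^ 2 := by nlinarith [abs_nonneg (α (i+1))]
    _ = α i ^ 2 := sq_abs _

lemma kset_nonempty (hsum : Summable fun i => (α i) ^ 2) {n : ℕ} (hn : 1 ≤ n) :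
    {i | α i ^ 2 ≤ (rt n)⁻¹}.Nonempty := by
  have h0 : 0 < (rt n)⁻¹ := inv_pos.2 (rt_pos hn)
  obtain ⟨i, hi⟩ := (hsum.tendsto_atTop_zero.eventually (gt_mem_nhds h0)).exists
  exact ⟨i, hi.le⟩

lemma alpha_kk_le (hsum : Summable fun i => (α i) ^ 2) {n : ℕ} (hn : 1 ≤ n) :
    α (kk α n) ^ 2 ≤ (rt n)⁻¹ := Nat.sInf_mem (kset_nonempty hsum hn)

lemma lt_of_lt_kk {n i : ℕ} (hi : i < kk α n) : (rt n)⁻¹ < α i ^ 2 := by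
  have := Nat.notMem_of_lt_sInf (s := {i | α i ^ 2 ≤ (rt n)⁻¹}) hi
  simpa [not_le] using this

lemma kk_le (hsum : Summable fun i => (α i) ^ 2) {n : ℕ} (hn : 1 ≤ n) :
    (kk α n : ℝ) ≤ (∑' i, α i ^ 2) * rt n := by
  have hrt := rt_pos hn
  have h1 : (kk α n) • (rt n)⁻¹ ≤ ∑ i ∈ range (kk α n), α i ^ 2 := by
    have := Finset.card_nsmul_le_sum (range (kk α n)) (fun i => α i ^ 2) ((rt n)⁻¹)
      (fun i hi => (lt_of_lt_kk (mem_range.1 hi)).le)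
    simpa using this
  have h2 : ∑ i ∈ range (kk α n), α i ^ 2 ≤ ∑' i, α i ^ 2 :=
    Summable.sum_le_tsum _ (fun i _ => sq_nonneg _) hsum
  have h3 : (kk α n : ℝ) * (rt n)⁻¹ ≤ ∑' i, α i ^ 2 := by
    have := le_trans h1 h2
    simpa [nsmul_eq_mul] using this
  calc (kk α n : ℝ) = ((kk α n : ℝ) * (rt n)⁻¹) * rt n := by field_simp
    _ ≤ (∑' i, α i ^ 2) * rt n := mul_le_mul_of_nonneg_right h3 hrt.le

lemma TT_nonneg (n : ℕ) : 0 ≤ TT α n := Finset.sum_nonneg fun i _ => sq_nonneg _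

lemma TT_le (hsum : Summable fun i => (α i) ^ 2) (n : ℕ) : TT α n ≤ ∑' i, α i ^ 2 :=
  Summable.sum_le_tsum _ (fun i _ => sq_nonneg _) hsum

lemma tsum_sq_nonneg (hsum : Summable fun i => (α i) ^ 2) : 0 ≤ ∑' i, α i ^ 2 :=
  tsum_nonneg fun i => sq_nonneg _

lemma abs_SS_le (hsum : Summable fun i => (α i) ^ 2) {n : ℕ} (hn : 1 ≤ n) :
    |SS α n| ≤ (∑' i, α i ^ 2) * Real.sqrt (rt n) := by
  set A := ∑' i, α i ^ 2 with hA
  have hA0 : 0 ≤ A := tsum_sq_nonneg hsum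
  have hcs : (SS α n) ^ 2 ≤ (kk α n : ℝ) * TT α n := by
    have := Finset.sum_mul_sq_le_sq_mul_sq (range (kk α n)) (fun _ => (1:ℝ)) α
    simpa [SS, TT, Finset.card_range] using this
  have h1 : (SS α n) ^ 2 ≤ (A * rt n) * A := by
    refine le_trans hcs (mul_le_mul (kk_le hsum hn) (TT_le hsum n) (TT_nonneg n) ?_)
    have := rt_nonneg n; positivity
  have h2 : (SS α n) ^ 2 ≤ (A * Real.sqrt (rt n)) ^ 2 := by
    have hq : Real.sqrt (rt n) ^ 2 = rt n := Real.sq_sqrt (rt_nonneg n)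
    calc (SS α n) ^ 2 ≤ A * rt n * A := h1
      _ = (A * Real.sqrt (rt n)) ^ 2 := by rw [mul_pow, hq]; ring
  calc |SS α n| = Real.sqrt ((SS α n) ^ 2) := (Real.sqrt_sq_eq_abs _).symm
    _ ≤ Real.sqrt ((A * Real.sqrt (rt n)) ^ 2) := Real.sqrt_le_sqrt h2
    _ = |A * Real.sqrt (rt n)| := Real.sqrt_sq_eq_abs _
    _ = A * Real.sqrt (rt n) := abs_of_nonneg (by positivity)

end Hyp

-- asymptotic helpers
lemma sqrt_atTop' : Tendsto Real.sqrt atTop atTop := by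
  apply tendsto_atTop_atTop.2
  intro b
  refine ⟨b ^ 2 ⊔ 0, fun a ha => ?_⟩
  calc b ≤ |b| := le_abs_self b
    _ = Real.sqrt (b ^ 2) := (Real.sqrt_sq_eq_abs b).symm
    _ ≤ Real.sqrt a := Real.sqrt_le_sqrt (le_trans (le_max_left _ _) ha)

lemma rt_atTop : Tendsto (fun n : ℕ => rt n) atTop atTop :=
  sqrt_atTop'.comp tendsto_natCast_atTop_atTop

lemma qq_atTop : Tendsto (fun n : ℕ => Real.sqrt (rt n)) atTop atTop :=
  sqrt_atTop'.comp rt_atTop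

lemma rt_inv_tendsto : Tendsto (fun n : ℕ => (rt n)⁻¹) atTop (𝓝 0) :=
  rt_atTop.inv_tendsto_atTop

lemma rt_div_tendsto : Tendsto (fun n : ℕ => rt n / n) atTop (𝓝 0) := by
  apply rt_inv_tendsto.congr'
  filter_upwards [eventually_ge_atTop 1] with n hn
  have hrt := rt_pos hn
  have hmul : rt n * rt n = (n : ℝ) := Real.mul_self_sqrt (by positivity)
  rw [← hmul]
  field_simp

lemma qq_div_tendsto : Tendsto (fun n : ℕ => Real.sqrt (rt n) / n) atTop (𝓝 0) := by
  apply tendsto_of_tendsto_of_tendsto_of_le_of_le' tendsto_const_nhds rt_div_tendsto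
  · filter_upwards [eventually_ge_atTop 1] with n hn
    have h1 : (0:ℝ) < n := by exact_mod_cast hn
    positivity
  · filter_upwards [eventually_ge_atTop 1] with n hn
    have h1 : (0:ℝ) < n := by exact_mod_cast hn
    have h2 := rt_one_le hn
    have h3 : Real.sqrt (rt n) ≤ rt n := by
      calc Real.sqrt (rt n) ≤ Real.sqrt (rt n * rt n) := by
            apply Real.sqrt_le_sqrt; nlinarith
        _ = rt n := by rw [Real.sqrt_mul_self (rt_nonneg n)]
    gcongr

lemma inv_nat_tendsto : Tendsto (fun n : ℕ => ((n : ℝ))⁻¹) atTop (𝓝 0) :=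
  tendsto_natCast_atTop_atTop.inv_tendsto_atTop

lemma even_lin (a b c0 : ℝ) :
    ∀ᶠ n : ℕ in atTop, a * rt n + b * Real.sqrt (rt n) + c0 < n := by
  have hT : Tendsto (fun n : ℕ => a * (rt n / n) + b * (Real.sqrt (rt n) / n) + c0 * (n : ℝ)⁻¹)
      atTop (𝓝 0) := by
    have := ((rt_div_tendsto.const_mul a).add (qq_div_tendsto.const_mul b)).add
      (inv_nat_tendsto.const_mul c0)
    simpa using this
  filter_upwards [hT.eventually (gt_mem_nhds one_pos), eventually_ge_atTop 1] with n h1 hn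
  have hn0 : (0:ℝ) < n := by exact_mod_cast hn
  have h2 : a * (rt n / n) + b * (Real.sqrt (rt n) / n) + c0 * (n:ℝ)⁻¹ < 1 := h1
  have h3 : (a * (rt n / n) + b * (Real.sqrt (rt n) / n) + c0 * (n:ℝ)⁻¹) * n
      = a * rt n + b * Real.sqrt (rt n) + c0 := by field_simp
  nlinarith

section Hyp2
variable {α : ℕ → ℝ} {β γ : ℝ}

lemma main_ev (hsum : Summable fun i => (α i) ^ 2) (hγ : 0 ≤ γ) :
    ∀ᶠ n : ℕ in atTop, HH α β γ n ∧ ((n : ℝ) / 2 ≤ (pp α γ n : ℝ)) := by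
  set A := ∑' i, α i ^ 2 with hA
  have hA0 : 0 ≤ A := tsum_sq_nonneg hsum
  filter_upwards [even_lin (2 * (A + 4 * γ)) 0 6, even_lin (4 * A) (4 * |β|) 0,
    eventually_ge_atTop 1] with n h2 h3 hn1
  have hn0 : (0:ℝ) < n := by exact_mod_cast hn1
  have hrt := rt_pos hn1
  have hq1 := qq_one_le hn1
  have hq0 : (0:ℝ) < Real.sqrt (rt n) := lt_of_lt_of_le one_pos hq1
  have hk : (kk α n : ℝ) ≤ A * rt n := kk_le hsum hn1
  have hmr : (mm γ n : ℝ) < 2 * γ * rt n + 1 := Nat.ceil_lt_add_one (by positivity)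
  simp only [zero_mul, add_zero] at h2 h3
  -- kk + 2 mm + 1 ≤ n, indeed ≤ n/2
  have hb2 : (kk α n : ℝ) + 2 * (mm γ n : ℝ) + 1 < (n : ℝ) / 2 := by nlinarith
  have hbn : ((kk α n + 2 * mm γ n + 1 : ℕ) : ℝ) < (n : ℝ) := by push_cast; nlinarith
  have hb : kk α n + 2 * mm γ n + 1 ≤ n := by exact_mod_cast hbn.le
  have hppc : (pp α γ n : ℝ) = (n : ℝ) - (kk α n) - 2 * (mm γ n) := by
    unfold pp
    rw [Nat.cast_sub (by omega)]
    push_cast; ring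
  have hp2 : (n : ℝ) / 2 ≤ (pp α γ n : ℝ) := by rw [hppc]; nlinarith
  have hpp0 : (0:ℝ) < (pp α γ n : ℝ) := lt_of_lt_of_le (by positivity) hp2
  -- |dd| < cc
  have hSS : |SS α n| ≤ A * Real.sqrt (rt n) := abs_SS_le hsum hn1
  have hNum : |(n : ℝ) * β - n * SS α n| ≤ n * (|β| + A * Real.sqrt (rt n)) := by
    calc |(n : ℝ) * β - n * SS α n| = (n:ℝ) * |β - SS α n| := by
          rw [← mul_sub, abs_mul, abs_of_pos hn0]
      _ ≤ n * (|β| + A * Real.sqrt (rt n)) := by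
          have := abs_sub (β) (SS α n)
          have h5 : |β - SS α n| ≤ |β| + |SS α n| := abs_sub _ _
          nlinarith [abs_nonneg (β - SS α n)]
  have hdd : |dd α β γ n| ≤ 2 * (|β| + A * Real.sqrt (rt n)) := by
    unfold dd
    rw [abs_div, abs_of_pos hpp0]
    rw [div_le_iff₀ hpp0]
    calc |(n : ℝ) * β - n * SS α n| ≤ n * (|β| + A * Real.sqrt (rt n)) := hNum
      _ = 2 * (|β| + A * Real.sqrt (rt n)) * ((n:ℝ)/2) := by ring
      _ ≤ 2 * (|β| + A * Real.sqrt (rt n)) * (pp α γ n : ℝ) := by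
          apply mul_le_mul_of_nonneg_left hp2
          positivity
  have hcc : |dd α β γ n| < cc n := by
    apply lt_of_le_of_lt hdd
    unfold cc
    rw [lt_div_iff₀ (by positivity)]
    have hq2 : Real.sqrt (rt n) ^ 2 = rt n := Real.sq_sqrt (rt_nonneg n)
    nlinarith [abs_nonneg β]
  exact ⟨⟨hn1, hb, hcc⟩, hp2⟩

lemma TT_tendsto (hdec : ∀ i, VKle (α (i + 1)) (α i))
    (hsum : Summable fun i => (α i) ^ 2) :
    Tendsto (fun n => TT α n) atTop (𝓝 (∑' i, α i ^ 2)) := by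
  set A := ∑' i, α i ^ 2 with hA
  rw [Metric.tendsto_atTop]
  intro ε hε
  have hps : Tendsto (fun j => ∑ i ∈ range j, α i ^ 2) atTop (𝓝 A) :=
    hsum.hasSum.tendsto_sum_nat
  obtain ⟨i₀, hi₀⟩ := (hps.eventually (lt_mem_nhds (show A - ε/2 < A by linarith))).exists
  have hiv : Tendsto (fun n : ℕ => (i₀ : ℝ) * (rt n)⁻¹) atTop (𝓝 0) := by
    simpa using rt_inv_tendsto.const_mul (i₀ : ℝ)
  obtain ⟨N1, hN1⟩ := eventually_atTop.1 (hiv.eventually (gt_mem_nhds (show (0:ℝ) < ε/2 by linarith)))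
  refine ⟨max N1 1, fun n hn => ?_⟩
  have hn1 : 1 ≤ n := le_trans (le_max_right _ _) hn
  have hNn : N1 ≤ n := le_trans (le_max_left _ _) hn
  have hTA : TT α n ≤ A := TT_le hsum n
  have hlow : A - ε < TT α n := by
    rcases le_or_gt i₀ (kk α n) with hcase | hcase
    · have : ∑ i ∈ range i₀, α i ^ 2 ≤ TT α n := by
        apply Finset.sum_le_sum_of_subset_of_nonneg
        · exact Finset.range_subset_range.2 hcase
        · intro i _ _; exact sq_nonneg _
      linarith
    · have hsplit : TT α n + ∑ i ∈ Finset.Ico (kk α n) i₀, α i ^ 2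
          = ∑ i ∈ range i₀, α i ^ 2 := by
        rw [range_eq_Ico, TT, range_eq_Ico]
        exact Finset.sum_Ico_consecutive _ (Nat.zero_le _) hcase.le
      have hbd : ∑ i ∈ Finset.Ico (kk α n) i₀, α i ^ 2
          ≤ (Finset.Ico (kk α n) i₀).card • (rt n)⁻¹ := by
        apply Finset.sum_le_card_nsmul
        intro i hi
        have h1 : kk α n ≤ i := (Finset.mem_Ico.1 hi).1
        exact le_trans (sqa_anti hdec h1) (alpha_kk_le hsum hn1)
      have hcard : ((Finset.Ico (kk α n) i₀).card • (rt n)⁻¹ : ℝ) ≤ (i₀ : ℝ) * (rt n)⁻¹ := by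
        rw [nsmul_eq_mul, Nat.card_Ico]
        apply mul_le_mul_of_nonneg_right _ (inv_nonneg.2 (rt_nonneg n))
        exact_mod_cast Nat.sub_le _ _
      have := hN1 n hNn
      linarith
  rw [Real.dist_eq, abs_lt]
  constructor <;> linarith
end Hyp2

section Hyp3
variable {α : ℕ → ℝ} {β γ : ℝ}

lemma pp_pos {n : ℕ} (h : HH α β γ n) : 0 < pp α γ n := by
  have := h.2.1; unfold pp; omega

lemma sum_LL {n : ℕ} (h : HH α β γ n) :
    ∑ i ∈ range n, LL α β γ n i = (n : ℝ) * β := by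
  have hb := h.2.1
  set k := kk α n with hk
  set m := mm γ n with hm
  have hkm : k ≤ k + m := Nat.le_add_right _ _
  have h2mn : k + 2*m ≤ n := by omega
  have hmn : k + m ≤ n := by omega
  have hkn : k ≤ n := by omega
  have B1 : ∑ i ∈ Finset.Ico 0 k, LL α β γ n i = (n:ℝ) * SS α n := by
    have hc : ∀ i ∈ Finset.Ico 0 k, LL α β γ n i = (n:ℝ) * α i := by
      intro i hi
      have h1 : i < k := (Finset.mem_Ico.1 hi).2
      simp only [LL]; rw [if_pos h, if_pos h1]
    rw [Finset.sum_congr rfl hc, ← Finset.mul_sum, SS]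
    congr 1
    rw [← Nat.Ico_zero_eq_range]
  have B2 : ∑ i ∈ Finset.Ico k (k + m), LL α β γ n i = (m:ℝ) * cc n := by
    have hc : ∀ i ∈ Finset.Ico k (k + m), LL α β γ n i = cc n := by
      intro i hi
      have h1 := Finset.mem_Ico.1 hi
      simp only [LL]
      rw [if_pos h, if_neg (by omega), if_pos (by omega)]
    rw [Finset.sum_congr rfl hc, Finset.sum_const, Nat.card_Ico, nsmul_eq_mul]
    congr 2
    omega
  have B3 : ∑ i ∈ Finset.Ico (k + m) (k + 2*m), LL α β γ n i = -((m:ℝ) * cc n) := by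
    have hc : ∀ i ∈ Finset.Ico (k + m) (k + 2*m), LL α β γ n i = -(cc n) := by
      intro i hi
      have h1 := Finset.mem_Ico.1 hi
      simp only [LL]
      rw [if_pos h, if_neg (by omega), if_neg (by omega), if_pos (by omega)]
    rw [Finset.sum_congr rfl hc, Finset.sum_const, Nat.card_Ico, nsmul_eq_mul]
    rw [mul_neg, neg_inj]
    congr 2
    omega
  have B4 : ∑ i ∈ Finset.Ico (k + 2*m) n, LL α β γ n i
      = (n:ℝ) * β - (n:ℝ) * SS α n := by
    have hc : ∀ i ∈ Finset.Ico (k + 2*m) n, LL α β γ n i = dd α β γ n := by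
      intro i hi
      have h1 := Finset.mem_Ico.1 hi
      simp only [LL]
      rw [if_pos h, if_neg (by omega), if_neg (by omega), if_neg (by omega), if_pos (by omega)]
    rw [Finset.sum_congr rfl hc, Finset.sum_const, Nat.card_Ico, nsmul_eq_mul]
    have hcard : n - (k + 2*m) = pp α γ n := rfl
    rw [hcard, dd]
    have hp : (0:ℝ) < (pp α γ n : ℝ) := by exact_mod_cast pp_pos h
    field_simp
  rw [range_eq_Ico,
    ← Finset.sum_Ico_consecutive (fun i => LL α β γ n i) (Nat.zero_le k) hkn,
    ← Finset.sum_Ico_consecutive (fun i => LL α β γ n i) hkm hmn,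
    ← Finset.sum_Ico_consecutive (fun i => LL α β γ n i) (by omega : k + m ≤ k + 2*m) h2mn,
    B1, B2, B3, B4]
  ring

lemma sum_LL_sq {n : ℕ} (h : HH α β γ n) :
    ∑ i ∈ range n, (LL α β γ n i) ^ 2
      = (n : ℝ)^2 * TT α n + (2*(mm γ n : ℝ)) * cc n ^ 2 + (pp α γ n : ℝ) * dd α β γ n ^ 2 := by
  have hb := h.2.1
  set k := kk α n with hk
  set m := mm γ n with hm
  have hkm : k ≤ k + m := Nat.le_add_right _ _
  have h2mn : k + 2*m ≤ n := by omega
  have hmn : k + m ≤ n := by omega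
  have hkn : k ≤ n := by omega
  have B1 : ∑ i ∈ Finset.Ico 0 k, (LL α β γ n i)^2 = (n:ℝ)^2 * TT α n := by
    have hc : ∀ i ∈ Finset.Ico 0 k, (LL α β γ n i)^2 = (n:ℝ)^2 * α i ^ 2 := by
      intro i hi
      have h1 : i < k := (Finset.mem_Ico.1 hi).2
      simp only [LL]; rw [if_pos h, if_pos h1, mul_pow]
    rw [Finset.sum_congr rfl hc, ← Finset.mul_sum, TT]
    congr 1
    rw [← Nat.Ico_zero_eq_range]
  have B2 : ∑ i ∈ Finset.Ico k (k + m), (LL α β γ n i)^2 = (m:ℝ) * cc n ^ 2 := by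
    have hc : ∀ i ∈ Finset.Ico k (k + m), (LL α β γ n i)^2 = cc n ^ 2 := by
      intro i hi
      have h1 := Finset.mem_Ico.1 hi
      simp only [LL]
      rw [if_pos h, if_neg (by omega), if_pos (by omega)]
    rw [Finset.sum_congr rfl hc, Finset.sum_const, Nat.card_Ico, nsmul_eq_mul]
    congr 2
    omega
  have B3 : ∑ i ∈ Finset.Ico (k + m) (k + 2*m), (LL α β γ n i)^2 = (m:ℝ) * cc n ^ 2 := by
    have hc : ∀ i ∈ Finset.Ico (k + m) (k + 2*m), (LL α β γ n i)^2 = cc n ^ 2 := by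
      intro i hi
      have h1 := Finset.mem_Ico.1 hi
      simp only [LL]
      rw [if_pos h, if_neg (by omega), if_neg (by omega), if_pos (by omega), neg_pow]
      norm_num
    rw [Finset.sum_congr rfl hc, Finset.sum_const, Nat.card_Ico, nsmul_eq_mul]
    congr 2
    omega
  have B4 : ∑ i ∈ Finset.Ico (k + 2*m) n, (LL α β γ n i)^2
      = (pp α γ n : ℝ) * dd α β γ n ^ 2 := by
    have hc : ∀ i ∈ Finset.Ico (k + 2*m) n, (LL α β γ n i)^2 = dd α β γ n ^ 2 := by
      intro i hi
      have h1 := Finset.mem_Ico.1 hi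
      simp only [LL]
      rw [if_pos h, if_neg (by omega), if_neg (by omega), if_neg (by omega), if_pos (by omega)]
    rw [Finset.sum_congr rfl hc, Finset.sum_const, Nat.card_Ico, nsmul_eq_mul]
    rfl
  rw [range_eq_Ico,
    ← Finset.sum_Ico_consecutive (fun i => (LL α β γ n i)^2) (Nat.zero_le k) hkn,
    ← Finset.sum_Ico_consecutive (fun i => (LL α β γ n i)^2) hkm hmn,
    ← Finset.sum_Ico_consecutive (fun i => (LL α β γ n i)^2) (by omega : k + m ≤ k + 2*m) h2mn,
    B1, B2, B3, B4]
  ring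

end Hyp3

lemma entry_big {α : ℕ → ℝ} {n i : ℕ} (hn : 1 ≤ n) (hi : i < kk α n) :
    cc n < |(n:ℝ) * α i| := by
  have h1 : (rt n)⁻¹ < α i ^ 2 := lt_of_lt_kk hi
  have hq0 : (0:ℝ) < Real.sqrt (rt n) := lt_of_lt_of_le one_pos (qq_one_le hn)
  have hn0 : (0:ℝ) < n := by exact_mod_cast hn
  have h2 : (Real.sqrt (rt n))⁻¹ < |α i| := by
    have := Real.sqrt_lt_sqrt (inv_nonneg.2 (rt_nonneg n)) h1
    rwa [Real.sqrt_inv, Real.sqrt_sq_eq_abs] at this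
  rw [abs_mul, abs_of_pos hn0]
  unfold cc
  rw [div_lt_iff₀ (by positivity)]
  have h3 : (1:ℝ) < |α i| * Real.sqrt (rt n) := by
    calc (1:ℝ) = (Real.sqrt (rt n))⁻¹ * Real.sqrt (rt n) := by field_simp
      _ < |α i| * Real.sqrt (rt n) := mul_lt_mul_of_pos_right h2 hq0
  nlinarith

lemma cc_div_tendsto : Tendsto (fun n : ℕ => cc n / n) atTop (𝓝 0) := by
  have h : Tendsto (fun n : ℕ => (2 * Real.sqrt (rt n))⁻¹) atTop (𝓝 0) :=
    (qq_atTop.const_mul_atTop two_pos).inv_tendsto_atTop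
  apply h.congr'
  filter_upwards [eventually_ge_atTop 1] with n hn
  have hn0 : (0:ℝ) < n := by exact_mod_cast hn
  have hq0 : (0:ℝ) < Real.sqrt (rt n) := lt_of_lt_of_le one_pos (qq_one_le hn)
  unfold cc
  field_simp

lemma abs_LL_le_cc {α : ℕ → ℝ} {β γ : ℝ} {n i : ℕ} (hki : kk α n ≤ i) :
    |LL α β γ n i| ≤ cc n := by
  by_cases h : HH α β γ n
  · simp only [LL]; rw [if_pos h, if_neg (by omega)]
    split_ifs with h2 h3 h4
    · rw [abs_of_nonneg (cc_nonneg n)]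
    · rw [abs_neg, abs_of_nonneg (cc_nonneg n)]
    · exact (h.2.2).le
    · simpa using cc_nonneg n
  · simp only [LL]; rw [if_neg h]; simpa using cc_nonneg n

lemma cc_sq (n : ℕ) : cc n ^ 2 = (n:ℝ)^2 / (4 * rt n) := by
  unfold cc
  rw [div_pow, mul_pow, Real.sq_sqrt (rt_nonneg n)]
  norm_num

section Hyp4
variable {α : ℕ → ℝ} {β γ : ℝ}

lemma LL_pointwise (hdec : ∀ i, VKle (α (i + 1)) (α i))
    (hsum : Summable fun i => (α i) ^ 2) (hγ : 0 ≤ γ) (i : ℕ) :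
    Tendsto (fun n : ℕ => LL α β γ n i / n) atTop (𝓝 (α i)) := by
  by_cases hai : α i = 0
  · rw [hai]
    apply squeeze_zero_norm' _ cc_div_tendsto
    filter_upwards [eventually_ge_atTop 1] with n hn
    have hki : kk α n ≤ i := Nat.sInf_le (by
      simp only [Set.mem_setOf_eq, hai]
      simpa using inv_nonneg.2 (rt_nonneg n))
    have h1 : |LL α β γ n i| ≤ cc n := abs_LL_le_cc hki
    have hn0 : (0:ℝ) < n := by exact_mod_cast hn
    rw [Real.norm_eq_abs, abs_div, abs_of_pos hn0]
    exact div_le_div₀ (cc_nonneg n) h1 hn0 le_rfl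
  · have hev : ∀ᶠ n : ℕ in atTop, LL α β γ n i / n = α i := by
      have hpos : 0 < α i ^ 2 := by positivity
      have h2 : ∀ᶠ n : ℕ in atTop, (rt n)⁻¹ < α i ^ 2 :=
        rt_inv_tendsto.eventually (gt_mem_nhds hpos)
      filter_upwards [h2, main_ev (α := α) (β := β) (γ := γ) hsum hγ,
        eventually_ge_atTop 1] with n hrn hHn hn1
      have hik : i < kk α n := by
        by_contra hle
        push_neg at hle
        have ha1 := sqa_anti hdec hle
        have ha2 := alpha_kk_le hsum hn1
        simp only at ha1
        linarith
      have hn0 : (n:ℝ) ≠ 0 := by positivity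
      simp only [LL]
      rw [if_pos hHn.1, if_pos hik]
      field_simp
    exact Tendsto.congr' (Filter.EventuallyEq.symm hev) tendsto_const_nhds

lemma S1_tendsto (hsum : Summable fun i => (α i) ^ 2) (hγ : 0 ≤ γ) :
    Tendsto (fun n : ℕ => (∑ i ∈ range n, LL α β γ n i) / (n : ℝ)) atTop (𝓝 β) := by
  apply Tendsto.congr' _ (tendsto_const_nhds (x := β))
  filter_upwards [main_ev (α := α) (β := β) (γ := γ) hsum hγ] with n hn
  obtain ⟨hH, -⟩ := hn
  rw [sum_LL hH]
  have hn0 : (n:ℝ) ≠ 0 := by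
    have := hH.1
    positivity
  field_simp

lemma T2_tendsto (hγ : 0 ≤ γ) :
    Tendsto (fun n : ℕ => (2*(mm γ n : ℝ)) * cc n ^ 2 / (n:ℝ)^2) atTop (𝓝 γ) := by
  have heq : ∀ᶠ n : ℕ in atTop,
      (mm γ n : ℝ)/(2 * rt n) = (2*(mm γ n : ℝ)) * cc n ^ 2 / (n:ℝ)^2 := by
    filter_upwards [eventually_ge_atTop 1] with n hn
    have hn0 : (0:ℝ) < n := by exact_mod_cast hn
    have hrt := rt_pos hn
    rw [cc_sq]
    field_simp
    ring
  have hupper : Tendsto (fun n : ℕ => γ + (2 * rt n)⁻¹) atTop (𝓝 γ) := by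
    have := (rt_atTop.const_mul_atTop two_pos).inv_tendsto_atTop
    simpa using tendsto_const_nhds.add this
  have hmid : Tendsto (fun n : ℕ => (mm γ n : ℝ)/(2 * rt n)) atTop (𝓝 γ) := by
    apply tendsto_of_tendsto_of_tendsto_of_le_of_le' tendsto_const_nhds hupper
    · filter_upwards [eventually_ge_atTop 1] with n hn
      have hrt := rt_pos hn
      rw [le_div_iff₀ (by positivity)]
      have := Nat.le_ceil (2 * γ * rt n)
      calc γ * (2 * rt n) = 2 * γ * rt n := by ring
        _ ≤ (mm γ n : ℝ) := this
    · filter_upwards [eventually_ge_atTop 1] with n hn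
      have hrt := rt_pos hn
      rw [div_le_iff₀ (by positivity)]
      have h1 : (mm γ n : ℝ) < 2 * γ * rt n + 1 := Nat.ceil_lt_add_one (by positivity)
      have h3 : ((2:ℝ) * rt n)⁻¹ * (2 * rt n) = 1 := inv_mul_cancel₀ (by positivity)
      nlinarith
  exact hmid.congr' heq

lemma T3_tendsto (hsum : Summable fun i => (α i) ^ 2) (hγ : 0 ≤ γ) :
    Tendsto (fun n : ℕ => (pp α γ n : ℝ) * dd α β γ n ^ 2 / (n:ℝ)^2) atTop (𝓝 0) := by
  set A := ∑' i, α i ^ 2 with hA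
  have hA0 : 0 ≤ A := tsum_sq_nonneg hsum
  have hbnd : Tendsto (fun n : ℕ => (4*β^2) * (n:ℝ)⁻¹ + (4*A^2) * (rt n / n)) atTop (𝓝 0) := by
    have := (inv_nat_tendsto.const_mul (4*β^2)).add (rt_div_tendsto.const_mul (4*A^2))
    simpa using this
  apply squeeze_zero_norm' _ hbnd
  filter_upwards [main_ev (α := α) (β := β) (γ := γ) hsum hγ, eventually_ge_atTop 1]
    with n hn hn1
  obtain ⟨hH, hp2⟩ := hn
  have hn0 : (0:ℝ) < n := by exact_mod_cast hn1
  have hpp : (0:ℝ) < (pp α γ n : ℝ) := by exact_mod_cast pp_pos hH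
  have hrt0 := rt_nonneg n
  have hq0 : (0:ℝ) < Real.sqrt (rt n) := lt_of_lt_of_le one_pos (qq_one_le hn1)
  have hq2 : Real.sqrt (rt n) ^ 2 = rt n := Real.sq_sqrt hrt0
  have hSS := abs_SS_le hsum hn1
  rw [Real.norm_eq_abs, abs_of_nonneg (by positivity)]
  have hdd2 : (pp α γ n : ℝ) * dd α β γ n ^ 2 / (n:ℝ)^2
      = ((n:ℝ)*β - n*SS α n)^2/((pp α γ n : ℝ) * (n:ℝ)^2) := by
    unfold dd
    rw [div_pow]
    field_simp
  rw [hdd2]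
  have hNle : ((n:ℝ)*β - n*SS α n)^2 ≤ (n:ℝ)^2 * (2*β^2 + 2*A^2*rt n) := by
    have h5 : |β - SS α n| ≤ |β| + A * Real.sqrt (rt n) := by
      calc |β - SS α n| ≤ |β| + |SS α n| := abs_sub _ _
        _ ≤ |β| + A * Real.sqrt (rt n) := by linarith
    have h6 : (β - SS α n)^2 ≤ (|β| + A * Real.sqrt (rt n))^2 := by
      rw [← sq_abs (β - SS α n)]
      exact pow_le_pow_left₀ (abs_nonneg _) h5 2
    have h7 : (|β| + A * Real.sqrt (rt n))^2 ≤ 2*β^2 + 2*A^2*rt n := by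
      nlinarith [sq_abs β, sq_nonneg (|β| - A * Real.sqrt (rt n))]
    calc ((n:ℝ)*β - n*SS α n)^2 = (n:ℝ)^2 * (β - SS α n)^2 := by ring
      _ ≤ (n:ℝ)^2 * (2*β^2 + 2*A^2*rt n) := by nlinarith [sq_nonneg (n:ℝ)]
  have hfinal : ((n:ℝ)*β - n*SS α n)^2/((pp α γ n : ℝ) * (n:ℝ)^2)
      ≤ ((n:ℝ)^2 * (2*β^2 + 2*A^2*rt n))/(((n:ℝ)/2) * (n:ℝ)^2) := by
    apply div_le_div₀ _ hNle (by positivity) _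
    · have h8 : (0:ℝ) ≤ 2*β^2 + 2*A^2*rt n := by nlinarith [sq_nonneg β, sq_nonneg A]
      nlinarith [sq_nonneg (n:ℝ)]
    · nlinarith [sq_nonneg (n:ℝ)]
  calc ((n:ℝ)*β - n*SS α n)^2/((pp α γ n : ℝ) * (n:ℝ)^2)
      ≤ ((n:ℝ)^2 * (2*β^2 + 2*A^2*rt n))/(((n:ℝ)/2) * (n:ℝ)^2) := hfinal
    _ = (4*β^2) * (n:ℝ)⁻¹ + (4*A^2) * (rt n / n) := by field_simp; ring

lemma S2_tendsto (hdec : ∀ i, VKle (α (i + 1)) (α i))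
    (hsum : Summable fun i => (α i) ^ 2) (hγ : 0 ≤ γ) :
    Tendsto (fun n : ℕ => (∑ i ∈ Finset.range n, (LL α β γ n i) ^ 2) / (n : ℝ) ^ 2)
      atTop (𝓝 (γ + ∑' i, α i ^ 2)) := by
  have hsum3 := ((TT_tendsto hdec hsum).add (T2_tendsto hγ)).add
    (T3_tendsto (β := β) hsum hγ)
  rw [add_zero] at hsum3
  rw [add_comm γ]
  apply Tendsto.congr' _ hsum3
  filter_upwards [main_ev (α := α) (β := β) (γ := γ) hsum hγ] with n hn
  obtain ⟨hH, -⟩ := hn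
  rw [sum_LL_sq hH]
  have hn0 : (n:ℝ) ≠ 0 := by
    have := hH.1
    positivity
  field_simp

end Hyp4

section Hyp5
variable {α : ℕ → ℝ} {β γ : ℝ}

lemma LL_zero_of_le {n i : ℕ} (hni : n ≤ i) : LL α β γ n i = 0 := by
  by_cases h : HH α β γ n
  · have h2 := h.2.1
    simp only [LL]
    rw [if_pos h, if_neg (by omega), if_neg (by omega), if_neg (by omega), if_neg (by omega)]
  · simp only [LL]; rw [if_neg h]

lemma LL_order (hdec : ∀ i, VKle (α (i + 1)) (α i)) {n i : ℕ} (hin : i + 1 < n) :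
    VKle (LL α β γ n (i + 1)) (LL α β γ n i) := by
  by_cases h : HH α β γ n
  · have hn1 := h.1
    have hc := cc_pos hn1
    have hd := h.2.2
    set k := kk α n with hk
    set m := mm γ n with hm
    have hn0 : (0:ℝ) < n := by exact_mod_cast hn1
    have hval : ∀ j, LL α β γ n j =
        if j < k then (n:ℝ) * α j
        else if j < k + m then cc n
        else if j < k + 2*m then -(cc n)
        else if j < n then dd α β γ n
        else 0 := by
      intro j
      simp only [LL]
      rw [if_pos h]
    rw [hval (i+1), hval i]
    by_cases h1 : i + 1 < k
    · have h0 : i < k := by omega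
      rw [if_pos h1, if_pos h0]
      exact vkle_smul _ hn0 (hdec i)
    · by_cases h2 : i + 1 < k + m
      · rw [if_neg h1, if_pos h2]
        by_cases h0 : i < k
        · rw [if_pos h0]
          exact vkle_of_abs_lt (by rw [abs_of_pos hc]; exact entry_big hn1 h0)
        · rw [if_neg h0, if_pos (by omega : i < k + m)]
          exact vkle_refl _
      · by_cases h3 : i + 1 < k + 2*m
        · rw [if_neg h1, if_neg h2, if_pos h3]
          by_cases h0 : i < k
          · rw [if_pos h0]
            exact vkle_of_abs_lt (by rw [abs_neg, abs_of_pos hc]; exact entry_big hn1 h0)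
          · by_cases h4 : i < k + m
            · rw [if_neg h0, if_pos h4]
              exact vkle_neg_self hc.le
            · rw [if_neg h0, if_neg h4, if_pos (by omega : i < k + 2*m)]
              exact vkle_refl _
        · rw [if_neg h1, if_neg h2, if_neg h3, if_pos hin]
          by_cases h0 : i < k
          · rw [if_pos h0]
            exact vkle_of_abs_lt (lt_trans hd (entry_big hn1 h0))
          · by_cases h4 : i < k + m
            · rw [if_neg h0, if_pos h4]
              exact vkle_of_abs_lt (by rwa [abs_of_pos hc])
            · by_cases h6 : i < k + 2*m
              · rw [if_neg h0, if_neg h4, if_pos h6]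
                exact vkle_of_abs_lt (by rwa [abs_neg, abs_of_pos hc])
              · rw [if_neg h0, if_neg h4, if_neg h6, if_pos (by omega : i < n)]
                exact vkle_refl _
  · have hz : ∀ j, LL α β γ n j = 0 := by
      intro j
      simp only [LL]
      rw [if_neg h]
    rw [hz (i+1), hz i]
    exact vkle_refl 0

end Hyp5

end VK

/-- Every triple `(α,β,γ) ∈ Ω` arises as the VK parameters of some
Vershik–Kerov sequence. -/
theorem exists_vk_sequence (α : ℕ → ℝ) (β γ : ℝ)
    (hdec : ∀ i, VKle (α (i + 1)) (α i))
    (hsum : Summable fun i => (α i) ^ 2)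
    (hγ : 0 ≤ γ) :
    ∃ Λ : ℕ → ℕ → ℝ,
      (∀ n i, n ≤ i → Λ n i = 0) ∧
      (∀ n i, i + 1 < n → VKle (Λ n (i + 1)) (Λ n i)) ∧
      (∀ i, Tendsto (fun n : ℕ => Λ n i / (n : ℝ)) atTop (𝓝 (α i))) ∧
      Tendsto (fun n : ℕ => (∑ i ∈ Finset.range n, Λ n i) / (n : ℝ)) atTop (𝓝 β) ∧
      Tendsto (fun n : ℕ => (∑ i ∈ Finset.range n, (Λ n i) ^ 2) / (n : ℝ) ^ 2)
        atTop (𝓝 (γ + ∑' i, (α i) ^ 2)) := by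
  refine ⟨VK.LL α β γ, ?_, ?_, ?_, ?_, ?_⟩
  · intro n i hni
    exact VK.LL_zero_of_le hni
  · intro n i hin
    exact VK.LL_order hdec hin
  · intro i
    exact VK.LL_pointwise hdec hsum hγ i
  · exact VK.S1_tendsto hsum hγ
  · exact VK.S2_tendsto hdec hsum hγ
end

section
/- Fix k > 0. There exists a constant C > 0, depending only on k, such that for every finitely supported real sequence λ one has g_4(λ) ≤ C · g_2(λ)². Moreover 2 g_2(λ) = k² p_1(λ)² + k p_2(λ), so g_2(λ) ≥ 0. -/
open Filter Topology

/-- The Pochhammer symbol `(a)_j = a(a+1)⋯(a+j-1)`. -/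
noncomputable def poch (a : ℝ) (j : ℕ) : ℝ := ∏ i ∈ Finset.range j, (a + i)

/-- `g_j(λ) = ∑_{m : Σ m_l = j} ∏_l ((k)_{m_l}/m_l!) λ_l^{m_l}`, the Taylor coefficients
of `z ↦ ∏_l (1-λ_l z)^{-k}` at `z = 0`. -/
noncomputable def gcoef (k : ℝ) (lam : ℕ → ℝ) (j : ℕ) : ℝ :=
  ∑' m : {m : ℕ →₀ ℕ // (m : ℕ →₀ ℕ).sum (fun _ e => e) = j},
    ∏ l ∈ (m : ℕ →₀ ℕ).support,
      (poch k ((m : ℕ →₀ ℕ) l) / (Nat.factorial ((m : ℕ →₀ ℕ) l)) * lam l ^ ((m : ℕ →₀ ℕ) l))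

namespace G4aux

noncomputable def cc (k : ℝ) (n : ℕ) : ℝ := poch k n / (Nat.factorial n)

noncomputable def F (k x : ℝ) : PowerSeries ℝ := PowerSeries.mk fun n => cc k n * x ^ n

@[simp] lemma cc_zero (k : ℝ) : cc k 0 = 1 := by simp [cc, poch]

@[simp] lemma coeff_F (k x : ℝ) (n : ℕ) :
    PowerSeries.coeff n (F k x) = cc k n * x ^ n := by simp [F]

lemma cc_one (k : ℝ) : cc k 1 = k := by simp [cc, poch]
lemma cc_two (k : ℝ) : cc k 2 = k * (k+1) / 2 := by
  simp [cc, poch, Finset.prod_range_succ, Nat.factorial]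
lemma cc_three (k : ℝ) : cc k 3 = k * (k+1) * (k+2) / 6 := by
  rw [cc, poch]
  simp [Finset.prod_range_succ, Nat.factorial]
lemma cc_four (k : ℝ) : cc k 4 = k * (k+1) * (k+2) * (k+3) / 24 := by
  rw [cc, poch]
  simp [Finset.prod_range_succ, Nat.factorial]

/-- gcoef as a coefficient of a finite product of power series -/
lemma gcoef_eq (k : ℝ) (lam : ℕ → ℝ) (hf : (Function.support lam).Finite) (j : ℕ) :
    gcoef k lam j = PowerSeries.coeff j (∏ l ∈ hf.toFinset, F k (lam l)) := by
  classical
  set S := hf.toFinset with hS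
  rw [PowerSeries.coeff_prod]
  have hind : gcoef k lam j = ∑' m : ℕ →₀ ℕ,
      Set.indicator {m : ℕ →₀ ℕ | m.sum (fun _ e => e) = j}
        (fun m => ∏ l ∈ m.support,
          (poch k (m l) / (Nat.factorial (m l)) * lam l ^ (m l))) m := by
    rw [gcoef, ← tsum_subtype]; rfl
  rw [hind]
  rw [tsum_eq_sum (s := Finset.finsuppAntidiag S j) ?h0]
  case h0 =>
    intro m hm
    by_cases hs : m.sum (fun _ e => e) = j
    · by_cases hsub : m.support ⊆ S
      · exfalso
        apply hm
        rw [Finset.mem_finsuppAntidiag]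
        refine ⟨?_, hsub⟩
        rw [← hs]
        exact (Finset.sum_subset hsub (by
          intro x _ hx
          simpa [Finsupp.mem_support_iff] using hx)).symm
      · obtain ⟨l, hl, hlS⟩ := Finset.not_subset.mp hsub
        have hlam : lam l = 0 := by
          by_contra h
          exact hlS (by simp [hS, Function.mem_support, h])
        rw [Set.indicator_of_mem (show m ∈ {m : ℕ →₀ ℕ | m.sum (fun _ e => e) = j} from hs)]
        refine Finset.prod_eq_zero hl ?_
        have h0 : m l ≠ 0 := Finsupp.mem_support_iff.mp hl
        rw [hlam, zero_pow h0, mul_zero]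
    · exact Set.indicator_of_notMem (show m ∉ {m : ℕ →₀ ℕ | m.sum (fun _ e => e) = j} from hs)
        (fun m => ∏ l ∈ m.support, (poch k (m l) / (Nat.factorial (m l)) * lam l ^ (m l)))
  · apply Finset.sum_congr rfl
    intro m hm
    rw [Finset.mem_finsuppAntidiag] at hm
    obtain ⟨hsum, hsub⟩ := hm
    have hs : m.sum (fun _ e => e) = j := by
      rw [← hsum]
      exact Finset.sum_subset hsub (by
        intro x _ hx
        simpa [Finsupp.mem_support_iff] using hx)
    rw [Set.indicator_of_mem (show m ∈ {m : ℕ →₀ ℕ | m.sum (fun _ e => e) = j} from hs)]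
    rw [Finset.prod_subset hsub ?_]
    · apply Finset.prod_congr rfl
      intro l _
      simp [cc]
    · intro x _ hx
      have : m x = 0 := by simpa [Finsupp.mem_support_iff] using hx
      simp [this, poch]

lemma coeff_mul' (φ ψ : PowerSeries ℝ) (n : ℕ) :
    PowerSeries.coeff n (φ * ψ) =
      ∑ i ∈ Finset.range (n+1), PowerSeries.coeff i φ * PowerSeries.coeff (n - i) ψ := by
  rw [PowerSeries.coeff_mul, Finset.Nat.sum_antidiagonal_eq_sum_range_succ_mk]

lemma coeffs (k : ℝ) (lam : ℕ → ℝ) (S : Finset ℕ) :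
    PowerSeries.coeff 0 (∏ l ∈ S, F k (lam l)) = 1 ∧
    PowerSeries.coeff 1 (∏ l ∈ S, F k (lam l)) = k * (∑ l ∈ S, lam l) ∧
    PowerSeries.coeff 2 (∏ l ∈ S, F k (lam l)) =
      k^2*(∑ l ∈ S, lam l)^2/2 + k*(∑ l ∈ S, lam l^2)/2 ∧
    PowerSeries.coeff 3 (∏ l ∈ S, F k (lam l)) =
      k^3*(∑ l ∈ S, lam l)^3/6 + k^2*(∑ l ∈ S, lam l)*(∑ l ∈ S, lam l^2)/2
        + k*(∑ l ∈ S, lam l^3)/3 ∧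
    PowerSeries.coeff 4 (∏ l ∈ S, F k (lam l)) =
      k^4*(∑ l ∈ S, lam l)^4/24 + k^3*(∑ l ∈ S, lam l)^2*(∑ l ∈ S, lam l^2)/4
        + k^2*(∑ l ∈ S, lam l^2)^2/8 + k^2*(∑ l ∈ S, lam l)*(∑ l ∈ S, lam l^3)/3
        + k*(∑ l ∈ S, lam l^4)/4 := by
  classical
  induction S using Finset.induction_on with
  | empty => simp [PowerSeries.coeff_one]
  | @insert a S ha ih =>
    obtain ⟨h0, h1, h2, h3, h4⟩ := ih
    rw [Finset.prod_insert ha]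
    simp only [Finset.sum_insert ha]
    simp only [coeff_mul', Finset.sum_range_succ, Finset.sum_range_zero, coeff_F]
    norm_num [h0, h1, h2, h3, h4, cc_one, cc_two, cc_three, cc_four]
    refine ⟨by ring, by ring, by ring, by ring⟩
end G4aux

lemma tsum_fin (f : ℕ → ℝ) (S : Finset ℕ) (h : ∀ b ∉ S, f b = 0) :
    ∑' j, f j = ∑ j ∈ S, f j := tsum_eq_sum h


/-- There is `C > 0` depending only on `k` with `g_4(λ) ≤ C g_2(λ)²` for
all finitely supported real `λ`; moreover `2g_2(λ) = k²p_1(λ)² + kp_2(λ)`, so `g_2(λ) ≥ 0`. -/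
theorem g4_le_g2_sq (k : ℝ) (hk : 0 < k) :
    (∃ C : ℝ, 0 < C ∧ ∀ lam : ℕ → ℝ, (Function.support lam).Finite →
      gcoef k lam 4 ≤ C * (gcoef k lam 2) ^ 2) ∧
    (∀ lam : ℕ → ℝ, (Function.support lam).Finite →
      2 * gcoef k lam 2 = k ^ 2 * (∑' j, lam j) ^ 2 + k * (∑' j, (lam j) ^ 2) ∧
      0 ≤ gcoef k lam 2) := by
  have key : ∀ lam : ℕ → ℝ, ∀ hf : (Function.support lam).Finite,
      gcoef k lam 2 = k^2*(∑ l ∈ hf.toFinset, lam l)^2/2 + k*(∑ l ∈ hf.toFinset, lam l^2)/2 ∧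
      gcoef k lam 4 = k^4*(∑ l ∈ hf.toFinset, lam l)^4/24
        + k^3*(∑ l ∈ hf.toFinset, lam l)^2*(∑ l ∈ hf.toFinset, lam l^2)/4
        + k^2*(∑ l ∈ hf.toFinset, lam l^2)^2/8
        + k^2*(∑ l ∈ hf.toFinset, lam l)*(∑ l ∈ hf.toFinset, lam l^3)/3
        + k*(∑ l ∈ hf.toFinset, lam l^4)/4 := by
    intro lam hf
    obtain ⟨-, -, h2, -, h4⟩ := G4aux.coeffs k lam hf.toFinset
    exact ⟨by rw [G4aux.gcoef_eq k lam hf 2, h2], by rw [G4aux.gcoef_eq k lam hf 4, h4]⟩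
  constructor
  · refine ⟨(2 + 4*k)/k, by positivity, ?_⟩
    intro lam hf
    obtain ⟨h2, h4⟩ := key lam hf
    set S := hf.toFinset
    set p1 := ∑ l ∈ S, lam l with hp1def
    set p2 := ∑ l ∈ S, lam l^2 with hp2def
    set p3 := ∑ l ∈ S, lam l^3 with hp3def
    set p4 := ∑ l ∈ S, lam l^4 with hp4def
    have hp2 : 0 ≤ p2 := Finset.sum_nonneg fun l _ => sq_nonneg _
    have hsq : ∀ l ∈ S, lam l ^ 2 ≤ p2 := fun l hl =>
      Finset.single_le_sum (fun i _ => sq_nonneg (lam i)) hl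
    have hp4 : p4 ≤ p2^2 := by
      calc p4 = ∑ l ∈ S, lam l^2 * lam l^2 := by
            apply Finset.sum_congr rfl; intro l _; ring
        _ ≤ ∑ l ∈ S, lam l^2 * p2 := by
            apply Finset.sum_le_sum
            intro l hl
            exact mul_le_mul_of_nonneg_left (hsq l hl) (sq_nonneg _)
        _ = p2 * p2 := by rw [← Finset.sum_mul]
        _ = p2^2 := by ring
    have hcs : p3^2 ≤ p2 * p4 := by
      have := Finset.sum_mul_sq_le_sq_mul_sq S (fun l => lam l) (fun l => lam l^2)
      calc p3^2 = (∑ l ∈ S, lam l * lam l^2)^2 := by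
            congr 1; apply Finset.sum_congr rfl; intro l _; ring
        _ ≤ (∑ l ∈ S, lam l^2) * (∑ l ∈ S, (lam l^2)^2) := by
            convert this using 3 <;> ring
        _ = p2 * p4 := by
            congr 1; apply Finset.sum_congr rfl; intro l _; ring
    have hp3 : p3^2 ≤ p2^3 := by nlinarith
    have h31 : p3 * p1 ≤ (p2^2 + p2 * p1^2)/2 := by
      nlinarith [sq_nonneg (p2^2 - p2*p1^2), sq_nonneg (p2^2 + p2*p1^2 - 2*p3*p1),
        sq_nonneg (p2^2 + p2*p1^2 + 2*p3*p1), mul_nonneg hp2 (sq_nonneg p1),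
        sq_nonneg (p3*p1), sq_nonneg p1]
    rw [h2, h4, div_mul_eq_mul_div, le_div_iff₀ hk]
    nlinarith [mul_le_mul_of_nonneg_left hp4 (le_of_lt (by positivity : (0:ℝ) < k^2)),
      mul_le_mul_of_nonneg_left h31 (le_of_lt (by positivity : (0:ℝ) < k^3)),
      mul_nonneg (mul_nonneg (pow_pos hk 5).le (sq_nonneg p1)) (sq_nonneg p1),
      mul_nonneg (pow_pos hk 3).le (mul_nonneg hp2 hp2),
      mul_nonneg (mul_nonneg (pow_pos hk 3).le (sq_nonneg p1)) hp2,
      mul_nonneg (pow_pos hk 2).le (mul_nonneg hp2 hp2),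
      mul_nonneg (mul_nonneg (pow_pos hk 4).le (sq_nonneg p1)) hp2]
  · intro lam hf
    obtain ⟨h2, -⟩ := key lam hf
    have ht1 : ∑' j, lam j = ∑ l ∈ hf.toFinset, lam l := by
      apply tsum_eq_sum
      intro b hb
      by_contra h
      exact hb (hf.mem_toFinset.mpr h)
    have ht2 : ∑' j, (lam j)^2 = ∑ l ∈ hf.toFinset, lam l^2 := by
      apply tsum_eq_sum
      intro b hb
      have : lam b = 0 := by
        by_contra h
        exact hb (hf.mem_toFinset.mpr h)
      simp [this]
    have hp2 : 0 ≤ ∑ l ∈ hf.toFinset, lam l^2 :=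
      Finset.sum_nonneg fun l _ => sq_nonneg _
    constructor
    · rw [h2, ht1, ht2]; ring
    · rw [h2]
      have := sq_nonneg (∑ l ∈ hf.toFinset, lam l)
      positivity
end

section
/- Let α = (α_i)_{i∈ℕ} be a real sequence and β ∈ ℝ. There exists a Vershik–Kerov sequence (λ(n)) with λ(n)_i ≥ 0 for all i and n whose VK parameters are (α, β, 0) if and only if β ≥ 0, α_1 ≥ α_2 ≥ … ≥ 0, and Σ_{i=1}^∞ α_i ≤ β. -/
open Filter Topology

private lemma vkle_of_nonneg_le {x y : ℝ} (hx : 0 ≤ x) (h : x ≤ y) : VKle x y := by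
  rcases eq_or_lt_of_le h with rfl | hlt
  · exact Or.inr ⟨rfl, le_rfl⟩
  · exact Or.inl (by rw [abs_of_nonneg hx, abs_of_nonneg (hx.trans h)]; exact hlt)

private lemma le_of_vkle {x y : ℝ} (hx : 0 ≤ x) (hy : 0 ≤ y) (h : VKle x y) : x ≤ y := by
  rcases h with h | ⟨-, h⟩
  · rw [abs_of_nonneg hx, abs_of_nonneg hy] at h
    exact h.le
  · exact h

private lemma sum_ite_lt (n m : ℕ) (c : ℝ) :
    ∑ i ∈ Finset.range n, (if i < m then c else 0) = ((min n m : ℕ) : ℝ) * c := by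
  classical
  have hf : (Finset.range n).filter (fun i => i < m) = Finset.range (min n m) := by
    ext x
    simp [Nat.lt_min]
  rw [Finset.sum_ite, Finset.sum_const, Finset.sum_const, smul_zero, add_zero, hf,
    Finset.card_range, nsmul_eq_mul]

private lemma tendsto_sqrt_nat : Tendsto (fun n : ℕ => Real.sqrt n) atTop atTop := by
  apply tendsto_atTop_atTop.2
  intro b
  refine ⟨⌈b ^ 2⌉₊, fun n hn => ?_⟩
  rcases le_or_gt b 0 with hb | hb
  · exact hb.trans (Real.sqrt_nonneg _)
  · rw [show b = Real.sqrt (b ^ 2) by rw [Real.sqrt_sq hb.le]]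
    apply Real.sqrt_le_sqrt
    exact (Nat.le_ceil _).trans (by exact_mod_cast hn)

private lemma tendsto_inv_sqrt_nat :
    Tendsto (fun n : ℕ => (Real.sqrt n)⁻¹) atTop (𝓝 0) :=
  tendsto_sqrt_nat.inv_tendsto_atTop

set_option maxHeartbeats 1000000 in
/-- There exists a Vershik–Kerov sequence with nonnegative entries and VK
parameters `(α, β, 0)` if and only if `β ≥ 0`, `α_1 ≥ α_2 ≥ … ≥ 0` and `∑ α_i ≤ β`. -/
theorem nonneg_vk_parameters (α : ℕ → ℝ) (β : ℝ) :
    (∃ Λ : ℕ → ℕ → ℝ,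
      (∀ n i, n ≤ i → Λ n i = 0) ∧
      (∀ n i, 0 ≤ Λ n i) ∧
      (∀ n i, i + 1 < n → VKle (Λ n (i + 1)) (Λ n i)) ∧
      (∀ i, Tendsto (fun n : ℕ => Λ n i / (n : ℝ)) atTop (𝓝 (α i))) ∧
      Tendsto (fun n : ℕ => (∑ i ∈ Finset.range n, Λ n i) / (n : ℝ)) atTop (𝓝 β) ∧
      Tendsto (fun n : ℕ => (∑ i ∈ Finset.range n, (Λ n i) ^ 2) / (n : ℝ) ^ 2)
        atTop (𝓝 (∑' i, (α i) ^ 2)))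
    ↔ (0 ≤ β ∧ (∀ i, α (i + 1) ≤ α i) ∧ (∀ i, 0 ≤ α i) ∧
        Summable α ∧ ∑' i, α i ≤ β) := by
  constructor
  · -- Forward direction
    rintro ⟨Λ, -, hpos, hmono, hptw, hsum, -⟩
    have hdivpos : ∀ i n : ℕ, 0 ≤ Λ n i / (n : ℝ) :=
      fun i n => div_nonneg (hpos n i) (Nat.cast_nonneg n)
    have hα : ∀ i, 0 ≤ α i :=
      fun i => ge_of_tendsto (hptw i) (Eventually.of_forall fun n => hdivpos i n)
    have hdec : ∀ i, α (i + 1) ≤ α i := by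
      intro i
      refine le_of_tendsto_of_tendsto (hptw (i + 1)) (hptw i) ?_
      filter_upwards [eventually_ge_atTop (i + 2)] with n hn
      exact div_le_div_of_nonneg_right
        (le_of_vkle (hpos n (i + 1)) (hpos n i) (hmono n i hn)) (Nat.cast_nonneg n)
    have key : ∀ M, ∑ i ∈ Finset.range M, α i ≤ β := by
      intro M
      have h1 : Tendsto (fun n : ℕ => ∑ i ∈ Finset.range M, Λ n i / (n : ℝ)) atTop
          (𝓝 (∑ i ∈ Finset.range M, α i)) :=
        tendsto_finset_sum _ (fun i _ => hptw i)
      refine le_of_tendsto_of_tendsto h1 hsum ?_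
      filter_upwards [eventually_ge_atTop M] with n hn
      rw [← Finset.sum_div]
      exact div_le_div_of_nonneg_right
        (Finset.sum_le_sum_of_subset_of_nonneg
          (Finset.range_subset_range.2 hn) (fun i _ _ => hpos n i)) (Nat.cast_nonneg n)
    have hsummable : Summable α := summable_of_sum_range_le hα key
    have hβle : ∑' i, α i ≤ β := Summable.tsum_le_of_sum_range_le hsummable key
    exact ⟨(tsum_nonneg hα).trans hβle, hdec, hα, hsummable, hβle⟩
  · -- Backward direction
    rintro ⟨hβ, hdec, hα, hsummable, hle⟩
    have hanti : Antitone α := antitone_nat_of_succ_le hdec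
    set s := ∑' i, α i with hs
    set e := β - s with he_def
    have he : 0 ≤ e := sub_nonneg.2 hle
    set t : ℕ → ℕ := fun n => ⌊e * Real.sqrt n⌋₊ with ht
    set b : ℕ → ℕ → ℝ := fun n i => if i < t n then Real.sqrt n else 0 with hb
    have hb0 : ∀ n i, 0 ≤ b n i := by
      intro n i
      simp only [hb]
      split <;> [exact Real.sqrt_nonneg _; exact le_rfl]
    have hble : ∀ n i, b n i ≤ Real.sqrt n := by
      intro n i
      simp only [hb]
      split <;> [exact le_rfl; exact Real.sqrt_nonneg _]
    have hbanti : ∀ n i j, i ≤ j → b n j ≤ b n i := by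
      intro n i j hij
      simp only [hb]
      by_cases hj : j < t n
      · rw [if_pos hj, if_pos (lt_of_le_of_lt hij hj)]
      · rw [if_neg hj]
        split <;> [exact Real.sqrt_nonneg _; exact le_rfl]
    refine ⟨fun n i => if i < n then max ((n : ℝ) * α i) (b n i) else 0,
      fun n i h => if_neg (not_lt.2 h), ?_, ?_, ?_, ?_, ?_⟩
    · intro n i
      show 0 ≤ if i < n then max ((n : ℝ) * α i) (b n i) else 0
      split
      · exact le_max_of_le_right (hb0 n i)
      · exact le_rfl
    · intro n i h
      show VKle (if i + 1 < n then max ((n : ℝ) * α (i + 1)) (b n (i + 1)) else 0)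
        (if i < n then max ((n : ℝ) * α i) (b n i) else 0)
      rw [if_pos h, if_pos (Nat.lt_of_succ_lt h)]
      exact vkle_of_nonneg_le (le_max_of_le_right (hb0 n (i + 1)))
        (max_le_max (mul_le_mul_of_nonneg_left (hdec i) (Nat.cast_nonneg n))
          (hbanti n i (i + 1) (Nat.le_succ i)))
    · -- pointwise limits
      intro i
      have hup : Tendsto (fun n : ℕ => α i + (Real.sqrt n)⁻¹) atTop (𝓝 (α i)) := by
        simpa using tendsto_const_nhds.add tendsto_inv_sqrt_nat
      refine tendsto_of_tendsto_of_tendsto_of_le_of_le' tendsto_const_nhds hup ?_ ?_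
      · filter_upwards [eventually_ge_atTop (i + 1)] with n hn
        have hn0 : (0 : ℝ) < n := by
          exact_mod_cast Nat.lt_of_lt_of_le (Nat.succ_pos i) hn
        rw [if_pos (show i < n from hn), le_div_iff₀ hn0]
        calc α i * n = (n : ℝ) * α i := mul_comm _ _
          _ ≤ max ((n : ℝ) * α i) (b n i) := le_max_left _ _
      · filter_upwards [eventually_ge_atTop (i + 1)] with n hn
        have hn0 : (0 : ℝ) < n := by
          exact_mod_cast Nat.lt_of_lt_of_le (Nat.succ_pos i) hn
        have hsn : (0 : ℝ) < Real.sqrt n := Real.sqrt_pos.2 hn0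
        rw [if_pos (show i < n from hn), div_le_iff₀ hn0]
        have h1 : max ((n : ℝ) * α i) (b n i) ≤ (n : ℝ) * α i + Real.sqrt n :=
          max_le (le_add_of_nonneg_right (Real.sqrt_nonneg _))
            ((hble n i).trans (le_add_of_nonneg_left
              (mul_nonneg (Nat.cast_nonneg n) (hα i))))
        have hsq : Real.sqrt n * Real.sqrt n = (n : ℝ) := Real.mul_self_sqrt hn0.le
        have hid : (Real.sqrt n)⁻¹ * (n : ℝ) = Real.sqrt n := by
          rw [inv_mul_eq_div, div_eq_iff hsn.ne']
          exact hsq.symm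
        rw [add_mul, hid]
        nlinarith [h1]
    · -- the first-moment limit
      have hA : Tendsto (fun n : ℕ => ∑ i ∈ Finset.range n, α i) atTop (𝓝 s) :=
        hsummable.hasSum.tendsto_sum_nat
      have hB : Tendsto (fun n : ℕ => (∑ i ∈ Finset.range n, b n i) / (n : ℝ))
          atTop (𝓝 e) := by
        have hlo : Tendsto (fun n : ℕ => e - (Real.sqrt n)⁻¹) atTop (𝓝 e) := by
          simpa using tendsto_const_nhds.sub tendsto_inv_sqrt_nat
        refine tendsto_of_tendsto_of_tendsto_of_le_of_le' hlo tendsto_const_nhds ?_ ?_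
        · filter_upwards [eventually_ge_atTop 1,
            tendsto_sqrt_nat.eventually_ge_atTop e] with n hn1 hen
          have hn0 : (0 : ℝ) < n := by exact_mod_cast hn1
          have hsn : (0 : ℝ) < Real.sqrt n := Real.sqrt_pos.2 hn0
          have hsum_b : ∑ i ∈ Finset.range n, b n i
              = ((min n (t n) : ℕ) : ℝ) * Real.sqrt n := by
            simp only [hb]; exact sum_ite_lt n (t n) _
          have htn : t n ≤ n := by
            have h1 : ((t n : ℕ) : ℝ) ≤ e * Real.sqrt n :=
              Nat.floor_le (mul_nonneg he (Real.sqrt_nonneg _))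
            have h2 : e * Real.sqrt n ≤ (n : ℝ) := by
              nlinarith [Real.mul_self_sqrt hn0.le]
            exact_mod_cast h1.trans h2
          rw [hsum_b, min_eq_right htn, le_div_iff₀ hn0]
          have hfl : e * Real.sqrt n - 1 < ((t n : ℕ) : ℝ) := Nat.sub_one_lt_floor _
          have hsq : Real.sqrt n * Real.sqrt n = (n : ℝ) := Real.mul_self_sqrt hn0.le
          have he2 : e * (Real.sqrt n * Real.sqrt n) = e * n := by rw [hsq]
          have hid : (Real.sqrt n)⁻¹ * (n : ℝ) = Real.sqrt n := by
            rw [inv_mul_eq_div, div_eq_iff hsn.ne']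
            exact hsq.symm
          nlinarith [mul_le_mul_of_nonneg_right hfl.le (Real.sqrt_nonneg (n : ℝ)), he2, hid]
        · filter_upwards [eventually_ge_atTop 1,
            tendsto_sqrt_nat.eventually_ge_atTop e] with n hn1 hen
          have hn0 : (0 : ℝ) < n := by exact_mod_cast hn1
          have hsum_b : ∑ i ∈ Finset.range n, b n i
              = ((min n (t n) : ℕ) : ℝ) * Real.sqrt n := by
            simp only [hb]; exact sum_ite_lt n (t n) _
          have h1 : ((t n : ℕ) : ℝ) ≤ e * Real.sqrt n :=
            Nat.floor_le (mul_nonneg he (Real.sqrt_nonneg _))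
          have hmin : ((min n (t n) : ℕ) : ℝ) ≤ e * Real.sqrt n :=
            le_trans (by exact_mod_cast min_le_right n (t n)) h1
          rw [hsum_b, div_le_iff₀ hn0]
          have hsq : Real.sqrt n * Real.sqrt n = (n : ℝ) := Real.mul_self_sqrt hn0.le
          have he2 : e * (Real.sqrt n * Real.sqrt n) = e * n := by rw [hsq]
          nlinarith [mul_le_mul_of_nonneg_right hmin (Real.sqrt_nonneg (n : ℝ)), he2]
      have hE : Tendsto
          (fun n : ℕ => (∑ i ∈ Finset.range n, min ((n : ℝ) * α i) (b n i)) / (n : ℝ))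
          atTop (𝓝 0) := by
        rw [NormedAddCommGroup.tendsto_nhds_zero]
        intro ε hε
        obtain ⟨M, hM⟩ := (Metric.tendsto_atTop.1 (tendsto_sum_nat_add α)) (ε / 2)
          (by linarith)
        have htail : ∑' k, α (k + M) < ε / 2 := by
          have := hM M le_rfl
          rwa [Real.dist_eq, sub_zero,
            abs_of_nonneg (tsum_nonneg fun k => hα _)] at this
        have hshift : Summable (fun k => α (k + M)) := (summable_nat_add_iff M).2 hsummable
        filter_upwards [eventually_ge_atTop (max M 1),
          tendsto_sqrt_nat.eventually_gt_atTop (2 * M / ε)] with n hn hsn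
        have hMn : M ≤ n := le_trans (le_max_left _ _) hn
        have hn1 : 1 ≤ n := le_trans (le_max_right _ _) hn
        have hn0 : (0 : ℝ) < n := by exact_mod_cast hn1
        have hs0 : (0 : ℝ) < Real.sqrt n := Real.sqrt_pos.2 hn0
        have hE0 : (0 : ℝ) ≤ ∑ i ∈ Finset.range n, min ((n : ℝ) * α i) (b n i) :=
          Finset.sum_nonneg fun i _ =>
            le_min (mul_nonneg (Nat.cast_nonneg n) (hα i)) (hb0 n i)
        have hsplit : ∑ i ∈ Finset.range n, min ((n : ℝ) * α i) (b n i)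
            = ∑ i ∈ Finset.Ico 0 M, min ((n : ℝ) * α i) (b n i)
              + ∑ i ∈ Finset.Ico M n, min ((n : ℝ) * α i) (b n i) := by
          rw [Finset.range_eq_Ico, ← Finset.sum_Ico_consecutive _ (Nat.zero_le M) hMn]
        have h1 : ∑ i ∈ Finset.Ico 0 M, min ((n : ℝ) * α i) (b n i)
            ≤ (M : ℝ) * Real.sqrt n := by
          calc ∑ i ∈ Finset.Ico 0 M, min ((n : ℝ) * α i) (b n i)
              ≤ ∑ _i ∈ Finset.Ico 0 M, Real.sqrt n :=
                Finset.sum_le_sum fun i _ => (min_le_right _ _).trans (hble n i)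
            _ = (M : ℝ) * Real.sqrt n := by
                rw [Finset.sum_const, Nat.card_Ico, Nat.sub_zero, nsmul_eq_mul]
        have h2 : ∑ i ∈ Finset.Ico M n, min ((n : ℝ) * α i) (b n i)
            ≤ (n : ℝ) * ∑' k, α (k + M) := by
          calc ∑ i ∈ Finset.Ico M n, min ((n : ℝ) * α i) (b n i)
              ≤ ∑ i ∈ Finset.Ico M n, (n : ℝ) * α i :=
                Finset.sum_le_sum fun i _ => min_le_left _ _
            _ = (n : ℝ) * ∑ i ∈ Finset.Ico M n, α i := by rw [Finset.mul_sum]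
            _ ≤ (n : ℝ) * ∑' k, α (k + M) := by
                refine mul_le_mul_of_nonneg_left ?_ hn0.le
                rw [Finset.sum_Ico_eq_sum_range]
                have := Summable.sum_le_tsum (Finset.range (n - M)) (fun k _ => hα _) hshift
                simpa [add_comm] using this
        have hM2 : (M : ℝ) * Real.sqrt n < ε / 2 * n := by
          rw [div_lt_iff₀ hε] at hsn
          nlinarith [mul_lt_mul_of_pos_right hsn hs0, Real.mul_self_sqrt hn0.le]
        have htailmul : (n : ℝ) * ∑' k, α (k + M) ≤ (n : ℝ) * (ε / 2) :=
          mul_le_mul_of_nonneg_left htail.le hn0.le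
        rw [Real.norm_eq_abs, abs_of_nonneg (div_nonneg hE0 hn0.le), div_lt_iff₀ hn0]
        nlinarith
      have hcomb := (hA.add hB).sub hE
      have hβeq : s + e - 0 = β := by rw [he_def]; ring
      rw [hβeq] at hcomb
      refine hcomb.congr' ?_
      filter_upwards [eventually_ge_atTop 1] with n hn1
      have hn0 : ((n : ℝ)) ≠ 0 := by
        have : (0 : ℝ) < n := by exact_mod_cast hn1
        exact this.ne'
      have hΛ : ∑ i ∈ Finset.range n, (if i < n then max ((n : ℝ) * α i) (b n i) else 0)
          = ∑ i ∈ Finset.range n, max ((n : ℝ) * α i) (b n i) :=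
        Finset.sum_congr rfl fun i hi => if_pos (Finset.mem_range.1 hi)
      have hmaxsum : ∑ i ∈ Finset.range n, max ((n : ℝ) * α i) (b n i)
          = (∑ i ∈ Finset.range n, (n : ℝ) * α i) + (∑ i ∈ Finset.range n, b n i)
            - ∑ i ∈ Finset.range n, min ((n : ℝ) * α i) (b n i) := by
        rw [← Finset.sum_add_distrib, ← Finset.sum_sub_distrib]
        refine Finset.sum_congr rfl fun i _ => ?_
        have := max_add_min ((n : ℝ) * α i) (b n i)
        linarith
      rw [hΛ, hmaxsum, sub_div, add_div, ← Finset.mul_sum,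
        mul_div_cancel_left₀ _ hn0]
    · -- the second-moment limit
      have hα2 : Summable (fun i => α i ^ 2) :=
        Summable.of_nonneg_of_le (fun i => sq_nonneg _)
          (fun i => by nlinarith [hanti (Nat.zero_le i), hα i])
          (hsummable.mul_left (α 0))
      have hA2 : Tendsto (fun n : ℕ => ∑ i ∈ Finset.range n, α i ^ 2) atTop
          (𝓝 (∑' i, α i ^ 2)) := hα2.hasSum.tendsto_sum_nat
      have hup : Tendsto
          (fun n : ℕ => (∑ i ∈ Finset.range n, α i ^ 2) + e * (Real.sqrt n)⁻¹)
          atTop (𝓝 (∑' i, α i ^ 2)) := by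
        simpa using hA2.add (tendsto_const_nhds.mul tendsto_inv_sqrt_nat)
      refine tendsto_of_tendsto_of_tendsto_of_le_of_le' hA2 hup ?_ ?_
      · filter_upwards [eventually_ge_atTop 1] with n hn1
        have hn0 : (0 : ℝ) < n := by exact_mod_cast hn1
        rw [le_div_iff₀ (by positivity)]
        calc (∑ i ∈ Finset.range n, α i ^ 2) * (n : ℝ) ^ 2
            = ∑ i ∈ Finset.range n, ((n : ℝ) * α i) ^ 2 := by
              rw [Finset.sum_mul]; exact Finset.sum_congr rfl fun i _ => by ring
          _ ≤ ∑ i ∈ Finset.range n, (if i < n then max ((n : ℝ) * α i) (b n i) else 0) ^ 2 := by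
              refine Finset.sum_le_sum fun i hi => ?_
              rw [if_pos (Finset.mem_range.1 hi)]
              exact pow_le_pow_left₀ (mul_nonneg (Nat.cast_nonneg n) (hα i))
                (le_max_left _ _) 2
      · filter_upwards [eventually_ge_atTop 1,
          tendsto_sqrt_nat.eventually_ge_atTop e] with n hn1 hen
        have hn0 : (0 : ℝ) < n := by exact_mod_cast hn1
        have hsn : (0 : ℝ) < Real.sqrt n := Real.sqrt_pos.2 hn0
        have hsq : Real.sqrt n * Real.sqrt n = (n : ℝ) := Real.mul_self_sqrt hn0.le
        rw [div_le_iff₀ (by positivity)]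
        have hterm : ∀ i ∈ Finset.range n,
            (if i < n then max ((n : ℝ) * α i) (b n i) else 0) ^ 2
              ≤ ((n : ℝ) * α i) ^ 2 + (if i < t n then (n : ℝ) else 0) := by
          intro i hi
          rw [if_pos (Finset.mem_range.1 hi)]
          rcases max_choice ((n : ℝ) * α i) (b n i) with h | h <;> rw [h]
          · have hind : (0 : ℝ) ≤ if i < t n then (n : ℝ) else 0 := by
              split <;> [exact hn0.le; exact le_rfl]
            linarith
          · simp only [hb]
            split
            · rw [Real.sq_sqrt (Nat.cast_nonneg n)]
              nlinarith [sq_nonneg ((n : ℝ) * α i)]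
            · nlinarith [sq_nonneg ((n : ℝ) * α i)]
        calc ∑ i ∈ Finset.range n, (if i < n then max ((n : ℝ) * α i) (b n i) else 0) ^ 2
            ≤ ∑ i ∈ Finset.range n,
                (((n : ℝ) * α i) ^ 2 + (if i < t n then (n : ℝ) else 0)) :=
              Finset.sum_le_sum hterm
          _ = (∑ i ∈ Finset.range n, ((n : ℝ) * α i) ^ 2)
                + ((min n (t n) : ℕ) : ℝ) * (n : ℝ) := by
              rw [Finset.sum_add_distrib, sum_ite_lt]
          _ ≤ ((∑ i ∈ Finset.range n, α i ^ 2) + e * (Real.sqrt n)⁻¹) * (n : ℝ) ^ 2 := by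
              have h1 : ((min n (t n) : ℕ) : ℝ) ≤ e * Real.sqrt n :=
                le_trans (by exact_mod_cast min_le_right n (t n))
                  (Nat.floor_le (mul_nonneg he (Real.sqrt_nonneg _)))
              have h2 : ∑ i ∈ Finset.range n, ((n : ℝ) * α i) ^ 2
                  = (∑ i ∈ Finset.range n, α i ^ 2) * (n : ℝ) ^ 2 := by
                rw [Finset.sum_mul]; exact Finset.sum_congr rfl fun i _ => by ring
              have hid2 : (Real.sqrt n)⁻¹ * (n : ℝ) = Real.sqrt n := by
                rw [inv_mul_eq_div, div_eq_iff hsn.ne']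
                exact hsq.symm
              have hid : e * (Real.sqrt n)⁻¹ * (n : ℝ) ^ 2 = e * Real.sqrt n * n := by
                calc e * (Real.sqrt n)⁻¹ * (n : ℝ) ^ 2
                    = e * ((Real.sqrt n)⁻¹ * (n : ℝ)) * n := by ring
                  _ = e * Real.sqrt n * n := by rw [hid2]
              rw [add_mul, h2, hid]
              nlinarith [mul_le_mul_of_nonneg_right h1 hn0.le]
end
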